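/- arXiv:1912.07151 — 12 statements merged into one kernel-verified Lean document; each statement's English description precedes it below -/
import Mathlib

section
/- Let d ≥ 1 and t ≥ 1 be integers. For every finite family X = (x_i)_{i∈I} of vectors in ℂ^d one has the Welch-type bound ∑_{i∈I} ∑_{j∈I} |⟨x_i, x_j⟩|^{2t} ≥ c_t(ℂ^d) · (∑_{i∈I} ‖x_i‖^{2t})², where c_t(ℂ^d) := 1 / (Nat.choose (t+d−1) t). -/
open scoped BigOperators

open Finset Complex

/-- coordinates of the symmetric lift of `x`. -/
noncomputable def welchCoord {d : ℕ} (t : ℕ) (x : EuclideanSpace ℂ (Fin d))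
    (m : Sym (Fin d) t) : ℂ :=
  (Real.sqrt m.val.countPerms : ℂ) * (m.val.map x).prod

lemma welch_inner_pow {d : ℕ} (t : ℕ) (x y : EuclideanSpace ℂ (Fin d)) :
    (inner ℂ x y : ℂ) ^ t = ∑ m : Sym (Fin d) t,
      (starRingEnd ℂ) (welchCoord t x m) * welchCoord t y m := by
  rw [PiLp.inner_apply]
  simp only [RCLike.inner_apply', welchCoord]
  rw [show (∑ k, (starRingEnd ℂ) (x k) * y k)
      = Finset.univ.sum (fun k => (starRingEnd ℂ) (x k) * y k) from rfl,
    Finset.sum_pow, Finset.sym_univ]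
  refine Finset.sum_congr rfl fun m _ => ?_
  have hconj : (starRingEnd ℂ) ((m.val.map x).prod)
      = (m.val.map (fun k => (starRingEnd ℂ) (x k))).prod := by
    rw [map_multiset_prod, Multiset.map_map]; rfl
  rw [map_mul, hconj, Complex.conj_ofReal]
  have hsqrt : ((Real.sqrt m.val.countPerms : ℂ)) * ((Real.sqrt m.val.countPerms : ℂ))
      = (m.val.countPerms : ℂ) := by
    rw [← Complex.ofReal_mul, Real.mul_self_sqrt (Nat.cast_nonneg _)]
    norm_cast
  have hprod : (m.val.map (fun k => (starRingEnd ℂ) (x k))).prod * (m.val.map y).prod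
      = (m.val.map (fun k => (starRingEnd ℂ) (x k) * y k)).prod := by
    rw [← Multiset.prod_map_mul]
  calc (m.val.countPerms : ℂ) * (m.val.map fun k => (starRingEnd ℂ) (x k) * y k).prod
      = ((Real.sqrt m.val.countPerms : ℂ) * (Real.sqrt m.val.countPerms : ℂ)) *
        ((m.val.map (fun k => (starRingEnd ℂ) (x k))).prod * (m.val.map y).prod) := by
        rw [hsqrt, hprod]
    _ = _ := by ring

lemma welch_sum_swap4 {α β M : Type*} [Fintype α] [Fintype β] [AddCommMonoid M]
    (F : α → α → β → β → M) :
    ∑ i, ∑ j, ∑ m, ∑ m', F i j m m' = ∑ m, ∑ m', ∑ i, ∑ j, F i j m m' := by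
  calc ∑ i, ∑ j, ∑ m, ∑ m', F i j m m'
      = ∑ i, ∑ m, ∑ j, ∑ m', F i j m m' :=
        Finset.sum_congr rfl fun i _ => Finset.sum_comm
    _ = ∑ m, ∑ i, ∑ j, ∑ m', F i j m m' := Finset.sum_comm
    _ = ∑ m, ∑ i, ∑ m', ∑ j, F i j m m' :=
        Finset.sum_congr rfl fun m _ => Finset.sum_congr rfl fun i _ => Finset.sum_comm
    _ = ∑ m, ∑ m', ∑ i, ∑ j, F i j m m' :=
        Finset.sum_congr rfl fun m _ => Finset.sum_comm

/-- **Welch-type bound (complex case).**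
For every finite family of vectors in `ℂ^d`,
`∑ i ∑ j |⟨x i, x j⟩|^(2t) ≥ c_t(ℂ^d) * (∑ i ‖x i‖^(2t))^2`,
where `c_t(ℂ^d) = 1 / (t+d-1 choose t)`. -/
theorem welch_bound_complex (d t : ℕ) (hd : 1 ≤ d) (ht : 1 ≤ t)
    {ι : Type*} [Fintype ι] (x : ι → EuclideanSpace ℂ (Fin d)) :
    ∑ i, ∑ j, ‖(inner ℂ (x i) (x j) : ℂ)‖ ^ (2 * t) ≥
      (1 / (Nat.choose (t + d - 1) t : ℝ)) * (∑ i, ‖x i‖ ^ (2 * t)) ^ 2 := by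
  set c : ι → Sym (Fin d) t → ℂ := fun i m => welchCoord t (x i) m with hc
  set A : Sym (Fin d) t → Sym (Fin d) t → ℂ :=
    fun m m' => ∑ i, c i m * (starRingEnd ℂ) (c i m') with hA
  set r : Sym (Fin d) t → ℝ := fun m => ∑ i, Complex.normSq (c i m) with hr
  have key1 : ∀ i j, (inner ℂ (x i) (x j) : ℂ) ^ t
      = ∑ m, (starRingEnd ℂ) (c i m) * c j m := fun i j => welch_inner_pow t (x i) (x j)
  -- diagonal of A is real
  have hA_diag : ∀ m, A m m = ((r m : ℝ) : ℂ) := by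
    intro m
    simp only [hA, hr, Complex.mul_conj, Complex.ofReal_sum]
  -- the trace identity
  have hS : ∑ i, ‖x i‖ ^ (2 * t) = ∑ m, r m := by
    have hcomplex : ((∑ i, ‖x i‖ ^ (2 * t) : ℝ) : ℂ) = ((∑ m, r m : ℝ) : ℂ) := by
      push_cast
      calc ∑ i, ((‖x i‖ : ℂ)) ^ (2 * t)
          = ∑ i, ((inner ℂ (x i) (x i) : ℂ)) ^ t := by
            refine Finset.sum_congr rfl fun i _ => ?_
            rw [inner_self_eq_norm_sq_to_K, ← pow_mul]
            norm_cast
        _ = ∑ i, ∑ m, (starRingEnd ℂ) (c i m) * c i m := by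
            exact Finset.sum_congr rfl fun i _ => key1 i i
        _ = ∑ m, ∑ i, (starRingEnd ℂ) (c i m) * c i m := Finset.sum_comm
        _ = ∑ m, ((r m : ℝ) : ℂ) := by
            refine Finset.sum_congr rfl fun m _ => ?_
            rw [← hA_diag m]
            simp only [hA]
            exact Finset.sum_congr rfl fun i _ => by ring
        _ = ∑ m, ((r m : ℝ) : ℂ) := rfl
    exact_mod_cast hcomplex
  -- the big double sum identity (complex form)
  have big : ∑ i, ∑ j, ((inner ℂ (x i) (x j) : ℂ) ^ t * (starRingEnd ℂ) ((inner ℂ (x i) (x j) : ℂ) ^ t))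
      = ∑ m, ∑ m', A m m' * (starRingEnd ℂ) (A m m') := by
    calc ∑ i, ∑ j, ((inner ℂ (x i) (x j) : ℂ) ^ t * (starRingEnd ℂ) ((inner ℂ (x i) (x j) : ℂ) ^ t))
        = ∑ i, ∑ j, ∑ m, ∑ m',
            ((starRingEnd ℂ) (c i m) * c j m) * (c i m' * (starRingEnd ℂ) (c j m')) := by
          refine Finset.sum_congr rfl fun i _ => Finset.sum_congr rfl fun j _ => ?_
          rw [key1 i j, map_sum, Finset.sum_mul_sum]
          refine Finset.sum_congr rfl fun m _ => Finset.sum_congr rfl fun m' _ => ?_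
          rw [map_mul, Complex.conj_conj]
      _ = ∑ m, ∑ m', ∑ i, ∑ j,
            ((starRingEnd ℂ) (c i m) * c j m) * (c i m' * (starRingEnd ℂ) (c j m')) :=
          welch_sum_swap4 _
      _ = ∑ m, ∑ m', (∑ i, (starRingEnd ℂ) (c i m) * c i m') *
            (∑ j, c j m * (starRingEnd ℂ) (c j m')) := by
          refine Finset.sum_congr rfl fun m _ => Finset.sum_congr rfl fun m' _ => ?_
          rw [Finset.sum_mul_sum]
          refine Finset.sum_congr rfl fun i _ => Finset.sum_congr rfl fun j _ => ?_
          ring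
      _ = ∑ m, ∑ m', A m m' * (starRingEnd ℂ) (A m m') := by
          refine Finset.sum_congr rfl fun m _ => Finset.sum_congr rfl fun m' _ => ?_
          have h1 : (starRingEnd ℂ) (A m m') = ∑ i, (starRingEnd ℂ) (c i m) * c i m' := by
            simp only [hA, map_sum, map_mul, Complex.conj_conj]
          rw [h1]
          simp only [hA]
          ring
  -- the LHS identity (real form)
  have hLHS : ∑ i, ∑ j, ‖(inner ℂ (x i) (x j) : ℂ)‖ ^ (2 * t)
      = ∑ m, ∑ m', Complex.normSq (A m m') := by
    have habs : ∀ i j, ‖(inner ℂ (x i) (x j) : ℂ)‖ ^ (2 * t)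
        = Complex.normSq ((inner ℂ (x i) (x j) : ℂ) ^ t) := by
      intro i j
      rw [pow_mul, Complex.sq_norm, map_pow]
    simp only [habs]
    have hcomplex : ((∑ i, ∑ j, Complex.normSq ((inner ℂ (x i) (x j) : ℂ) ^ t) : ℝ) : ℂ)
        = ((∑ m, ∑ m', Complex.normSq (A m m') : ℝ) : ℂ) := by
      push_cast
      simp only [← Complex.mul_conj]
      exact big
    exact_mod_cast hcomplex
  -- cardinality
  have hcard : (Fintype.card (Sym (Fin d) t)) = Nat.choose (t + d - 1) t := by
    rw [Sym.card_sym_eq_choose, Fintype.card_fin]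
    congr 1
    omega
  have hn : (0 : ℝ) < (Nat.choose (t + d - 1) t : ℝ) := by
    have : 0 < Nat.choose (t + d - 1) t := Nat.choose_pos (by omega)
    exact_mod_cast this
  -- Cauchy–Schwarz step
  have hCS : (∑ m, r m) ^ 2 ≤ (Nat.choose (t + d - 1) t : ℝ) * ∑ m, (r m) ^ 2 := by
    have := sq_sum_le_card_mul_sum_sq (s := (Finset.univ : Finset (Sym (Fin d) t))) (f := r)
    rwa [Finset.card_univ, hcard] at this
  have hdiag : ∀ m, (r m) ^ 2 = Complex.normSq (A m m) := by
    intro m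
    rw [hA_diag m, Complex.normSq_ofReal, sq]
  have hmono : ∑ m, Complex.normSq (A m m) ≤ ∑ m, ∑ m', Complex.normSq (A m m') :=
    Finset.sum_le_sum fun m _ =>
      Finset.single_le_sum (fun m' _ => Complex.normSq_nonneg _) (Finset.mem_univ m)
  rw [ge_iff_le, hLHS, hS, one_div, inv_mul_le_iff₀ hn]
  calc (∑ m, r m) ^ 2 ≤ (Nat.choose (t + d - 1) t : ℝ) * ∑ m, (r m) ^ 2 := hCS
    _ = (Nat.choose (t + d - 1) t : ℝ) * ∑ m, Complex.normSq (A m m) := by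
        simp only [hdiag]
    _ ≤ (Nat.choose (t + d - 1) t : ℝ) * ∑ m, ∑ m', Complex.normSq (A m m') :=
        mul_le_mul_of_nonneg_left hmono (le_of_lt hn)
end

section
/- Let d ≥ 1 and t ≥ 1 be integers. For every finite family X = (x_i)_{i∈I} of vectors in ℝ^d one has the sharpened Welch-type bound ∑_{i∈I} ∑_{j∈I} |⟨x_i, x_j⟩|^{2t} ≥ c_t(ℝ^d) · (∑_{i∈I} ‖x_i‖^{2t})², where c_t(ℝ^d) := (1·3·5···(2t−1)) / (d(d+2)···(d+2(t−1))). -/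
open scoped BigOperators

open MvPolynomial Finset


noncomputable section WelchBoundAux

/-- Moments of the standard Gaussian: `gmom n = (n-1)!!` for even `n`, `0` for odd `n`. -/
def gmom : ℕ → ℝ
  | 0 => 1
  | 1 => 0
  | (n+2) => (n+1) * gmom n

lemma gmom_add_two (n : ℕ) : gmom (n+2) = (n+1) * gmom n := rfl

lemma gmom_succ (n : ℕ) : gmom (n+1) = n * gmom (n-1) := by
  cases n with
  | zero => simp [gmom]
  | succ m => simpa using gmom_add_two m

lemma gmom_two_mul (t : ℕ) : gmom (2*t) = ∏ k ∈ range t, (2*k+1 : ℝ) := by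
  induction t with
  | zero => simp [gmom]
  | succ s ih =>
      have h : 2*(s+1) = 2*s+2 := by ring
      rw [h, gmom_add_two, prod_range_succ, ih]
      push_cast; ring

/-- The "Gaussian expectation" linear functional on polynomials. -/
def gauss {d : ℕ} : MvPolynomial (Fin d) ℝ →ₗ[ℝ] ℝ :=
  (MvPolynomial.basisMonomials (Fin d) ℝ).constr ℝ (fun α => ∏ c, gmom (α c))

lemma gauss_monomial {d : ℕ} (α : Fin d →₀ ℕ) (r : ℝ) :
    gauss (monomial α r) = r * ∏ c, gmom (α c) := by
  have h : (monomial α r : MvPolynomial (Fin d) ℝ)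
      = r • (MvPolynomial.basisMonomials (Fin d) ℝ) α := by
    simp [MvPolynomial.coe_basisMonomials, MvPolynomial.smul_monomial]
  rw [h, map_smul]
  unfold gauss
  rw [Module.Basis.constr_basis, smul_eq_mul]

lemma gauss_one {d : ℕ} : gauss (1 : MvPolynomial (Fin d) ℝ) = 1 := by
  have : (1 : MvPolynomial (Fin d) ℝ) = monomial 0 1 := by simp
  rw [this, gauss_monomial]
  simp [gmom]

lemma gauss_C_mul {d : ℕ} (r : ℝ) (p : MvPolynomial (Fin d) ℝ) :
    gauss (C r * p) = r * gauss p := by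
  rw [C_mul', map_smul, smul_eq_mul]


/-- Stein's identity, algebraic form. -/
lemma gauss_X_mul {d : ℕ} (c : Fin d) (p : MvPolynomial (Fin d) ℝ) :
    gauss (X c * p) = gauss (pderiv c p) := by
  induction p using MvPolynomial.induction_on' with
  | add p q hp hq => rw [mul_add, map_add, map_add, map_add, hp, hq]
  | monomial α r =>
    have hX : (X c : MvPolynomial (Fin d) ℝ) = monomial (Finsupp.single c 1) 1 := by
      rw [← pow_one (X c), X_pow_eq_monomial]
    rw [hX, monomial_mul, pderiv_monomial, gauss_monomial, gauss_monomial]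
    have e1 : ∏ c', gmom ((Finsupp.single c 1 + α : Fin d →₀ ℕ) c')
        = gmom (α c + 1) * ∏ c' ∈ univ.erase c, gmom (α c') := by
      rw [← Finset.mul_prod_erase univ _ (mem_univ c)]
      congr 1
      · simp [add_comm]
      · refine Finset.prod_congr rfl fun c' hc' => ?_
        have h : c' ≠ c := (Finset.mem_erase.mp hc').1
        simp [Finsupp.single_eq_of_ne h]
    have e2 : ∏ c', gmom ((α - Finsupp.single c 1 : Fin d →₀ ℕ) c')
        = gmom (α c - 1) * ∏ c' ∈ univ.erase c, gmom (α c') := by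
      rw [← Finset.mul_prod_erase univ _ (mem_univ c)]
      congr 1
      · simp [Finsupp.tsub_apply]
      · refine Finset.prod_congr rfl fun c' hc' => ?_
        have h : c' ≠ c := (Finset.mem_erase.mp hc').1
        simp [Finsupp.tsub_apply, Finsupp.single_eq_of_ne h]
    rw [e1, e2, gmom_succ (α c)]
    ring


lemma gauss_L_pow {d : ℕ} (v : Fin d → ℝ) (t : ℕ) :
    gauss ((∑ c, C (v c) * X c) ^ (2*t)) = gmom (2*t) * (∑ c, v c ^ 2) ^ t := by
  set L : MvPolynomial (Fin d) ℝ := ∑ c, C (v c) * X c with hL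
  have hD : ∀ c, pderiv c L = C (v c) := by
    intro c
    rw [hL, map_sum, Finset.sum_eq_single c]
    · rw [pderiv_C_mul, pderiv_X_self, mul_one]
    · intro b _ hb
      rw [pderiv_C_mul, pderiv_X_of_ne hb, mul_zero]
    · intro h; exact absurd (mem_univ c) h
  have step : ∀ k : ℕ, gauss (L^(k+2)) = ((k:ℝ)+1) * (∑ c, v c^2) * gauss (L^k) := by
    intro k
    have hexp : L^(k+2) = ∑ c, C (v c) * (X c * L^(k+1)) := by
      have : L^(k+2) = L * L^(k+1) := by ring
      rw [this, hL, Finset.sum_mul]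
      exact Finset.sum_congr rfl fun c _ => by ring
    rw [hexp, map_sum]
    have hterm : ∀ c : Fin d, gauss (C (v c) * (X c * L^(k+1)))
        = ((k:ℝ)+1) * (v c ^2) * gauss (L^k) := by
      intro c
      rw [gauss_C_mul, gauss_X_mul, pderiv_pow, hD, Nat.add_sub_cancel]
      have : ((k+1 : ℕ) : MvPolynomial (Fin d) ℝ) * L^k * C (v c)
          = C (((k:ℝ)+1) * v c) * L^k := by
        rw [map_mul, ← map_natCast (C : ℝ →+* MvPolynomial (Fin d) ℝ) (k+1)]
        push_cast
        ring
      rw [this, gauss_C_mul]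
      ring
    rw [Finset.sum_congr rfl fun c _ => hterm c, ← Finset.sum_mul, ← Finset.mul_sum]
  induction t with
  | zero => simp [gauss_one, gmom]
  | succ s ih =>
      have h2 : 2*(s+1) = 2*s+2 := by ring
      have h3 : gmom (2*s+2) = ((2*s : ℕ) + 1 : ℝ) * gmom (2*s) := rfl
      rw [h2, step, ih, h3]
      push_cast
      ring

lemma gauss_Q_pow {d : ℕ} (t : ℕ) :
    gauss ((∑ c : Fin d, X c^2 : MvPolynomial (Fin d) ℝ) ^ t)
      = ∏ j ∈ range t, ((d:ℝ) + 2*j) := by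
  set Q : MvPolynomial (Fin d) ℝ := ∑ c, X c ^ 2 with hQ
  have hDQ : ∀ c, pderiv c Q = 2 * X c := by
    intro c
    rw [hQ, map_sum, Finset.sum_eq_single c]
    · rw [pderiv_pow, pderiv_X_self, mul_one, pow_one]
      norm_num
    · intro b _ hb
      rw [pderiv_pow, pderiv_X_of_ne hb, mul_zero]
    · intro h; exact absurd (mem_univ c) h
  induction t with
  | zero => simp [gauss_one]
  | succ s ih =>
      have hexp : Q^(s+1) = ∑ c, X c * (X c * Q^s) := by
        have : Q^(s+1) = Q * Q^s := by ring
        rw [this, hQ, Finset.sum_mul]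
        exact Finset.sum_congr rfl fun c _ => by ring
      have hterm : ∀ c : Fin d, gauss (X c * (X c * Q^s))
          = gauss (Q^s) + 2*(s:ℝ) * gauss (X c ^2 * Q^(s-1)) := by
        intro c
        rw [gauss_X_mul, pderiv_mul, pderiv_X_self, pderiv_pow, hDQ, one_mul, map_add]
        congr 1
        have : X c * ((s : MvPolynomial (Fin d) ℝ) * Q^(s-1) * (2 * X c))
            = C (2*(s:ℝ)) * (X c^2 * Q^(s-1)) := by
          push_cast [← map_natCast (C : ℝ →+* MvPolynomial (Fin d) ℝ)]
          have h2 : (2 : MvPolynomial (Fin d) ℝ) = C (2:ℝ) :=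
            (map_ofNat (C : ℝ →+* MvPolynomial (Fin d) ℝ) 2).symm
          rw [h2, map_mul]
          ring
        rw [this, gauss_C_mul]
      have hs : (s:ℝ) * gauss (Q * Q^(s-1)) = (s:ℝ) * gauss (Q^s) := by
        cases s with
        | zero => simp
        | succ r =>
            congr 2
            rw [Nat.succ_sub_one, ← pow_succ']
      rw [hexp, map_sum, Finset.sum_congr rfl fun c _ => hterm c, Finset.sum_add_distrib,
        Finset.sum_const, ← Finset.mul_sum, ← map_sum, card_univ, Fintype.card_fin]
      have hQQ : (∑ c : Fin d, X c^2 * Q^(s-1)) = Q * Q^(s-1) := by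
        rw [hQ, Finset.sum_mul]
      rw [hQQ, prod_range_succ, ← ih]
      rw [mul_assoc, hs]
      ring

/-- Expansion of `gauss (L_v ^ n)` over monomial-index functions. -/
lemma gauss_L_pow_expand {d : ℕ} (v : Fin d → ℝ) (n : ℕ) :
    gauss ((∑ c, C (v c) * X c) ^ n)
      = ∑ a : Fin n → Fin d, (∏ s, v (a s)) * gauss (∏ s, X (a s)) := by
  rw [Fintype.sum_pow, map_sum]
  refine Finset.sum_congr rfl fun a _ => ?_
  have h : (∏ s, (C (v (a s)) * X (a s)) : MvPolynomial (Fin d) ℝ)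
      = C (∏ s, v (a s)) * ∏ s, X (a s) := by
    rw [Finset.prod_mul_distrib, map_prod]
  rw [h, gauss_C_mul]

lemma keyv {d t : ℕ} (v : Fin d → ℝ) :
    ∑ a : Fin (2*t) → Fin d, (∏ s, v (a s)) * gauss (∏ s, X (a s))
      = gmom (2*t) * (∑ c, v c ^ 2) ^ t := by
  rw [← gauss_L_pow_expand, gauss_L_pow]

/-- **Sharpened Welch-type bound (real case).**
For every finite family of vectors in `ℝ^d`,
`∑ i ∑ j |⟨x i, x j⟩|^(2t) ≥ c_t(ℝ^d) * (∑ i ‖x i‖^(2t))^2`,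
where `c_t(ℝ^d) = (1·3·5⋯(2t-1)) / (d(d+2)⋯(d+2(t-1)))`. -/
theorem welch_bound_real (d t : ℕ) (hd : 1 ≤ d) (ht : 1 ≤ t)
    {ι : Type*} [Fintype ι] (x : ι → EuclideanSpace ℝ (Fin d)) :
    ∑ i, ∑ j, |(inner ℝ (x i) (x j) : ℝ)| ^ (2 * t) ≥
      (∏ k ∈ Finset.range t, ((2 * k + 1 : ℝ) / (d + 2 * k))) *
        (∑ i, ‖x i‖ ^ (2 * t)) ^ 2 := by
  classical
  set W : (Fin (2*t) → Fin d) → ℝ := fun a => gauss (∏ s, X (a s)) with hW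
  set T : (Fin (2*t) → Fin d) → ℝ := fun a => ∑ i, ∏ s, x i (a s) with hT
  set S : ℝ := ∑ i, ‖x i‖ ^ (2*t) with hS
  set G : ℝ := gmom (2*t) with hG
  set A : ℝ := ∏ j ∈ range t, ((d:ℝ) + 2*j) with hA
  -- norms
  have hnorm : ∀ i, ‖x i‖ ^ (2*t) = (∑ c, x i c ^ 2) ^ t := by
    intro i
    rw [pow_mul]
    congr 1
    rw [EuclideanSpace.norm_eq, Real.sq_sqrt (by positivity)]
    simp [Real.norm_eq_abs, sq_abs]
  -- Step A : LHS = ∑ T a ^ 2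
  have hLHS : ∑ i, ∑ j, |(inner ℝ (x i) (x j) : ℝ)| ^ (2 * t)
      = ∑ a : Fin (2*t) → Fin d, T a ^ 2 := by
    have h1 : ∀ i j : ι, |(inner ℝ (x i) (x j) : ℝ)| ^ (2*t)
        = ∑ a : Fin (2*t) → Fin d, (∏ s, x i (a s)) * (∏ s, x j (a s)) := by
      intro i j
      rw [Even.pow_abs ⟨t, two_mul t⟩]
      have h2 : (inner ℝ (x i) (x j) : ℝ) = ∑ c, x i c * x j c := by
        simp [PiLp.inner_apply, RCLike.inner_apply, conj_trivial, mul_comm]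
      rw [h2, Fintype.sum_pow]
      exact Finset.sum_congr rfl fun a _ => by rw [← Finset.prod_mul_distrib]
    calc ∑ i, ∑ j, |(inner ℝ (x i) (x j) : ℝ)| ^ (2 * t)
        = ∑ i, ∑ j, ∑ a : Fin (2*t) → Fin d, (∏ s, x i (a s)) * (∏ s, x j (a s)) :=
          Finset.sum_congr rfl fun i _ => Finset.sum_congr rfl fun j _ => h1 i j
      _ = ∑ i, ∑ a : Fin (2*t) → Fin d, ∑ j, (∏ s, x i (a s)) * (∏ s, x j (a s)) :=
          Finset.sum_congr rfl fun i _ => Finset.sum_comm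
      _ = ∑ a : Fin (2*t) → Fin d, ∑ i, ∑ j, (∏ s, x i (a s)) * (∏ s, x j (a s)) :=
          Finset.sum_comm
      _ = ∑ a : Fin (2*t) → Fin d, T a ^ 2 := by
          refine Finset.sum_congr rfl fun a _ => ?_
          rw [sq, hT]
          simp only
          rw [Finset.sum_mul_sum]
  -- Step B : ∑ T a * W a = G * S
  have hTW : ∑ a : Fin (2*t) → Fin d, T a * W a = G * S := by
    have h1 : ∀ a : Fin (2*t) → Fin d, T a * W a = ∑ i, (∏ s, x i (a s)) * W a := by
      intro a
      rw [hT]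
      simp only
      rw [Finset.sum_mul]
    rw [Finset.sum_congr rfl fun a _ => h1 a, Finset.sum_comm]
    have h2 : ∀ i : ι, ∑ a : Fin (2*t) → Fin d, (∏ s, x i (a s)) * W a
        = G * ‖x i‖ ^ (2*t) := by
      intro i
      simp only [hW]
      rw [keyv (fun c => x i c), hnorm i, hG]
    rw [Finset.sum_congr rfl fun i _ => h2 i, ← Finset.mul_sum, hS]
  -- Step C : ∑ W a ^ 2 = G * A
  have hWW : ∑ a : Fin (2*t) → Fin d, W a ^ 2 = G * A := by
    set P : MvPolynomial (Fin d) ℝ := ∑ a : Fin (2*t) → Fin d, C (W a) * ∏ s, X (a s) with hP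
    have hPeq : P = C G * (∑ c : Fin d, X c ^ 2) ^ t := by
      apply MvPolynomial.funext
      intro w
      rw [hP]
      simp only [map_sum, map_mul, map_prod, map_pow, eval_C, eval_X]
      have h1 : ∀ a : Fin (2*t) → Fin d, W a * ∏ s, w (a s) = (∏ s, w (a s)) * W a :=
        fun a => mul_comm _ _
      rw [Finset.sum_congr rfl fun a _ => h1 a]
      simp only [hW]
      rw [keyv w, hG]
    have h2 : gauss P = ∑ a : Fin (2*t) → Fin d, W a ^ 2 := by
      rw [hP, map_sum]
      refine Finset.sum_congr rfl fun a _ => ?_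
      rw [gauss_C_mul, sq, hW]
    have h3 : gauss P = G * A := by
      rw [hPeq, gauss_C_mul, gauss_Q_pow, hA]
    rw [← h2, h3]
  -- positivity facts
  have hG0 : 0 < G := by
    rw [hG, gmom_two_mul]
    exact Finset.prod_pos fun k _ => by positivity
  have hA0 : 0 < A := by
    rw [hA]
    refine Finset.prod_pos fun j _ => ?_
    have h1 : (1:ℝ) ≤ d := by exact_mod_cast hd
    have h2 : (0:ℝ) ≤ 2 * j := by positivity
    linarith
  have hS0 : 0 ≤ S := by
    rw [hS]
    exact Finset.sum_nonneg fun i _ => by positivity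
  -- Cauchy–Schwarz
  have hCS := Finset.sum_mul_sq_le_sq_mul_sq Finset.univ T W
  rw [hTW, hWW] at hCS
  rw [hLHS]
  have hc : (∏ k ∈ Finset.range t, ((2 * k + 1 : ℝ) / (d + 2 * k))) = G / A := by
    rw [hG, gmom_two_mul, hA, ← Finset.prod_div_distrib]
  rw [ge_iff_le, hc]
  have heq : G / A * S ^ 2 = (G * S) ^ 2 / (G * A) := by
    field_simp
  rw [heq, div_le_iff₀ (by positivity)]
  exact hCS

end WelchBoundAux
end

section
/- Let d ≥ 1 and t ≥ 1 be integers, and let X = (x_i)_{i∈I} and Y = (y_j)_{j∈J} be finite families of nonzero vectors in ℂ^d, each of which is a spherical (t,t)-design. Then their disjoint union X ∪ Y (the concatenated family indexed by I ⊕ J) is also a spherical (t,t)-design. -/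
open scoped BigOperators

/-- `c_t(ℂ^d) = 1 / (t+d-1 choose t)`. -/
noncomputable def designConst (d t : ℕ) : ℝ := 1 / (Nat.choose (t + d - 1) t : ℝ)

/-- A finite family of vectors in `ℂ^d` is a spherical `(t,t)`-design if it gives
equality in the Welch-type bound. -/
def IsSphericalDesign (d t : ℕ) {ι : Type*} [Fintype ι]
    (x : ι → EuclideanSpace ℂ (Fin d)) : Prop :=
  ∑ i, ∑ j, ‖(inner ℂ (x i) (x j) : ℂ)‖ ^ (2 * t) =
    designConst d t * (∑ i, ‖x i‖ ^ (2 * t)) ^ 2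

namespace SphericalDesignAux

noncomputable section

variable (d t : ℕ)

/-- The multiset of values of a function `Fin t → Fin d`, as an element of `Sym (Fin d) t`. -/
def qmap (f : Fin t → Fin d) : Sym (Fin d) t :=
  ⟨(Finset.univ.val.map f), by simp⟩

/-- Number of functions with a given value multiset. -/
def wgt (m : Sym (Fin d) t) : ℕ :=
  (Finset.univ.filter fun f : Fin t → Fin d => qmap d t f = m).card

/-- The (weighted) monomial vector of `x`. -/
def psi (x : EuclideanSpace ℂ (Fin d)) (m : Sym (Fin d) t) : ℂ :=
  ((Real.sqrt (wgt d t m) : ℝ) : ℂ) * (m.1.map fun i => x i).prod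

lemma kernel_sum (g : Fin d → ℂ) :
    ∑ m : Sym (Fin d) t, (wgt d t m : ℂ) * (m.1.map g).prod = (∑ i, g i) ^ t := by
  rw [Finset.sum_pow', Fintype.piFinset_univ,
    ← Finset.sum_fiberwise Finset.univ (qmap d t) (fun f => ∏ k, g (f k))]
  refine Finset.sum_congr rfl fun m _ => ?_
  have hconst : ∀ f ∈ Finset.univ.filter fun f : Fin t → Fin d => qmap d t f = m,
      (∏ k, g (f k)) = (m.1.map g).prod := by
    intro f hf
    rw [← (Finset.mem_filter.1 hf).2]
    rw [Finset.prod_eq_multiset_prod]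
    show (Multiset.map (fun k => g (f k)) Finset.univ.val).prod = _
    rw [show (qmap d t f).1 = Finset.univ.val.map f from rfl, Multiset.map_map]
    rfl
  rw [Finset.sum_congr rfl hconst, Finset.sum_const, nsmul_eq_mul]
  rfl

lemma psi_inner (x y : EuclideanSpace ℂ (Fin d)) :
    ∑ m : Sym (Fin d) t, (starRingEnd ℂ) (psi d t x m) * psi d t y m
      = (inner ℂ x y : ℂ) ^ t := by
  have h1 : ∀ m : Sym (Fin d) t,
      (starRingEnd ℂ) (psi d t x m) * psi d t y m
        = (wgt d t m : ℂ) * (m.1.map fun i => (starRingEnd ℂ) (x i) * y i).prod := by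
    intro m
    unfold psi
    rw [map_mul, Complex.conj_ofReal]
    have hp : (starRingEnd ℂ) ((m.1.map fun i => x i).prod)
        = (m.1.map fun i => (starRingEnd ℂ) (x i)).prod := by
      rw [map_multiset_prod, Multiset.map_map]; rfl
    rw [hp]
    have hw : ((Real.sqrt (wgt d t m) : ℝ) : ℂ) * ((Real.sqrt (wgt d t m) : ℝ) : ℂ)
        = (wgt d t m : ℂ) := by
      rw [← Complex.ofReal_mul, Real.mul_self_sqrt (Nat.cast_nonneg _)]
      push_cast; ring
    calc ((Real.sqrt (wgt d t m) : ℝ) : ℂ) * (m.1.map fun i => (starRingEnd ℂ) (x i)).prod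
          * (((Real.sqrt (wgt d t m) : ℝ) : ℂ) * (m.1.map fun i => y i).prod)
        = (((Real.sqrt (wgt d t m) : ℝ) : ℂ) * ((Real.sqrt (wgt d t m) : ℝ) : ℂ))
          * ((m.1.map fun i => (starRingEnd ℂ) (x i)).prod * (m.1.map fun i => y i).prod) := by
          ring
      _ = (wgt d t m : ℂ) * (m.1.map fun i => (starRingEnd ℂ) (x i) * y i).prod := by
          rw [hw, ← Multiset.prod_map_mul]
  rw [Finset.sum_congr rfl fun m _ => h1 m, kernel_sum]
  congr 1
  simp [PiLp.inner_apply, mul_comm]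

variable {ι' κ' : Type*} [Fintype ι'] [Fintype κ']

/-- Frame matrix of a family. -/
def M (z : ι' → EuclideanSpace ℂ (Fin d)) (m m' : Sym (Fin d) t) : ℂ :=
  ∑ i, psi d t (z i) m * (starRingEnd ℂ) (psi d t (z i) m')

lemma conj_M (z : ι' → EuclideanSpace ℂ (Fin d)) (m m' : Sym (Fin d) t) :
    (starRingEnd ℂ) (M d t z m m')
      = ∑ i, (starRingEnd ℂ) (psi d t (z i) m) * psi d t (z i) m' := by
  rw [M, map_sum]
  exact Finset.sum_congr rfl fun i _ => by rw [map_mul, Complex.conj_conj]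

lemma swap4 {α : Type*} [AddCommMonoid α] {A B C D : Type*} [Fintype A] [Fintype B]
    [Fintype C] [Fintype D] (F : A → B → C → D → α) :
    ∑ a, ∑ b, ∑ c, ∑ e, F a b c e = ∑ c, ∑ e, ∑ a, ∑ b, F a b c e := by
  calc ∑ a, ∑ b, ∑ c, ∑ e, F a b c e
      = ∑ a, ∑ c, ∑ b, ∑ e, F a b c e :=
        Finset.sum_congr rfl fun a _ => Finset.sum_comm
    _ = ∑ c, ∑ a, ∑ b, ∑ e, F a b c e := Finset.sum_comm
    _ = ∑ c, ∑ a, ∑ e, ∑ b, F a b c e :=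
        Finset.sum_congr rfl fun c _ => Finset.sum_congr rfl fun a _ => Finset.sum_comm
    _ = ∑ c, ∑ e, ∑ a, ∑ b, F a b c e :=
        Finset.sum_congr rfl fun c _ => Finset.sum_comm

lemma cross_sum (z : ι' → EuclideanSpace ℂ (Fin d)) (u : κ' → EuclideanSpace ℂ (Fin d)) :
    ∑ m : Sym (Fin d) t, ∑ m' : Sym (Fin d) t, M d t z m m' * (starRingEnd ℂ) (M d t u m m')
      = ((∑ i, ∑ j, ‖(inner ℂ (z i) (u j) : ℂ)‖ ^ (2 * t) : ℝ) : ℂ) := by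
  have hpt : ∀ i j, ((‖(inner ℂ (z i) (u j) : ℂ)‖ ^ (2 * t) : ℝ) : ℂ)
      = ∑ m : Sym (Fin d) t, ∑ m' : Sym (Fin d) t,
          (psi d t (z i) m * (starRingEnd ℂ) (psi d t (u j) m)) *
            ((starRingEnd ℂ) (psi d t (z i) m') * psi d t (u j) m') := by
    intro i j
    set w : ℂ := (inner ℂ (z i) (u j) : ℂ) with hw
    have h2 : ((‖w‖ ^ (2 * t) : ℝ) : ℂ) = (starRingEnd ℂ) (w ^ t) * w ^ t := by
      have h5 : (w ^ t) * (starRingEnd ℂ) (w ^ t) = ((Complex.normSq (w ^ t) : ℝ) : ℂ) :=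
        Complex.mul_conj _
      rw [mul_comm] at h5
      rw [h5, ← Complex.sq_norm, norm_pow, ← pow_mul, mul_comm t 2]
    have h3 : (starRingEnd ℂ) (w ^ t)
        = ∑ m : Sym (Fin d) t, psi d t (z i) m * (starRingEnd ℂ) (psi d t (u j) m) := by
      rw [hw, ← psi_inner d t (z i) (u j), map_sum]
      exact Finset.sum_congr rfl fun m _ => by rw [map_mul, Complex.conj_conj, mul_comm]
    have h4 : w ^ t = ∑ m' : Sym (Fin d) t,
        (starRingEnd ℂ) (psi d t (z i) m') * psi d t (u j) m' :=
      (psi_inner d t (z i) (u j)).symm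
    rw [h2, h3, h4, Finset.sum_mul_sum]
  have hlhs : ∀ m m' : Sym (Fin d) t,
      M d t z m m' * (starRingEnd ℂ) (M d t u m m')
        = ∑ i, ∑ j, (psi d t (z i) m * (starRingEnd ℂ) (psi d t (z i) m')) *
            ((starRingEnd ℂ) (psi d t (u j) m) * psi d t (u j) m') := by
    intro m m'
    rw [conj_M, M, Finset.sum_mul_sum]
  have hr : ((∑ i, ∑ j, ‖(inner ℂ (z i) (u j) : ℂ)‖ ^ (2 * t) : ℝ) : ℂ)
      = ∑ i, ∑ j, ((‖(inner ℂ (z i) (u j) : ℂ)‖ ^ (2 * t) : ℝ) : ℂ) := by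
    rw [Complex.ofReal_sum]
    exact Finset.sum_congr rfl fun i _ => Complex.ofReal_sum _ _
  rw [Finset.sum_congr rfl fun m _ => Finset.sum_congr rfl fun m' _ => hlhs m m',
    swap4, hr]
  rw [Finset.sum_congr rfl fun i _ => Finset.sum_congr rfl fun j _ => (hpt i j)]
  refine Finset.sum_congr rfl fun i _ => Finset.sum_congr rfl fun j _ =>
    Finset.sum_congr rfl fun m _ => Finset.sum_congr rfl fun m' _ => by ring

lemma trace_sum (z : ι' → EuclideanSpace ℂ (Fin d)) :
    ∑ m : Sym (Fin d) t, M d t z m m = ((∑ i, ‖z i‖ ^ (2 * t) : ℝ) : ℂ) := by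
  rw [show ∑ m : Sym (Fin d) t, M d t z m m
      = ∑ m : Sym (Fin d) t, ∑ i, psi d t (z i) m * (starRingEnd ℂ) (psi d t (z i) m) from rfl,
    Finset.sum_comm]
  have h1 : ∀ i, ∑ m : Sym (Fin d) t, psi d t (z i) m * (starRingEnd ℂ) (psi d t (z i) m)
      = ((‖z i‖ ^ (2 * t) : ℝ) : ℂ) := by
    intro i
    have h2 : (starRingEnd ℂ) (∑ m : Sym (Fin d) t,
        (starRingEnd ℂ) (psi d t (z i) m) * psi d t (z i) m)
        = ∑ m : Sym (Fin d) t, psi d t (z i) m * (starRingEnd ℂ) (psi d t (z i) m) := by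
      rw [map_sum]
      exact Finset.sum_congr rfl fun m _ => by rw [map_mul, Complex.conj_conj, mul_comm]
    rw [← h2, psi_inner, map_pow, inner_conj_symm (z i) (z i), inner_self_eq_norm_sq_to_K (𝕜 := ℂ) (z i), ← pow_mul]
    norm_cast
  rw [Finset.sum_congr rfl fun i _ => h1 i]
  push_cast
  rfl

lemma delta_sum :
    ∑ m : Sym (Fin d) t, ∑ m' : Sym (Fin d) t, (if m = m' then (1 : ℂ) else 0)
      = (Fintype.card (Sym (Fin d) t) : ℂ) := by
  classical
  have h8 : ∀ m : Sym (Fin d) t, ∑ m' : Sym (Fin d) t,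
      (if m = m' then (1 : ℂ) else 0) = 1 := fun m => by simp
  rw [Finset.sum_congr rfl fun m _ => h8 m, Finset.sum_const, Finset.card_univ]
  simp

lemma main_lemma (c : ℝ) (hcN : c * (Fintype.card (Sym (Fin d) t) : ℝ) = 1)
    (z : ι' → EuclideanSpace ℂ (Fin d))
    (hz : ∑ i, ∑ j, ‖(inner ℂ (z i) (z j) : ℂ)‖ ^ (2 * t)
        = c * (∑ i, ‖z i‖ ^ (2 * t)) ^ 2) :
    ∀ m m' : Sym (Fin d) t, M d t z m m' =
      ((c * ∑ i, ‖z i‖ ^ (2 * t) : ℝ) : ℂ) * (if m = m' then 1 else 0) := by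
  classical
  set N : ℕ := Fintype.card (Sym (Fin d) t) with hNdef
  have hdelta := delta_sum d t
  set Sz : ℝ := ∑ i, ‖z i‖ ^ (2 * t) with hSz
  set lam : ℝ := c * Sz with hlam
  have hexp : ∀ m m' : Sym (Fin d) t,
      ((Complex.normSq (M d t z m m' - (lam : ℂ) * (if m = m' then 1 else 0)) : ℝ) : ℂ)
        = M d t z m m' * (starRingEnd ℂ) (M d t z m m')
          - (lam : ℂ) * ((if m = m' then (1 : ℂ) else 0) * (starRingEnd ℂ) (M d t z m m'))
          - (lam : ℂ) * ((if m = m' then (1 : ℂ) else 0) * M d t z m m')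
          + (lam : ℂ) ^ 2 * (if m = m' then (1 : ℂ) else 0) := by
    intro m m'
    rw [← Complex.mul_conj, map_sub, map_mul, Complex.conj_ofReal]
    by_cases h : m = m' <;> simp [h] <;> ring
  have htr : ∑ m : Sym (Fin d) t, ∑ m' : Sym (Fin d) t,
      (if m = m' then (1 : ℂ) else 0) * M d t z m m' = ((Sz : ℝ) : ℂ) := by
    have h6 : ∀ m : Sym (Fin d) t, ∑ m' : Sym (Fin d) t,
        (if m = m' then (1 : ℂ) else 0) * M d t z m m' = M d t z m m := by
      intro m
      simp [ite_mul, Finset.sum_ite_eq]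
    rw [Finset.sum_congr rfl fun m _ => h6 m, trace_sum]
  have htr' : ∑ m : Sym (Fin d) t, ∑ m' : Sym (Fin d) t,
      (if m = m' then (1 : ℂ) else 0) * (starRingEnd ℂ) (M d t z m m') = ((Sz : ℝ) : ℂ) := by
    have h6 : ∀ m : Sym (Fin d) t, ∑ m' : Sym (Fin d) t,
        (if m = m' then (1 : ℂ) else 0) * (starRingEnd ℂ) (M d t z m m')
        = (starRingEnd ℂ) (M d t z m m) := by
      intro m
      simp [ite_mul, Finset.sum_ite_eq]
    rw [Finset.sum_congr rfl fun m _ => h6 m, ← map_sum, trace_sum, Complex.conj_ofReal]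
  have hA : ∑ m : Sym (Fin d) t, ∑ m' : Sym (Fin d) t,
      M d t z m m' * (starRingEnd ℂ) (M d t z m m') = ((c * Sz ^ 2 : ℝ) : ℂ) := by
    rw [cross_sum d t z z]
    exact Complex.ofReal_inj.mpr hz
  have hzero : ∑ m : Sym (Fin d) t, ∑ m' : Sym (Fin d) t,
      Complex.normSq (M d t z m m' - (lam : ℂ) * (if m = m' then 1 else 0)) = 0 := by
    have hcast : ((∑ m : Sym (Fin d) t, ∑ m' : Sym (Fin d) t,
        Complex.normSq (M d t z m m' - (lam : ℂ) * (if m = m' then 1 else 0)) : ℝ) : ℂ)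
        = 0 := by
      push_cast
      rw [Finset.sum_congr rfl fun m _ => Finset.sum_congr rfl fun m' _ => hexp m m']
      simp only [Finset.sum_sub_distrib, Finset.sum_add_distrib, ← Finset.mul_sum]
      rw [hA, htr, htr', hdelta]
      rw [show ((c * Sz ^ 2 : ℝ) : ℂ) - (lam : ℂ) * ((Sz : ℝ) : ℂ)
          - (lam : ℂ) * ((Sz : ℝ) : ℂ) + (lam : ℂ) ^ 2 * (N : ℂ)
          = ((c * Sz ^ 2 - lam * Sz - lam * Sz + lam ^ 2 * N : ℝ) : ℂ) by push_cast; ring]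
      rw [Complex.ofReal_eq_zero, hlam]
      linear_combination (c * Sz ^ 2) * hcN
    exact_mod_cast hcast
  intro m m'
  have hterm := (Finset.sum_eq_zero_iff_of_nonneg
    (fun m _ => Finset.sum_nonneg fun m' _ => Complex.normSq_nonneg _)).1 hzero m
    (Finset.mem_univ m)
  have hterm2 := (Finset.sum_eq_zero_iff_of_nonneg
    (fun m' _ => Complex.normSq_nonneg _)).1 hterm m' (Finset.mem_univ m')
  have h7 := Complex.normSq_eq_zero.1 hterm2
  rw [sub_eq_zero] at h7
  rw [h7, hlam]

lemma cross_lemma (c : ℝ) (hcN : c * (Fintype.card (Sym (Fin d) t) : ℝ) = 1)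
    (z : ι' → EuclideanSpace ℂ (Fin d)) (u : κ' → EuclideanSpace ℂ (Fin d))
    (hz : ∀ m m' : Sym (Fin d) t, M d t z m m' =
        ((c * ∑ i, ‖z i‖ ^ (2 * t) : ℝ) : ℂ) * (if m = m' then 1 else 0))
    (hu : ∀ m m' : Sym (Fin d) t, M d t u m m' =
        ((c * ∑ j, ‖u j‖ ^ (2 * t) : ℝ) : ℂ) * (if m = m' then 1 else 0)) :
    (∑ i, ∑ j, ‖(inner ℂ (z i) (u j) : ℂ)‖ ^ (2 * t))
      = c * (∑ i, ‖z i‖ ^ (2 * t)) * (∑ j, ‖u j‖ ^ (2 * t)) := by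
  classical
  set N : ℕ := Fintype.card (Sym (Fin d) t) with hNdef
  have hdelta := delta_sum d t
  set Sz : ℝ := ∑ i, ‖z i‖ ^ (2 * t) with hSzz
  set Su : ℝ := ∑ j, ‖u j‖ ^ (2 * t) with hSuu
  have hsummand : ∀ m m' : Sym (Fin d) t, M d t z m m' * (starRingEnd ℂ) (M d t u m m')
      = ((c * Sz : ℝ) : ℂ) * ((c * Su : ℝ) : ℂ) * (if m = m' then 1 else 0) := by
    intro m m'
    rw [hz m m', hu m m', map_mul, Complex.conj_ofReal]
    by_cases h : m = m' <;> simp [h] <;> ring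
  have h1 : ∑ m : Sym (Fin d) t, ∑ m' : Sym (Fin d) t,
      M d t z m m' * (starRingEnd ℂ) (M d t u m m')
      = ((c * Sz : ℝ) : ℂ) * ((c * Su : ℝ) : ℂ) * (N : ℂ) := by
    rw [Finset.sum_congr rfl fun m _ => Finset.sum_congr rfl fun m' _ => hsummand m m']
    simp only [← Finset.mul_sum]
    rw [hdelta]
  rw [cross_sum d t z u] at h1
  have h2 : (∑ i, ∑ j, ‖(inner ℂ (z i) (u j) : ℂ)‖ ^ (2 * t))
      = (c * Sz) * (c * Su) * N := by
    exact_mod_cast h1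
  rw [h2]
  linear_combination (c * Sz * Su) * hcN

end

end SphericalDesignAux

open SphericalDesignAux in
/-- The disjoint union of two spherical `(t,t)`-designs is a spherical `(t,t)`-design. -/
theorem union_of_spherical_designs (d t : ℕ) (hd : 1 ≤ d) (ht : 1 ≤ t)
    {ι κ : Type*} [Fintype ι] [Fintype κ]
    (x : ι → EuclideanSpace ℂ (Fin d)) (y : κ → EuclideanSpace ℂ (Fin d))
    (hx : ∀ i, x i ≠ 0) (hy : ∀ j, y j ≠ 0)
    (hX : IsSphericalDesign d t x) (hY : IsSphericalDesign d t y) :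
    IsSphericalDesign d t (Sum.elim x y) := by
  classical
  unfold IsSphericalDesign at hX hY ⊢
  set c : ℝ := designConst d t with hc
  have hcard : Fintype.card (Sym (Fin d) t) = Nat.choose (t + d - 1) t := by
    rw [Sym.card_sym_eq_choose, Fintype.card_fin]
    congr 1
    omega
  have hcN : c * (Fintype.card (Sym (Fin d) t) : ℝ) = 1 := by
    have hchoose : (0 : ℕ) < Nat.choose (t + d - 1) t := Nat.choose_pos (by omega)
    have hne : (Nat.choose (t + d - 1) t : ℝ) ≠ 0 := Nat.cast_ne_zero.2 hchoose.ne'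
    rw [hc, hcard]
    unfold designConst
    field_simp
  have hMx := main_lemma d t c hcN x hX
  have hMy := main_lemma d t c hcN y hY
  have hXY := cross_lemma d t c hcN x y hMx hMy
  have hYX := cross_lemma d t c hcN y x hMy hMx
  simp only [Fintype.sum_sum_type, Sum.elim_inl, Sum.elim_inr, Finset.sum_add_distrib]
  rw [hX, hY, hXY, hYX]
  ring
end

section
/- Let d ≥ 1 and t ≥ 1 be integers, and let X = (x_i)_{i∈I} and Y = (y_j)_{j∈J} be finite families of nonzero vectors in ℂ^d, each of which is a spherical (t,t)-design. Then the cross-correlation identity holds: ∑_{i∈I}∑_{j∈J} |⟨x_i, y_j⟩|^{2t} = c_t(ℂ^d) · (∑_{i∈I} ‖x_i‖^{2t}) · (∑_{j∈J} ‖y_j‖^{2t}). -/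
open scoped BigOperators

namespace CrossCorrAux

/-- The `t`-th tensor power of a vector, as a vector indexed by `Fin t → Fin d`. -/
noncomputable def vpow (d t : ℕ) (x : EuclideanSpace ℂ (Fin d)) :
    EuclideanSpace ℂ (Fin t → Fin d) := WithLp.toLp 2 (fun a => ∏ k, x (a k))

lemma inner_vpow (d t : ℕ) (x y : EuclideanSpace ℂ (Fin d)) :
    (inner ℂ (vpow d t x) (vpow d t y) : ℂ) = (inner ℂ x y : ℂ) ^ t := by
  simp only [PiLp.inner_apply, RCLike.inner_apply, vpow, map_prod, ← Finset.prod_mul_distrib]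
  rw [Fintype.sum_pow]

/-- The rank-one operator `(x^{⊗t})(x^{⊗t})^*`, flattened into a big vector. -/
noncomputable def wvec (d t : ℕ) (x : EuclideanSpace ℂ (Fin d)) :
    EuclideanSpace ℂ ((Fin t → Fin d) × (Fin t → Fin d)) :=
  WithLp.toLp 2 (fun p => vpow d t x p.1 * (starRingEnd ℂ) (vpow d t x p.2))

lemma inner_wvec (d t : ℕ) (x y : EuclideanSpace ℂ (Fin d)) :
    (inner ℂ (wvec d t x) (wvec d t y) : ℂ)
      = (inner ℂ (vpow d t x) (vpow d t y) : ℂ)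
        * (starRingEnd ℂ) (inner ℂ (vpow d t x) (vpow d t y) : ℂ) := by
  simp only [PiLp.inner_apply, RCLike.inner_apply, wvec, map_mul, map_sum, Complex.conj_conj]
  rw [Fintype.sum_prod_type, Finset.sum_mul_sum]
  apply Finset.sum_congr rfl; intros; apply Finset.sum_congr rfl; intros; ring

lemma inner_wvec' (d t : ℕ) (x y : EuclideanSpace ℂ (Fin d)) :
    (inner ℂ (wvec d t x) (wvec d t y) : ℂ)
      = ((‖(inner ℂ x y : ℂ)‖ ^ (2 * t) : ℝ) : ℂ) := by
  rw [inner_wvec, inner_vpow, Complex.mul_conj, Complex.normSq_eq_norm_sq, norm_pow]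
  push_cast
  ring

/-- The symmetrizer (projection onto the symmetric subspace), flattened into a big vector. -/
noncomputable def pvec (d t : ℕ) :
    EuclideanSpace ℂ ((Fin t → Fin d) × (Fin t → Fin d)) :=
  WithLp.toLp 2 (fun p => ((((t.factorial : ℝ))⁻¹ *
    ((Finset.univ.filter (fun σ : Equiv.Perm (Fin t) => p.1 = p.2 ∘ ⇑σ)).card : ℝ) : ℝ) : ℂ))

lemma pvec_eq (d t : ℕ) (p : (Fin t → Fin d) × (Fin t → Fin d)) :
    pvec d t p = ((t.factorial : ℂ))⁻¹ *
      ∑ σ : Equiv.Perm (Fin t), (if p.1 = p.2 ∘ ⇑σ then (1:ℂ) else 0) := by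
  have h : ((Finset.univ.filter (fun σ : Equiv.Perm (Fin t) => p.1 = p.2 ∘ ⇑σ)).card : ℂ)
      = ∑ σ : Equiv.Perm (Fin t), (if p.1 = p.2 ∘ ⇑σ then (1:ℂ) else 0) := by
    rw [Finset.card_filter]
    push_cast
    exact Finset.sum_congr rfl (fun σ _ => by split <;> simp)
  unfold pvec
  push_cast
  rw [h]

lemma conj_pvec (d t : ℕ) (p : (Fin t → Fin d) × (Fin t → Fin d)) :
    (starRingEnd ℂ) (pvec d t p) = pvec d t p := by
  unfold pvec; exact Complex.conj_ofReal _

lemma vpow_comp (d t : ℕ) (x : EuclideanSpace ℂ (Fin d)) (b : Fin t → Fin d)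
    (σ : Equiv.Perm (Fin t)) : vpow d t x (b ∘ ⇑σ) = vpow d t x b := by
  simpa [vpow] using Equiv.prod_comp σ (fun k => x (b k))

lemma inner_pvec_wvec (d t : ℕ) (x : EuclideanSpace ℂ (Fin d)) :
    (inner ℂ (pvec d t) (wvec d t x) : ℂ) = inner ℂ (vpow d t x) (vpow d t x) := by
  have ht0 : ((t.factorial : ℂ)) ≠ 0 := Nat.cast_ne_zero.mpr t.factorial_ne_zero
  rw [PiLp.inner_apply]
  simp only [RCLike.inner_apply, conj_pvec]
  simp only [pvec_eq]
  simp only [mul_comm ((wvec d t x).ofLp _) _]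
  rw [Fintype.sum_prod_type]
  have step : ∀ b : Fin t → Fin d, ∀ σ : Equiv.Perm (Fin t),
      (∑ a : Fin t → Fin d, (if a = b ∘ ⇑σ then (1:ℂ) else 0) * wvec d t x (a, b))
        = vpow d t x b * (starRingEnd ℂ) (vpow d t x b) := by
    intro b σ
    rw [Finset.sum_eq_single (b ∘ ⇑σ)]
    · simp [wvec, vpow_comp]
    · intro c _ hc; simp [hc]
    · simp
  calc ∑ a : Fin t → Fin d, ∑ b : Fin t → Fin d, ((t.factorial : ℂ))⁻¹ *
        (∑ σ : Equiv.Perm (Fin t), (if (a,b).1 = (a,b).2 ∘ ⇑σ then (1:ℂ) else 0)) * wvec d t x (a, b)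
      = ((t.factorial : ℂ))⁻¹ * ∑ b : Fin t → Fin d, ∑ σ : Equiv.Perm (Fin t),
          ∑ a : Fin t → Fin d, (if a = b ∘ ⇑σ then (1:ℂ) else 0) * wvec d t x (a, b) := by
        rw [Finset.mul_sum]
        rw [Finset.sum_comm]
        apply Finset.sum_congr rfl; intro b _
        rw [Finset.sum_comm]
        simp_rw [Finset.mul_sum, Finset.sum_mul, mul_assoc]
    _ = ((t.factorial : ℂ))⁻¹ * ∑ b : Fin t → Fin d, (t.factorial : ℂ) *
          (vpow d t x b * (starRingEnd ℂ) (vpow d t x b)) := by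
        congr 1; apply Finset.sum_congr rfl; intro b _
        rw [Finset.sum_congr rfl (fun σ _ => step b σ), Finset.sum_const, Finset.card_univ]
        simp [Fintype.card_perm, nsmul_eq_mul]
    _ = ∑ b : Fin t → Fin d, vpow d t x b * (starRingEnd ℂ) (vpow d t x b) := by
        rw [← Finset.mul_sum, ← mul_assoc, inv_mul_cancel₀ ht0, one_mul]
    _ = inner ℂ (vpow d t x) (vpow d t x) := by
        rw [PiLp.inner_apply]
        simp [RCLike.inner_apply, mul_comm, Complex.mul_conj', Complex.conj_mul']

lemma inner_pvec_wvec' (d t : ℕ) (x : EuclideanSpace ℂ (Fin d)) :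
    (inner ℂ (pvec d t) (wvec d t x) : ℂ) = ((‖x‖ ^ (2 * t) : ℝ) : ℂ) := by
  rw [inner_pvec_wvec, inner_vpow, inner_self_eq_norm_sq_to_K]
  push_cast
  rw [← pow_mul]
  norm_cast

lemma orbit_count (d t : ℕ) :
    ∑ σ : Equiv.Perm (Fin t),
      (Finset.univ.filter fun b : Fin t → Fin d => b ∘ ⇑σ = b).card
      = t.factorial * (d + t - 1).choose t := by
  classical
  letI : MulAction (Equiv.Perm (Fin t)) (Fin t → Fin d) := arrowAction
  have smul_def : ∀ (σ : Equiv.Perm (Fin t)) (f : Fin t → Fin d), σ • f = f ∘ ⇑σ⁻¹ :=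
    fun σ f => rfl
  let toSym : (Fin t → Fin d) → Sym (Fin d) t :=
    fun f => ⟨(List.ofFn f : List (Fin d)), by simp⟩
  have hto : ∀ (σ : Equiv.Perm (Fin t)) (f : Fin t → Fin d), toSym (σ • f) = toSym f := by
    intro σ f
    apply Subtype.ext
    exact Multiset.coe_eq_coe.mpr (Equiv.Perm.ofFn_comp_perm σ⁻¹ f)
  let q : Quotient (MulAction.orbitRel (Equiv.Perm (Fin t)) (Fin t → Fin d)) → Sym (Fin d) t :=
    Quotient.lift toSym (by
      intro f g h
      obtain ⟨σ, rfl⟩ := h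
      exact hto σ g)
  have hbij : Function.Bijective q := by
    constructor
    · rintro ⟨f⟩ ⟨g⟩ hfg
      have h : List.Perm (List.ofFn f) (List.ofFn g) :=
        Multiset.coe_eq_coe.mp (congrArg Subtype.val hfg)
      have h1 : Monotone (f ∘ ⇑(Tuple.sort f)) := Tuple.monotone_sort f
      have h2 : Monotone (g ∘ ⇑(Tuple.sort g)) := Tuple.monotone_sort g
      have key : f ∘ ⇑(Tuple.sort f) = g ∘ ⇑(Tuple.sort g) :=
        List.ofFn_injective (List.Perm.eq_of_sortedLE h1.sortedLE_ofFn h2.sortedLE_ofFn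
          (((Tuple.sort f).ofFn_comp_perm f).trans
            (h.trans ((Tuple.sort g).ofFn_comp_perm g).symm)))
      refine Quotient.sound ⟨Tuple.sort f * (Tuple.sort g)⁻¹, ?_⟩
      show (Tuple.sort f * (Tuple.sort g)⁻¹) • g = f
      rw [smul_def]
      funext k
      have := congrFun key ((Tuple.sort f)⁻¹ k)
      simpa [mul_inv_rev, Function.comp] using this.symm
    · rintro ⟨m, hm⟩
      obtain ⟨l, rfl⟩ : ∃ l : List (Fin d), (l : Multiset (Fin d)) = m :=
        ⟨m.toList, Multiset.coe_toList m⟩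
      have hlen : l.length = t := by simpa using hm
      refine ⟨Quotient.mk _ (fun i : Fin t => l.get (Fin.cast hlen.symm i)), ?_⟩
      apply Subtype.ext
      show ((List.ofFn _ : List (Fin d)) : Multiset (Fin d)) = _
      exact congrArg _ ((List.ofFn_congr hlen l.get).symm.trans (List.ofFn_get l))
  letI : Fintype (Quotient (MulAction.orbitRel (Equiv.Perm (Fin t)) (Fin t → Fin d))) :=
    Fintype.ofFinite _
  letI : ∀ σ : Equiv.Perm (Fin t),
      Fintype (MulAction.fixedBy (Fin t → Fin d) σ) := fun σ => Fintype.ofFinite _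
  have hcard : Fintype.card
      (Quotient (MulAction.orbitRel (Equiv.Perm (Fin t)) (Fin t → Fin d)))
      = (d + t - 1).choose t := by
    rw [Fintype.card_congr (Equiv.ofBijective q hbij), Sym.card_sym_eq_multichoose,
      Nat.multichoose_eq, Fintype.card_fin]
  have burnside := MulAction.sum_card_fixedBy_eq_card_orbits_mul_card_group
    (Equiv.Perm (Fin t)) (Fin t → Fin d)
  rw [hcard, Fintype.card_perm] at burnside
  have hfix : ∀ σ : Equiv.Perm (Fin t),
      Fintype.card (MulAction.fixedBy (Fin t → Fin d) σ)
        = (Finset.univ.filter fun b : Fin t → Fin d => b ∘ ⇑σ⁻¹ = b).card := by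
    intro σ
    rw [← Set.toFinset_card]
    congr 1
    ext b
    rw [Set.mem_toFinset]
    simp [MulAction.fixedBy, smul_def, Equiv.Perm.inv_def]
  rw [Finset.sum_congr rfl (fun σ _ => hfix σ)] at burnside
  calc ∑ σ : Equiv.Perm (Fin t),
        (Finset.univ.filter fun b : Fin t → Fin d => b ∘ ⇑σ = b).card
      = ∑ σ : Equiv.Perm (Fin t),
        (Finset.univ.filter fun b : Fin t → Fin d => b ∘ ⇑σ⁻¹ = b).card := by
        exact (Equiv.sum_comp (Equiv.inv (Equiv.Perm (Fin t)))
          (fun σ => (Finset.univ.filter fun b : Fin t → Fin d => b ∘ ⇑σ = b).card)).symm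
    _ = t.factorial * (d + t - 1).choose t := by rw [burnside, Fintype.card_fin]; ring

lemma inner_pvec_pvec (d t : ℕ) :
    (inner ℂ (pvec d t) (pvec d t) : ℂ) = (((d + t - 1).choose t : ℕ) : ℂ) := by
  classical
  have ht0 : ((t.factorial : ℂ)) ≠ 0 := Nat.cast_ne_zero.mpr t.factorial_ne_zero
  rw [PiLp.inner_apply]
  simp only [RCLike.inner_apply, conj_pvec]
  simp only [pvec_eq]
  rw [Fintype.sum_prod_type]
  have step1 : ∀ (b : Fin t → Fin d) (σ τ : Equiv.Perm (Fin t)),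
      (∑ a : Fin t → Fin d, (if a = b ∘ ⇑σ then (1:ℂ) else 0) * (if a = b ∘ ⇑τ then (1:ℂ) else 0))
        = if b ∘ ⇑σ = b ∘ ⇑τ then (1:ℂ) else 0 := by
    intro b σ τ
    rw [Finset.sum_eq_single (b ∘ ⇑σ)]
    · simp
    · intro c _ hc; simp [hc]
    · simp
  have step2 : ∀ σ : Equiv.Perm (Fin t),
      (∑ τ : Equiv.Perm (Fin t), ∑ b : Fin t → Fin d,
          (if b ∘ ⇑σ = b ∘ ⇑τ then (1:ℂ) else 0))
        = ∑ ρ : Equiv.Perm (Fin t), ∑ c : Fin t → Fin d,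
            (if c ∘ ⇑ρ = c then (1:ℂ) else 0) := by
    intro σ
    rw [← Equiv.sum_comp (Equiv.mulLeft σ)
      (fun τ => ∑ b : Fin t → Fin d, (if b ∘ ⇑σ = b ∘ ⇑τ then (1:ℂ) else 0))]
    apply Finset.sum_congr rfl
    intro ρ _
    rw [← Equiv.sum_comp (Equiv.arrowCongr σ⁻¹ (Equiv.refl (Fin d)))
      (fun c : Fin t → Fin d => (if c ∘ ⇑ρ = c then (1:ℂ) else 0))]
    apply Finset.sum_congr rfl
    intro b _
    exact if_congr ⟨fun h => h.symm, fun h => h.symm⟩ rfl rfl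
  have step3 : (∑ ρ : Equiv.Perm (Fin t), ∑ c : Fin t → Fin d,
      (if c ∘ ⇑ρ = c then (1:ℂ) else 0))
      = ((t.factorial * (d + t - 1).choose t : ℕ) : ℂ) := by
    rw [← orbit_count d t]
    push_cast
    apply Finset.sum_congr rfl
    intro ρ _
    rw [Finset.sum_boole]
  have big : (∑ a : Fin t → Fin d, ∑ b : Fin t → Fin d, ∑ σ : Equiv.Perm (Fin t),
        ∑ τ : Equiv.Perm (Fin t),
        (if a = b ∘ ⇑σ then (1:ℂ) else 0) * (if a = b ∘ ⇑τ then (1:ℂ) else 0))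
      = (t.factorial : ℂ) * ((t.factorial * (d + t - 1).choose t : ℕ) : ℂ) := by
    rw [Finset.sum_comm]
    calc ∑ b : Fin t → Fin d, ∑ a : Fin t → Fin d, ∑ σ : Equiv.Perm (Fin t),
          ∑ τ : Equiv.Perm (Fin t),
          (if a = b ∘ ⇑σ then (1:ℂ) else 0) * (if a = b ∘ ⇑τ then (1:ℂ) else 0)
        = ∑ b : Fin t → Fin d, ∑ σ : Equiv.Perm (Fin t), ∑ τ : Equiv.Perm (Fin t),
            (if b ∘ ⇑σ = b ∘ ⇑τ then (1:ℂ) else 0) := by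
          apply Finset.sum_congr rfl; intro b _
          rw [Finset.sum_comm]
          apply Finset.sum_congr rfl; intro σ _
          rw [Finset.sum_comm]
          exact Finset.sum_congr rfl (fun τ _ => step1 b σ τ)
      _ = ∑ σ : Equiv.Perm (Fin t), ∑ τ : Equiv.Perm (Fin t), ∑ b : Fin t → Fin d,
            (if b ∘ ⇑σ = b ∘ ⇑τ then (1:ℂ) else 0) := by
          rw [Finset.sum_comm]
          apply Finset.sum_congr rfl; intro σ _
          rw [Finset.sum_comm]
      _ = ∑ σ : Equiv.Perm (Fin t), ∑ ρ : Equiv.Perm (Fin t), ∑ c : Fin t → Fin d,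
            (if c ∘ ⇑ρ = c then (1:ℂ) else 0) := Finset.sum_congr rfl (fun σ _ => step2 σ)
      _ = (t.factorial : ℂ) * ((t.factorial * (d + t - 1).choose t : ℕ) : ℂ) := by
          rw [Finset.sum_congr rfl (fun σ _ => step3), Finset.sum_const, Finset.card_univ,
            Fintype.card_perm, Fintype.card_fin, nsmul_eq_mul]
  calc ∑ a : Fin t → Fin d, ∑ b : Fin t → Fin d,
        (((t.factorial : ℂ))⁻¹ *
          ∑ σ : Equiv.Perm (Fin t), (if (a,b).1 = (a,b).2 ∘ ⇑σ then (1:ℂ) else 0)) *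
        (((t.factorial : ℂ))⁻¹ *
          ∑ τ : Equiv.Perm (Fin t), (if (a,b).1 = (a,b).2 ∘ ⇑τ then (1:ℂ) else 0))
      = ((t.factorial : ℂ))⁻¹ * ((t.factorial : ℂ))⁻¹ *
          ∑ a : Fin t → Fin d, ∑ b : Fin t → Fin d, ∑ σ : Equiv.Perm (Fin t),
          ∑ τ : Equiv.Perm (Fin t),
          (if a = b ∘ ⇑σ then (1:ℂ) else 0) * (if a = b ∘ ⇑τ then (1:ℂ) else 0) := by
        have h1 : ∀ a b : Fin t → Fin d,
            (((t.factorial : ℂ))⁻¹ *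
              ∑ σ : Equiv.Perm (Fin t), (if a = b ∘ ⇑σ then (1:ℂ) else 0)) *
            (((t.factorial : ℂ))⁻¹ *
              ∑ τ : Equiv.Perm (Fin t), (if a = b ∘ ⇑τ then (1:ℂ) else 0))
            = ((t.factorial : ℂ))⁻¹ * ((t.factorial : ℂ))⁻¹ *
              ∑ σ : Equiv.Perm (Fin t), ∑ τ : Equiv.Perm (Fin t),
                (if a = b ∘ ⇑σ then (1:ℂ) else 0) * (if a = b ∘ ⇑τ then (1:ℂ) else 0) := by
          intro a b
          rw [mul_mul_mul_comm, Finset.sum_mul_sum]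
        rw [Finset.sum_congr rfl (fun a _ => Finset.sum_congr rfl (fun b _ => h1 a b))]
        simp_rw [← Finset.mul_sum]
    _ = (((d + t - 1).choose t : ℕ) : ℂ) := by
        rw [big]
        push_cast
        field_simp

end CrossCorrAux

open CrossCorrAux in
/-- The cross-correlation identity for two spherical `(t,t)`-designs:
`∑ i ∑ j |⟨x i, y j⟩|^(2t) = c_t(ℂ^d) (∑ i ‖x i‖^(2t)) (∑ j ‖y j‖^(2t))`. -/
theorem cross_correlation_of_spherical_designs (d t : ℕ) (hd : 1 ≤ d) (ht : 1 ≤ t)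
    {ι κ : Type*} [Fintype ι] [Fintype κ]
    (x : ι → EuclideanSpace ℂ (Fin d)) (y : κ → EuclideanSpace ℂ (Fin d))
    (hx : ∀ i, x i ≠ 0) (hy : ∀ j, y j ≠ 0)
    (hX : IsSphericalDesign d t x) (hY : IsSphericalDesign d t y) :
    ∑ i, ∑ j, ‖(inner ℂ (x i) (y j) : ℂ)‖ ^ (2 * t) =
      designConst d t * (∑ i, ‖x i‖ ^ (2 * t)) * (∑ j, ‖y j‖ ^ (2 * t)) := by
  classical
  replace hX : ∑ i, ∑ j, ‖(inner ℂ (x i) (x j) : ℂ)‖ ^ (2 * t) =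
      designConst d t * (∑ i, ‖x i‖ ^ (2 * t)) ^ 2 := hX
  set A : ℝ := ∑ i, ‖x i‖ ^ (2 * t) with hA
  set B : ℝ := ∑ j, ‖y j‖ ^ (2 * t) with hB
  set c : ℝ := designConst d t with hc
  set N : ℝ := ((t + d - 1).choose t : ℝ) with hNdef
  have hN0 : N ≠ 0 := by
    have : 0 < (t + d - 1).choose t := Nat.choose_pos (by omega)
    rw [hNdef]
    exact_mod_cast this.ne'
  have hcN : c * N = 1 := by
    rw [hc, hNdef, designConst]
    field_simp
    exact div_self hN0
  have hcNC : (c : ℂ) * (N : ℂ) = 1 := by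
    rw [← Complex.ofReal_mul, hcN, Complex.ofReal_one]
  set T : EuclideanSpace ℂ ((Fin t → Fin d) × (Fin t → Fin d)) := ∑ i, wvec d t (x i) with hT
  set S : EuclideanSpace ℂ ((Fin t → Fin d) × (Fin t → Fin d)) := ∑ j, wvec d t (y j) with hS
  set P : EuclideanSpace ℂ ((Fin t → Fin d) × (Fin t → Fin d)) := pvec d t with hP
  have hTT : (inner ℂ T T : ℂ) = ((c * A ^ 2 : ℝ) : ℂ) := by
    rw [hT, sum_inner]
    simp_rw [inner_sum, inner_wvec']
    rw [← hX]
    norm_cast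
  have hPT : (inner ℂ P T : ℂ) = ((A : ℝ) : ℂ) := by
    rw [hT, hP]
    simp_rw [inner_sum, inner_pvec_wvec']
    rw [hA]
    norm_cast
  have hTP : (inner ℂ T P : ℂ) = ((A : ℝ) : ℂ) := by
    rw [← inner_conj_symm, hPT, Complex.conj_ofReal]
  have hPS : (inner ℂ P S : ℂ) = ((B : ℝ) : ℂ) := by
    rw [hS, hP]
    simp_rw [inner_sum, inner_pvec_wvec']
    rw [hB]
    norm_cast
  have hPP : (inner ℂ P P : ℂ) = ((N : ℝ) : ℂ) := by
    rw [hP, inner_pvec_pvec, hNdef]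
    norm_cast
    rw [show d + t - 1 = t + d - 1 by omega]
  set r : ℂ := ((A * c : ℝ) : ℂ) with hr
  have hz0 : (inner ℂ (T - r • P) (T - r • P) : ℂ) = 0 := by
    rw [inner_sub_left, inner_sub_right, inner_sub_right, inner_smul_left, inner_smul_left,
      inner_smul_right, inner_smul_right, hTT, hPT, hTP, hPP, hr, Complex.conj_ofReal]
    push_cast
    linear_combination ((A : ℂ) ^ 2 * (c : ℂ)) * hcNC
  have hTrP : T = r • P := sub_eq_zero.mp (inner_self_eq_zero.mp hz0)
  have hTS : (inner ℂ T S : ℂ)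
      = ((∑ i, ∑ j, ‖(inner ℂ (x i) (y j) : ℂ)‖ ^ (2 * t) : ℝ) : ℂ) := by
    rw [hT, hS, sum_inner]
    simp_rw [inner_sum, inner_wvec']
    norm_cast
  have hfinal : (inner ℂ T S : ℂ) = ((c * A * B : ℝ) : ℂ) := by
    rw [hTrP, inner_smul_left, hPS, hr, Complex.conj_ofReal]
    push_cast
    ring
  have := hTS.symm.trans hfinal
  exact_mod_cast this
end

section
/- Let d ≥ 1 and t ≥ 1 be integers, and let (X, w^X) = ((x_i), (w_i^X))_{i∈I} and (Y, w^Y) = ((y_j), (w_j^Y))_{j∈J} be weighted spherical (t,t)-designs for ℂ^d. Then b_{XY}^{(t)} := ∑_{i∈I}∑_{j∈J} w_i^X w_j^Y |⟨x_i, y_j⟩|^{2t} = c_t(ℂ^d). -/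
open scoped BigOperators
open Finset

namespace CTaux

variable {d t : ℕ}

/-- Monomial feature map: `Φ v a = ∏ k, v (a k)`. -/
noncomputable def Phi (v : EuclideanSpace ℂ (Fin d)) (a : Fin t → Fin d) : ℂ := ∏ k, v (a k)

lemma phi_comp (v : EuclideanSpace ℂ (Fin d)) (a : Fin t → Fin d) (σ : Equiv.Perm (Fin t)) :
    Phi v (a ∘ σ) = Phi v a :=
  Equiv.prod_comp σ (fun k => v (a k))

lemma sum_pow (f : Fin d → ℂ) (t : ℕ) :
    (∑ c, f c) ^ t = ∑ a : Fin t → Fin d, ∏ k, f (a k) := by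
  rw [← Fin.prod_const t, Finset.prod_univ_sum]
  simp

lemma sum_conj_phi_mul (v w : EuclideanSpace ℂ (Fin d)) :
    ∑ a : Fin t → Fin d, (starRingEnd ℂ) (Phi v a) * Phi w a = (inner ℂ v w : ℂ) ^ t := by
  have h : (inner ℂ v w : ℂ) = ∑ c, (starRingEnd ℂ) (v c) * w c := by
    simp [PiLp.inner_apply, RCLike.inner_apply, mul_comm]
  rw [h, sum_pow]
  refine Finset.sum_congr rfl fun a _ => ?_
  rw [Phi, Phi, map_prod, ← Finset.prod_mul_distrib]

/-- Moment "matrix" of a weighted family. -/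
noncomputable def V {ι : Type*} [Fintype ι] (x : ι → EuclideanSpace ℂ (Fin d)) (w : ι → ℝ)
    (a b : Fin t → Fin d) : ℂ :=
  ∑ i, (w i : ℂ) * (Phi (x i) a * (starRingEnd ℂ) (Phi (x i) b))

/-- Unnormalized symmetrizer. -/
noncomputable def P (d t : ℕ) (a b : Fin t → Fin d) : ℂ :=
  ∑ σ : Equiv.Perm (Fin t), if b = a ∘ σ then 1 else 0

/-- scalar identity -/
lemma scalar_identity (x y : EuclideanSpace ℂ (Fin d)) :
    ∑ a : Fin t → Fin d, ∑ b : Fin t → Fin d,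
      (starRingEnd ℂ) (Phi x a * (starRingEnd ℂ) (Phi x b)) *
        (Phi y a * (starRingEnd ℂ) (Phi y b)) =
      ((‖(inner ℂ x y : ℂ)‖ ^ (2 * t) : ℝ) : ℂ) := by
  have key : ∀ a b : Fin t → Fin d,
      (starRingEnd ℂ) (Phi x a * (starRingEnd ℂ) (Phi x b)) *
        (Phi y a * (starRingEnd ℂ) (Phi y b)) =
      ((starRingEnd ℂ) (Phi x a) * Phi y a) *
        ((starRingEnd ℂ) ((starRingEnd ℂ) (Phi x b) * Phi y b)) := by
    intro a b; simp only [map_mul, Complex.conj_conj]; ring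
  simp only [key, ← Finset.sum_mul, ← Finset.mul_sum]
  rw [← map_sum, sum_conj_phi_mul]
  rw [Complex.mul_conj]
  norm_cast
  rw [Complex.normSq_eq_norm_sq, norm_pow, ← pow_mul, mul_comm t 2]

lemma sum_swap4 {α β γ δ M : Type*} [Fintype α] [Fintype β] [Fintype γ] [Fintype δ]
    [AddCommMonoid M] (f : α → β → γ → δ → M) :
    ∑ a, ∑ b, ∑ i, ∑ j, f a b i j = ∑ i, ∑ j, ∑ a, ∑ b, f a b i j :=
  calc ∑ a, ∑ b, ∑ i, ∑ j, f a b i j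
      = ∑ a, ∑ i, ∑ b, ∑ j, f a b i j :=
        Finset.sum_congr rfl fun a _ => Finset.sum_comm
    _ = ∑ i, ∑ a, ∑ b, ∑ j, f a b i j := Finset.sum_comm
    _ = ∑ i, ∑ a, ∑ j, ∑ b, f a b i j :=
        Finset.sum_congr rfl fun i _ => Finset.sum_congr rfl fun a _ => Finset.sum_comm
    _ = ∑ i, ∑ j, ∑ a, ∑ b, f a b i j :=
        Finset.sum_congr rfl fun i _ => Finset.sum_comm

lemma sum_swap3 {α β γ M : Type*} [Fintype α] [Fintype β] [Fintype γ]
    [AddCommMonoid M] (f : α → β → γ → M) :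
    ∑ a, ∑ b, ∑ i, f a b i = ∑ i, ∑ a, ∑ b, f a b i :=
  calc ∑ a, ∑ b, ∑ i, f a b i
      = ∑ a, ∑ i, ∑ b, f a b i := Finset.sum_congr rfl fun _ _ => Finset.sum_comm
    _ = ∑ i, ∑ a, ∑ b, f a b i := Finset.sum_comm

/-- cross term as inner product of moment matrices -/
lemma cross_eq {ι κ : Type*} [Fintype ι] [Fintype κ]
    (x : ι → EuclideanSpace ℂ (Fin d)) (wX : ι → ℝ)
    (y : κ → EuclideanSpace ℂ (Fin d)) (wY : κ → ℝ) :
    ∑ a : Fin t → Fin d, ∑ b : Fin t → Fin d,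
        (starRingEnd ℂ) (V x wX a b) * V y wY a b =
      ((∑ i, ∑ j, wX i * wY j * ‖(inner ℂ (x i) (y j) : ℂ)‖ ^ (2 * t) : ℝ) : ℂ) := by
  have expand : ∀ a b : Fin t → Fin d, (starRingEnd ℂ) (V x wX a b) * V y wY a b
      = ∑ i, ∑ j, (wX i : ℂ) * (wY j : ℂ) *
        ((starRingEnd ℂ) (Phi (x i) a * (starRingEnd ℂ) (Phi (x i) b)) *
          (Phi (y j) a * (starRingEnd ℂ) (Phi (y j) b))) := by
    intro a b
    rw [V, V, map_sum, Finset.sum_mul_sum]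
    refine Finset.sum_congr rfl fun i _ => Finset.sum_congr rfl fun j _ => ?_
    simp only [map_mul, Complex.conj_ofReal, Complex.conj_conj]
    ring
  simp only [expand]
  push_cast
  rw [sum_swap4]
  refine Finset.sum_congr rfl fun i _ => Finset.sum_congr rfl fun j _ => ?_
  simp only [← Finset.mul_sum]
  rw [scalar_identity]
  push_cast
  ring

lemma sum_conj_theta_mul_P (v : EuclideanSpace ℂ (Fin d)) (hv : ‖v‖ = 1) :
    ∑ a : Fin t → Fin d, ∑ b : Fin t → Fin d,
      ((starRingEnd ℂ) (Phi v a) * Phi v b) * P d t a b = (t.factorial : ℂ) := by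
  have hinner : ∑ a : Fin t → Fin d, (starRingEnd ℂ) (Phi v a) * Phi v a = 1 := by
    rw [sum_conj_phi_mul, inner_self_eq_norm_sq_to_K, hv]
    norm_num
  have step : ∀ a : Fin t → Fin d,
      ∑ b : Fin t → Fin d, ((starRingEnd ℂ) (Phi v a) * Phi v b) * P d t a b
        = ∑ _σ : Equiv.Perm (Fin t), (starRingEnd ℂ) (Phi v a) * Phi v a := by
    intro a
    simp only [P, Finset.mul_sum, mul_ite, mul_one, mul_zero]
    rw [Finset.sum_comm]
    refine Finset.sum_congr rfl fun σ _ => ?_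
    rw [Finset.sum_ite_eq' Finset.univ (a ∘ σ) (fun b => (starRingEnd ℂ) (Phi v a) * Phi v b)]
    simp [phi_comp]
  simp only [step]
  rw [Finset.sum_comm, hinner]
  simp [Fintype.card_perm]

lemma sum_conj_V_mul_P {ι : Type*} [Fintype ι] (x : ι → EuclideanSpace ℂ (Fin d)) (w : ι → ℝ)
    (hx : ∀ i, ‖x i‖ = 1) (hw : ∑ i, w i = 1) :
    ∑ a : Fin t → Fin d, ∑ b : Fin t → Fin d,
      (starRingEnd ℂ) (V x w a b) * P d t a b = (t.factorial : ℂ) := by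
  have expand : ∀ a b : Fin t → Fin d, (starRingEnd ℂ) (V x w a b) * P d t a b
      = ∑ i, (w i : ℂ) * (((starRingEnd ℂ) (Phi (x i) a) * Phi (x i) b) * P d t a b) := by
    intro a b
    rw [V, map_sum, Finset.sum_mul]
    refine Finset.sum_congr rfl fun i _ => ?_
    simp only [map_mul, Complex.conj_ofReal, Complex.conj_conj]
    ring
  simp only [expand]
  rw [sum_swap3]
  simp only [← Finset.mul_sum]
  have h1 : ∀ i : ι, (w i : ℂ) * (∑ a : Fin t → Fin d, ∑ b : Fin t → Fin d,
      ((starRingEnd ℂ) (Phi (x i) a) * Phi (x i) b) * P d t a b)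
      = (w i : ℂ) * (t.factorial : ℂ) := fun i => by
    rw [sum_conj_theta_mul_P (x i) (hx i)]
  rw [Finset.sum_congr rfl fun i _ => h1 i, ← Finset.sum_mul]
  have : (∑ i, (w i : ℂ)) = 1 := by
    rw [← Complex.ofReal_sum, hw, Complex.ofReal_one]
  rw [this, one_mul]

open MulAction

noncomputable def q (d t : ℕ) (a : Fin t → Fin d) : Sym (Fin d) t :=
  ⟨(List.ofFn a : Multiset (Fin d)), by simp⟩

lemma q_inj {d t : ℕ} (a b : Fin t → Fin d) (h : q d t a = q d t b) :
    ∃ π : Equiv.Perm (Fin t), a = b ∘ π := by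
  have hperm : (List.ofFn a).Perm (List.ofFn b) :=
    Multiset.coe_eq_coe.mp (congrArg Subtype.val h)
  have h1 : (List.ofFn (a ∘ Tuple.sort a)).Perm (List.ofFn (b ∘ Tuple.sort b)) := by
    refine ((Equiv.Perm.ofFn_comp_perm (Tuple.sort a) a).trans hperm).trans ?_
    exact (Equiv.Perm.ofFn_comp_perm (Tuple.sort b) b).symm
  have h2 : List.ofFn (a ∘ Tuple.sort a) = List.ofFn (b ∘ Tuple.sort b) :=
    List.Perm.eq_of_sortedLE (Tuple.monotone_sort a).sortedLE_ofFn
      (Tuple.monotone_sort b).sortedLE_ofFn h1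
  have h3 : a ∘ Tuple.sort a = b ∘ Tuple.sort b := by
    have := List.ofFn_injective h2
    exact this
  refine ⟨(Tuple.sort a).symm.trans (Tuple.sort b), ?_⟩
  funext k
  have := congrFun h3 ((Tuple.sort a).symm k)
  simpa using this

lemma q_surj {d t : ℕ} (s : Sym (Fin d) t) : ∃ a, q d t a = s := by
  obtain ⟨m, hm⟩ := s
  obtain ⟨l, rfl⟩ := m.exists_rep
  simp only [Multiset.quot_mk_to_coe, Multiset.coe_card] at hm
  subst hm
  exact ⟨l.get, Subtype.ext (by simp [q, List.ofFn_get])⟩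

lemma card_orbits (d t : ℕ) :
    Nat.card (orbitRel.Quotient (Equiv.Perm (Fin t))ᵈᵐᵃ (Fin t → Fin d))
      = Fintype.card (Sym (Fin d) t) := by
  rw [← Nat.card_eq_fintype_card]
  refine Nat.card_eq_of_bijective (Quotient.lift (q d t) ?_) ⟨?_, ?_⟩
  · intro a b hab
    obtain ⟨g, hg⟩ := hab
    obtain ⟨π, rfl⟩ := (DomMulAct.mk (M := Equiv.Perm (Fin t))).surjective g
    have : a = b ∘ π := by
      funext k; exact (congrFun hg k).symm
    subst this
    exact Subtype.ext (Multiset.coe_eq_coe.mpr (Equiv.Perm.ofFn_comp_perm π b))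
  · rintro ⟨a⟩ ⟨b⟩ h
    obtain ⟨π, rfl⟩ := q_inj a b h
    exact Quotient.sound ⟨DomMulAct.mk π, rfl⟩
  · intro s
    obtain ⟨a, ha⟩ := q_surj s
    exact ⟨⟦a⟧, ha⟩

lemma fix_count (d t : ℕ) :
    ∑ π : Equiv.Perm (Fin t),
        (Finset.univ.filter fun a : Fin t → Fin d => a ∘ π = a).card
      = Fintype.card (Sym (Fin d) t) * t.factorial := by
  classical
  letI : Fintype (Equiv.Perm (Fin t))ᵈᵐᵃ :=
    Fintype.ofEquiv _ (DomMulAct.mk (M := Equiv.Perm (Fin t)))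
  letI : ∀ g : (Equiv.Perm (Fin t))ᵈᵐᵃ, Fintype (fixedBy (Fin t → Fin d) g) :=
    fun g => Fintype.ofFinite _
  letI : Fintype (orbitRel.Quotient (Equiv.Perm (Fin t))ᵈᵐᵃ (Fin t → Fin d)) :=
    Fintype.ofFinite _
  have hb := MulAction.sum_card_fixedBy_eq_card_orbits_mul_card_group
    (Equiv.Perm (Fin t))ᵈᵐᵃ (Fin t → Fin d)
  have hcards : ∀ π : Equiv.Perm (Fin t),
      Fintype.card (fixedBy (Fin t → Fin d) (DomMulAct.mk π))
        = (Finset.univ.filter fun a : Fin t → Fin d => a ∘ π = a).card := by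
    intro π
    rw [← Nat.card_eq_fintype_card]
    have : fixedBy (Fin t → Fin d) (DomMulAct.mk π) = {a : Fin t → Fin d | a ∘ π = a} := rfl
    rw [this, Nat.card_eq_fintype_card, Fintype.card_subtype]
    rfl
  have hsum : ∑ g : (Equiv.Perm (Fin t))ᵈᵐᵃ, Fintype.card (fixedBy (Fin t → Fin d) g)
      = ∑ π : Equiv.Perm (Fin t),
        (Finset.univ.filter fun a : Fin t → Fin d => a ∘ π = a).card := by
    rw [← Fintype.sum_bijective (DomMulAct.mk (M := Equiv.Perm (Fin t)))
      (DomMulAct.mk (M := Equiv.Perm (Fin t))).bijective _ _ (fun π => rfl)]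
    exact Finset.sum_congr rfl fun π _ => hcards π
  rw [hsum] at hb
  rw [hb]
  congr 1
  · rw [← Nat.card_eq_fintype_card, card_orbits]
  · rw [← Nat.card_eq_fintype_card,
      ← Nat.card_congr (DomMulAct.mk (M := Equiv.Perm (Fin t)))]
    simp [Nat.card_eq_fintype_card, Fintype.card_perm]


lemma conj_P (a b : Fin t → Fin d) : (starRingEnd ℂ) (P d t a b) = P d t a b := by
  simp [P, apply_ite]

lemma double_count (d t : ℕ) :
    ∑ σ : Equiv.Perm (Fin t), ∑ τ : Equiv.Perm (Fin t),
        (Finset.univ.filter fun a : Fin t → Fin d => a ∘ σ = a ∘ τ).card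
      = t.factorial * ∑ π : Equiv.Perm (Fin t),
          (Finset.univ.filter fun a : Fin t → Fin d => a ∘ π = a).card := by
  classical
  have key : ∀ σ : Equiv.Perm (Fin t),
      ∑ τ : Equiv.Perm (Fin t),
        (Finset.univ.filter fun a : Fin t → Fin d => a ∘ σ = a ∘ τ).card
      = ∑ π : Equiv.Perm (Fin t),
          (Finset.univ.filter fun a : Fin t → Fin d => a ∘ π = a).card := by
    intro σ
    have hfil : ∀ π : Equiv.Perm (Fin t),
        (Finset.univ.filter fun a : Fin t → Fin d => a ∘ π = a)
        = (Finset.univ.filter fun a : Fin t → Fin d => a ∘ σ = a ∘ (π * σ)) := by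
      intro π
      ext a
      simp only [Finset.mem_filter, Finset.mem_univ, true_and]
      constructor
      · intro h
        funext k
        have := congrFun h (σ k)
        simpa [Equiv.Perm.mul_apply] using this.symm
      · intro h
        funext m
        have := congrFun h (σ.symm m)
        simpa [Equiv.Perm.mul_apply] using this.symm
    exact (Fintype.sum_bijective (· * σ) (Group.mulRight_bijective σ)
      _ _ (fun π => by rw [hfil π])).symm
  rw [Finset.sum_congr rfl fun σ _ => key σ, Finset.sum_const]
  simp [Fintype.card_perm, mul_comm]

lemma sum_conj_P_mul_P (d t : ℕ) :
    ∑ a : Fin t → Fin d, ∑ b : Fin t → Fin d, (starRingEnd ℂ) (P d t a b) * P d t a b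
      = (t.factorial : ℂ) * ((Fintype.card (Sym (Fin d) t) : ℂ) * (t.factorial : ℂ)) := by
  classical
  have hP2 : ∀ a : Fin t → Fin d,
      ∑ b : Fin t → Fin d, (starRingEnd ℂ) (P d t a b) * P d t a b
      = ∑ σ : Equiv.Perm (Fin t), ∑ τ : Equiv.Perm (Fin t),
          (if a ∘ σ = a ∘ τ then (1 : ℂ) else 0) := by
    intro a
    have hb : ∀ b, (starRingEnd ℂ) (P d t a b) * P d t a b
        = ∑ σ : Equiv.Perm (Fin t), ∑ τ : Equiv.Perm (Fin t),
            (if b = a ∘ σ then (if b = a ∘ τ then (1:ℂ) else 0) else 0) := by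
      intro b
      rw [conj_P, P, Finset.sum_mul_sum]
      refine Finset.sum_congr rfl fun σ _ => Finset.sum_congr rfl fun τ _ => ?_
      by_cases h1 : b = a ∘ σ <;> by_cases h2 : b = a ∘ τ <;> simp [h1, h2]
    simp only [hb]
    rw [Finset.sum_comm]
    refine Finset.sum_congr rfl fun σ _ => ?_
    rw [Finset.sum_comm]
    refine Finset.sum_congr rfl fun τ _ => ?_
    rw [Finset.sum_ite_eq' Finset.univ (a ∘ σ)
      (fun b => if b = a ∘ τ then (1:ℂ) else 0)]
    simp
  simp only [hP2]
  have hswap : ∑ a : Fin t → Fin d, ∑ σ : Equiv.Perm (Fin t), ∑ τ : Equiv.Perm (Fin t),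
        (if a ∘ σ = a ∘ τ then (1 : ℂ) else 0)
      = ∑ σ : Equiv.Perm (Fin t), ∑ τ : Equiv.Perm (Fin t), ∑ a : Fin t → Fin d,
        (if a ∘ σ = a ∘ τ then (1 : ℂ) else 0) := by
    rw [Finset.sum_comm]
    exact Finset.sum_congr rfl fun σ _ => Finset.sum_comm
  rw [hswap]
  have hcount : ∀ σ τ : Equiv.Perm (Fin t),
      ∑ a : Fin t → Fin d, (if a ∘ σ = a ∘ τ then (1 : ℂ) else 0)
      = ((Finset.univ.filter fun a : Fin t → Fin d => a ∘ σ = a ∘ τ).card : ℂ) := by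
    intro σ τ
    rw [Finset.sum_boole]
  rw [Finset.sum_congr rfl fun σ _ => Finset.sum_congr rfl fun τ _ => hcount σ τ]
  have : ∑ σ : Equiv.Perm (Fin t), ∑ τ : Equiv.Perm (Fin t),
      ((Finset.univ.filter fun a : Fin t → Fin d => a ∘ σ = a ∘ τ).card : ℂ)
      = ((∑ σ : Equiv.Perm (Fin t), ∑ τ : Equiv.Perm (Fin t),
        (Finset.univ.filter fun a : Fin t → Fin d => a ∘ σ = a ∘ τ).card : ℕ) : ℂ) := by
    push_cast
    rfl
  rw [this, double_count, fix_count]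
  push_cast
  ring

lemma conj_pair_swap (f g : (Fin t → Fin d) → (Fin t → Fin d) → ℂ) :
    ∑ a : Fin t → Fin d, ∑ b : Fin t → Fin d, (starRingEnd ℂ) (f a b) * g a b
      = (starRingEnd ℂ) (∑ a : Fin t → Fin d, ∑ b : Fin t → Fin d,
          (starRingEnd ℂ) (g a b) * f a b) := by
  rw [map_sum]
  refine Finset.sum_congr rfl fun a _ => ?_
  rw [map_sum]
  refine Finset.sum_congr rfl fun b _ => ?_
  simp only [map_mul, Complex.conj_conj]
  ring

end CTaux

/-- A weighted spherical `(t,t)`-design for `ℂ^d`: a finite family of unit vectors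
with real weights summing to `1` satisfying the variational characterisation. -/
def IsWeightedDesign (d t : ℕ) {ι : Type*} [Fintype ι]
    (x : ι → EuclideanSpace ℂ (Fin d)) (w : ι → ℝ) : Prop :=
  (∀ i, ‖x i‖ = 1) ∧ (∑ i, w i = 1) ∧
    ∑ i, ∑ j, w i * w j * ‖(inner ℂ (x i) (x j) : ℂ)‖ ^ (2 * t) = designConst d t

/-- For two weighted spherical `(t,t)`-designs, the cross term
`b_{XY}^{(t)} = ∑ i ∑ j w_i^X w_j^Y |⟨x i, y j⟩|^(2t)` equals `c_t(ℂ^d)`. -/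
theorem cross_term_of_weighted_designs (d t : ℕ) (hd : 1 ≤ d) (ht : 1 ≤ t)
    {ι κ : Type*} [Fintype ι] [Fintype κ]
    (x : ι → EuclideanSpace ℂ (Fin d)) (wX : ι → ℝ)
    (y : κ → EuclideanSpace ℂ (Fin d)) (wY : κ → ℝ)
    (hX : IsWeightedDesign d t x wX) (hY : IsWeightedDesign d t y wY) :
    ∑ i, ∑ j, wX i * wY j * ‖(inner ℂ (x i) (y j) : ℂ)‖ ^ (2 * t) =
      designConst d t := by
  classical
  obtain ⟨hx, hwX, hXd⟩ := hX
  obtain ⟨hy, hwY, hYd⟩ := hY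
  have F_ne : (t.factorial : ℂ) ≠ 0 := Nat.cast_ne_zero.mpr t.factorial_ne_zero
  have hDpos : 0 < Fintype.card (Sym (Fin d) t) := by
    rw [Sym.card_sym_eq_choose]
    apply Nat.choose_pos
    simp only [Fintype.card_fin]
    omega
  set D : ℂ := (Fintype.card (Sym (Fin d) t) : ℂ) with hDdef
  have hD0 : D ≠ 0 := Nat.cast_ne_zero.mpr hDpos.ne'
  have hcardD : Fintype.card (Sym (Fin d) t) = (t + d - 1).choose t := by
    rw [Sym.card_sym_eq_choose]
    simp only [Fintype.card_fin]
    congr 1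
    omega
  have hdesignD : ((designConst d t : ℝ) : ℂ) = D⁻¹ := by
    rw [designConst, hDdef, hcardD]
    push_cast
    rw [one_div]
  set γ : ℂ := ((t.factorial : ℂ) * D)⁻¹ with hγdef
  have hγconj : (starRingEnd ℂ) γ = γ := by
    rw [hγdef, hDdef]
    simp
  -- design identity for X in matrix form
  have hXC : ∑ a : Fin t → Fin d, ∑ b : Fin t → Fin d,
      (starRingEnd ℂ) (CTaux.V x wX a b) * CTaux.V x wX a b
      = ((designConst d t : ℝ) : ℂ) := by
    rw [CTaux.cross_eq, hXd]
  have hXP : ∑ a : Fin t → Fin d, ∑ b : Fin t → Fin d,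
      (starRingEnd ℂ) (CTaux.V x wX a b) * CTaux.P d t a b = (t.factorial : ℂ) :=
    CTaux.sum_conj_V_mul_P x wX hx hwX
  have hYP : ∑ a : Fin t → Fin d, ∑ b : Fin t → Fin d,
      (starRingEnd ℂ) (CTaux.V y wY a b) * CTaux.P d t a b = (t.factorial : ℂ) :=
    CTaux.sum_conj_V_mul_P y wY hy hwY
  have hPP := CTaux.sum_conj_P_mul_P d t
  -- the deviation matrix is zero
  set e : (Fin t → Fin d) → (Fin t → Fin d) → ℂ :=
    fun a b => CTaux.V x wX a b - γ * CTaux.P d t a b with hedef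
  have hPV : ∑ a : Fin t → Fin d, ∑ b : Fin t → Fin d,
      (starRingEnd ℂ) (CTaux.P d t a b) * CTaux.V x wX a b = (t.factorial : ℂ) := by
    rw [CTaux.conj_pair_swap, hXP]
    simp
  have hzero : ∑ a : Fin t → Fin d, ∑ b : Fin t → Fin d,
      (starRingEnd ℂ) (e a b) * e a b = 0 := by
    have expand : ∀ a b : Fin t → Fin d, (starRingEnd ℂ) (e a b) * e a b
        = (starRingEnd ℂ) (CTaux.V x wX a b) * CTaux.V x wX a b
          - γ * ((starRingEnd ℂ) (CTaux.P d t a b) * CTaux.V x wX a b)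
          - γ * ((starRingEnd ℂ) (CTaux.V x wX a b) * CTaux.P d t a b)
          + γ * γ * ((starRingEnd ℂ) (CTaux.P d t a b) * CTaux.P d t a b) := by
      intro a b
      rw [hedef]
      simp only [map_sub, map_mul, hγconj]
      ring
    simp only [expand, Finset.sum_add_distrib, Finset.sum_sub_distrib, ← Finset.mul_sum]
    rw [hXC, hPV, hXP, hPP, hdesignD, hγdef]
    field_simp
    ring
  have hreal : ∑ a : Fin t → Fin d, ∑ b : Fin t → Fin d, Complex.normSq (e a b) = 0 := by
    have : ((∑ a : Fin t → Fin d, ∑ b : Fin t → Fin d, Complex.normSq (e a b) : ℝ) : ℂ) = 0 := by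
      push_cast
      rw [← hzero]
      refine Finset.sum_congr rfl fun a _ => Finset.sum_congr rfl fun b _ => ?_
      rw [Complex.normSq_eq_conj_mul_self]
    exact_mod_cast this
  have hVP : ∀ a b : Fin t → Fin d, CTaux.V x wX a b = γ * CTaux.P d t a b := by
    intro a b
    have h1 := (Finset.sum_eq_zero_iff_of_nonneg (fun a _ =>
      Finset.sum_nonneg fun b _ => Complex.normSq_nonneg (e a b))).mp hreal a (Finset.mem_univ a)
    have h2 := (Finset.sum_eq_zero_iff_of_nonneg (fun b _ =>
      Complex.normSq_nonneg (e a b))).mp h1 b (Finset.mem_univ b)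
    have h3 : e a b = 0 := Complex.normSq_eq_zero.mp h2
    have h4 : CTaux.V x wX a b - γ * CTaux.P d t a b = 0 := h3
    linear_combination h4
  -- conclude
  have hXY : ∑ a : Fin t → Fin d, ∑ b : Fin t → Fin d,
      (starRingEnd ℂ) (CTaux.V x wX a b) * CTaux.V y wY a b
      = ((designConst d t : ℝ) : ℂ) := by
    have h1 : ∀ a b : Fin t → Fin d,
        (starRingEnd ℂ) (CTaux.V x wX a b) * CTaux.V y wY a b
        = γ * ((starRingEnd ℂ) (CTaux.P d t a b) * CTaux.V y wY a b) := by
      intro a b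
      rw [hVP a b]
      simp only [map_mul, hγconj]
      ring
    simp only [h1, ← Finset.mul_sum]
    rw [CTaux.conj_pair_swap, hYP, hdesignD, hγdef]
    rw [Complex.conj_natCast]
    field_simp
  have hfinal := CTaux.cross_eq (t := t) x wX y wY
  rw [hXY] at hfinal
  exact_mod_cast hfinal.symm
end

section
/- Let d ≥ 1 and t ≥ 1 be integers, and let (X, w^X) = ((x_i), (w_i^X))_{i∈I} and (Y, w^Y) = ((y_j), (w_j^Y))_{j∈J} be weighted spherical (t,t)-designs for ℂ^d. Then for every real number α, the disjoint union X ∪ Y equipped with the affine combination of weights (α·w_i^X on X and (1−α)·w_j^Y on Y) is again a weighted spherical (t,t)-design: the weights sum to 1 and the corresponding double sum equals c_t(ℂ^d). -/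
open scoped BigOperators

open Finset Complex
open scoped ComplexConjugate

noncomputable def Fv (d t : ℕ) (x : EuclideanSpace ℂ (Fin d))
    (p : (Fin d → ℕ) × (Fin d → ℕ)) : ℂ :=
  ((Real.sqrt (Nat.multinomial Finset.univ p.1) *
    Real.sqrt (Nat.multinomial Finset.univ p.2) : ℝ) : ℂ) *
    ((∏ k, x k ^ p.1 k) * ∏ k, conj (x k) ^ p.2 k)

lemma conj_Fv_mul_Fv (d t : ℕ) (x y : EuclideanSpace ℂ (Fin d))
    (p : (Fin d → ℕ) × (Fin d → ℕ)) :
    conj (Fv d t x p) * Fv d t y p =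
      ((Nat.multinomial Finset.univ p.1 : ℂ) * (Nat.multinomial Finset.univ p.2 : ℂ)) *
        ((∏ k, (conj (x k) * y k) ^ p.1 k) * ∏ k, (x k * conj (y k)) ^ p.2 k) := by
  simp only [Fv, map_mul, map_prod, map_pow, Complex.conj_ofReal, Complex.conj_conj,
    mul_pow, Finset.prod_mul_distrib]
  have h1 : ((Real.sqrt (Nat.multinomial Finset.univ p.1) *
      Real.sqrt (Nat.multinomial Finset.univ p.2) : ℝ) : ℂ) *
      ((Real.sqrt (Nat.multinomial Finset.univ p.1) *
      Real.sqrt (Nat.multinomial Finset.univ p.2) : ℝ) : ℂ) =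
      (Nat.multinomial Finset.univ p.1 : ℂ) * (Nat.multinomial Finset.univ p.2 : ℂ) := by
    rw [← Complex.ofReal_mul]
    have : (Real.sqrt (Nat.multinomial Finset.univ p.1) *
        Real.sqrt (Nat.multinomial Finset.univ p.2)) *
        (Real.sqrt (Nat.multinomial Finset.univ p.1) *
        Real.sqrt (Nat.multinomial Finset.univ p.2)) =
        (Nat.multinomial Finset.univ p.1 : ℝ) * (Nat.multinomial Finset.univ p.2 : ℝ) := by
      rw [mul_mul_mul_comm, Real.mul_self_sqrt (Nat.cast_nonneg _),
        Real.mul_self_sqrt (Nat.cast_nonneg _)]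
    rw [this]; push_cast; ring
  calc _ = (((Real.sqrt (Nat.multinomial Finset.univ p.1) *
      Real.sqrt (Nat.multinomial Finset.univ p.2) : ℝ) : ℂ) *
      ((Real.sqrt (Nat.multinomial Finset.univ p.1) *
      Real.sqrt (Nat.multinomial Finset.univ p.2) : ℝ) : ℂ)) *
      ((∏ k, (conj (x k) ^ p.1 k * y k ^ p.1 k)) *
       ∏ k, (x k ^ p.2 k * conj (y k) ^ p.2 k)) := by
        simp only [Finset.prod_mul_distrib]; ring
    _ = _ := by rw [h1]; simp only [← mul_pow, ← Finset.prod_mul_distrib]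

lemma sum_mult_prod (d t : ℕ) (f : Fin d → ℂ) :
    ∑ m ∈ Finset.piAntidiag Finset.univ t, (Nat.multinomial Finset.univ m : ℂ) *
      ∏ k, f k ^ m k = (∑ k, f k) ^ t :=
  (Finset.sum_pow_eq_sum_piAntidiag Finset.univ f t).symm

-- L1
lemma sum_conj_Fv_mul_Fv (d t : ℕ) (x y : EuclideanSpace ℂ (Fin d)) :
    ∑ p ∈ (Finset.piAntidiag (Finset.univ : Finset (Fin d)) t) ×ˢ
        (Finset.piAntidiag (Finset.univ : Finset (Fin d)) t),
      conj (Fv d t x p) * Fv d t y p =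
      (‖(inner ℂ x y : ℂ)‖ ^ (2 * t) : ℝ) := by
  simp only [conj_Fv_mul_Fv]
  rw [Finset.sum_product]
  have : ∀ m m' : Fin d → ℕ,
      ((Nat.multinomial Finset.univ m : ℂ) * (Nat.multinomial Finset.univ m' : ℂ)) *
        ((∏ k, (conj (x k) * y k) ^ m k) * ∏ k, (x k * conj (y k)) ^ m' k) =
      ((Nat.multinomial Finset.univ m : ℂ) * ∏ k, (conj (x k) * y k) ^ m k) *
        ((Nat.multinomial Finset.univ m' : ℂ) * ∏ k, (x k * conj (y k)) ^ m' k) := by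
    intros; ring
  simp only [this, ← Finset.sum_mul, ← Finset.mul_sum]
  rw [sum_mult_prod, sum_mult_prod]
  have hz : (inner ℂ x y : ℂ) = ∑ k, conj (x k) * y k := by
    simp [PiLp.inner_apply, RCLike.inner_apply, mul_comm]
  have hz' : (∑ k, x k * conj (y k)) = conj (inner ℂ x y : ℂ) := by
    rw [hz, map_sum]; simp [mul_comm]
  rw [← hz, hz', ← mul_pow, Complex.mul_conj, pow_mul, Complex.sq_norm]
  push_cast; ring

lemma card_piAntidiag_univ (d t : ℕ) :
    (Finset.piAntidiag (Finset.univ : Finset (Fin d)) t).card = (t + d - 1).choose t := by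
  rw [← map_sym_eq_piAntidiag, Finset.card_map, Finset.sym_univ, Finset.card_univ,
    Sym.card_sym_eq_choose, Fintype.card_fin, Nat.add_comm d t]

noncomputable def Qv (d t : ℕ) (p : (Fin d → ℕ) × (Fin d → ℕ)) : ℂ :=
  if p.1 = p.2 then (designConst d t : ℂ) else 0

lemma conj_Fv_diag (d t : ℕ) (x : EuclideanSpace ℂ (Fin d)) (m : Fin d → ℕ) :
    conj (Fv d t x (m, m)) =
      (Nat.multinomial Finset.univ m : ℂ) * ∏ k, (conj (x k) * x k) ^ m k := by
  simp only [Fv, map_mul, map_prod, map_pow, Complex.conj_ofReal, Complex.conj_conj]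
  rw [Real.mul_self_sqrt (Nat.cast_nonneg _)]
  simp only [mul_pow, Finset.prod_mul_distrib]
  push_cast; ring

lemma inner_self_pow (d t : ℕ) (x : EuclideanSpace ℂ (Fin d)) (hx : ‖x‖ = 1) :
    (∑ k, conj (x k) * x k) ^ t = 1 := by
  have hz : (inner ℂ x x : ℂ) = ∑ k, conj (x k) * x k := by
    simp only [PiLp.inner_apply, RCLike.inner_apply, mul_comm]
  rw [← hz, inner_self_eq_norm_sq_to_K, hx]
  norm_num

-- L2
lemma sum_conj_Fv_mul_Qv (d t : ℕ) (x : EuclideanSpace ℂ (Fin d)) (hx : ‖x‖ = 1) :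
    ∑ p ∈ (Finset.piAntidiag (Finset.univ : Finset (Fin d)) t) ×ˢ
        (Finset.piAntidiag (Finset.univ : Finset (Fin d)) t),
      conj (Fv d t x p) * Qv d t p = (designConst d t : ℂ) := by
  rw [Finset.sum_product]
  have h1 : ∀ m ∈ Finset.piAntidiag (Finset.univ : Finset (Fin d)) t,
      ∑ m' ∈ Finset.piAntidiag (Finset.univ : Finset (Fin d)) t,
        conj (Fv d t x (m, m')) * Qv d t (m, m') =
      conj (Fv d t x (m, m)) * (designConst d t : ℂ) := by
    intro m hm
    rw [Finset.sum_eq_single m]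
    · simp [Qv]
    · intro b _ hb; simp [Qv, Ne.symm hb]
    · intro h; exact absurd hm h
  rw [Finset.sum_congr rfl h1, ← Finset.sum_mul]
  simp only [conj_Fv_diag]
  rw [sum_mult_prod, inner_self_pow d t x hx, one_mul]

-- L3
lemma sum_conj_Qv_mul_Qv (d t : ℕ) (hd : 1 ≤ d) :
    ∑ p ∈ (Finset.piAntidiag (Finset.univ : Finset (Fin d)) t) ×ˢ
        (Finset.piAntidiag (Finset.univ : Finset (Fin d)) t),
      conj (Qv d t p) * Qv d t p = (designConst d t : ℂ) := by
  rw [Finset.sum_product]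
  have h1 : ∀ m ∈ Finset.piAntidiag (Finset.univ : Finset (Fin d)) t,
      ∑ m' ∈ Finset.piAntidiag (Finset.univ : Finset (Fin d)) t,
        conj (Qv d t (m, m')) * Qv d t (m, m') =
      (designConst d t : ℂ) * (designConst d t : ℂ) := by
    intro m hm
    rw [Finset.sum_eq_single m]
    · simp [Qv, Complex.conj_ofReal]
    · intro b _ hb; simp [Qv, Ne.symm hb]
    · intro h; exact absurd hm h
  rw [Finset.sum_congr rfl h1, Finset.sum_const, card_piAntidiag_univ, nsmul_eq_mul]
  have hch : (0 : ℝ) < ((t + d - 1).choose t : ℝ) := by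
    have : t ≤ t + d - 1 := by omega
    exact_mod_cast Nat.choose_pos this
  rw [← Complex.ofReal_natCast, ← Complex.ofReal_mul, ← Complex.ofReal_mul]
  congr 1
  unfold designConst
  field_simp [hch.ne']

noncomputable def uv (d t : ℕ) {ι : Type*} [Fintype ι]
    (x : ι → EuclideanSpace ℂ (Fin d)) (w : ι → ℝ)
    (p : (Fin d → ℕ) × (Fin d → ℕ)) : ℂ :=
  ∑ i, (w i : ℂ) * Fv d t (x i) p

lemma sum_conj_uv_mul_uv (d t : ℕ) {ι κ : Type*} [Fintype ι] [Fintype κ]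
    (x : ι → EuclideanSpace ℂ (Fin d)) (w : ι → ℝ)
    (y : κ → EuclideanSpace ℂ (Fin d)) (v : κ → ℝ) :
    ∑ p ∈ (Finset.piAntidiag (Finset.univ : Finset (Fin d)) t) ×ˢ
        (Finset.piAntidiag (Finset.univ : Finset (Fin d)) t),
      conj (uv d t x w p) * uv d t y v p =
      ((∑ i, ∑ j, w i * v j * ‖(inner ℂ (x i) (y j) : ℂ)‖ ^ (2 * t) : ℝ) : ℂ) := by
  have step : ∀ p, conj (uv d t x w p) * uv d t y v p =
      ∑ i, ∑ j, ((w i : ℂ) * (v j : ℂ)) * (conj (Fv d t (x i) p) * Fv d t (y j) p) := by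
    intro p
    rw [uv, uv, map_sum, Finset.sum_mul_sum]
    refine Finset.sum_congr rfl fun i _ => Finset.sum_congr rfl fun j _ => ?_
    rw [map_mul, Complex.conj_ofReal]
    ring
  simp only [step]
  rw [Finset.sum_comm]
  have swap2 : ∀ i ∈ (Finset.univ : Finset ι),
      ∑ p ∈ (Finset.piAntidiag (Finset.univ : Finset (Fin d)) t) ×ˢ
        (Finset.piAntidiag (Finset.univ : Finset (Fin d)) t),
      ∑ j, ((w i : ℂ) * (v j : ℂ)) * (conj (Fv d t (x i) p) * Fv d t (y j) p) =
      ∑ j, ((w i : ℂ) * (v j : ℂ)) *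
        ((‖(inner ℂ (x i) (y j) : ℂ)‖ ^ (2 * t) : ℝ) : ℂ) := by
    intro i _
    rw [Finset.sum_comm]
    refine Finset.sum_congr rfl fun j _ => ?_
    rw [← Finset.mul_sum, sum_conj_Fv_mul_Fv]
  rw [Finset.sum_congr rfl swap2]
  push_cast
  ring

lemma sum_conj_uv_mul_Qv (d t : ℕ) {ι : Type*} [Fintype ι]
    (x : ι → EuclideanSpace ℂ (Fin d)) (w : ι → ℝ)
    (hx : ∀ i, ‖x i‖ = 1) (hw : ∑ i, w i = 1) :
    ∑ p ∈ (Finset.piAntidiag (Finset.univ : Finset (Fin d)) t) ×ˢ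
        (Finset.piAntidiag (Finset.univ : Finset (Fin d)) t),
      conj (uv d t x w p) * Qv d t p = (designConst d t : ℂ) := by
  have step : ∀ p, conj (uv d t x w p) * Qv d t p =
      ∑ i, (w i : ℂ) * (conj (Fv d t (x i) p) * Qv d t p) := by
    intro p
    rw [uv, map_sum, Finset.sum_mul]
    refine Finset.sum_congr rfl fun i _ => ?_
    rw [map_mul, Complex.conj_ofReal]; ring
  simp only [step]
  rw [Finset.sum_comm]
  have : ∀ i ∈ (Finset.univ : Finset ι),
      ∑ p ∈ (Finset.piAntidiag (Finset.univ : Finset (Fin d)) t) ×ˢ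
        (Finset.piAntidiag (Finset.univ : Finset (Fin d)) t),
        (w i : ℂ) * (conj (Fv d t (x i) p) * Qv d t p) =
      (w i : ℂ) * (designConst d t : ℂ) := by
    intro i _
    rw [← Finset.mul_sum, sum_conj_Fv_mul_Qv d t (x i) (hx i)]
  rw [Finset.sum_congr rfl this, ← Finset.sum_mul, ← Complex.ofReal_sum, hw]
  simp

lemma uv_eq_Qv (d t : ℕ) (hd : 1 ≤ d) {ι : Type*} [Fintype ι]
    (x : ι → EuclideanSpace ℂ (Fin d)) (w : ι → ℝ)
    (hx : ∀ i, ‖x i‖ = 1) (hw : ∑ i, w i = 1)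
    (hs : ∑ i, ∑ j, w i * w j * ‖(inner ℂ (x i) (x j) : ℂ)‖ ^ (2 * t)
        = designConst d t) :
    ∀ p ∈ (Finset.piAntidiag (Finset.univ : Finset (Fin d)) t) ×ˢ
        (Finset.piAntidiag (Finset.univ : Finset (Fin d)) t),
      uv d t x w p = Qv d t p := by
  set AA := (Finset.piAntidiag (Finset.univ : Finset (Fin d)) t) ×ˢ
      (Finset.piAntidiag (Finset.univ : Finset (Fin d)) t) with hAA
  have hQu : ∑ p ∈ AA, conj (Qv d t p) * uv d t x w p = (designConst d t : ℂ) := by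
    have := sum_conj_uv_mul_Qv d t x w hx hw
    calc ∑ p ∈ AA, conj (Qv d t p) * uv d t x w p
        = conj (∑ p ∈ AA, conj (uv d t x w p) * Qv d t p) := by
          rw [map_sum]
          refine Finset.sum_congr rfl fun p _ => ?_
          rw [map_mul, Complex.conj_conj]; ring
      _ = (designConst d t : ℂ) := by rw [this, Complex.conj_ofReal]
  have hT : ∑ p ∈ AA, ((Complex.normSq (uv d t x w p - Qv d t p) : ℝ) : ℂ) = 0 := by
    have expand : ∀ p, ((Complex.normSq (uv d t x w p - Qv d t p) : ℝ) : ℂ) =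
        conj (uv d t x w p) * uv d t x w p - conj (uv d t x w p) * Qv d t p
          - conj (Qv d t p) * uv d t x w p + conj (Qv d t p) * Qv d t p := by
      intro p
      rw [Complex.normSq_eq_conj_mul_self, map_sub]
      ring
    simp only [expand]
    rw [Finset.sum_add_distrib, Finset.sum_sub_distrib, Finset.sum_sub_distrib,
      sum_conj_uv_mul_uv, sum_conj_uv_mul_Qv d t x w hx hw, hQu,
      sum_conj_Qv_mul_Qv d t hd, hs]
    ring
  have hreal : ∑ p ∈ AA, Complex.normSq (uv d t x w p - Qv d t p) = 0 := by
    have := hT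
    rw [← Complex.ofReal_sum] at this
    exact_mod_cast this
  intro p hp
  have := (Finset.sum_eq_zero_iff_of_nonneg
    (fun q _ => Complex.normSq_nonneg _)).1 hreal p hp
  have := Complex.normSq_eq_zero.1 this
  exact sub_eq_zero.1 this

lemma cross_design_sum (d t : ℕ) (hd : 1 ≤ d) {ι' κ' : Type*} [Fintype ι'] [Fintype κ']
    (x' : ι' → EuclideanSpace ℂ (Fin d)) (wX' : ι' → ℝ)
    (y' : κ' → EuclideanSpace ℂ (Fin d)) (wY' : κ' → ℝ)
    (hx' : ∀ i, ‖x' i‖ = 1) (hwX' : ∑ i, wX' i = 1)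
    (hsX' : ∑ i, ∑ j, wX' i * wX' j * ‖(inner ℂ (x' i) (x' j) : ℂ)‖ ^ (2 * t)
      = designConst d t)
    (hy' : ∀ i, ‖y' i‖ = 1) (hwY' : ∑ i, wY' i = 1)
    (hsY' : ∑ i, ∑ j, wY' i * wY' j * ‖(inner ℂ (y' i) (y' j) : ℂ)‖ ^ (2 * t)
      = designConst d t) :
    ∑ i, ∑ j, wX' i * wY' j * ‖(inner ℂ (x' i) (y' j) : ℂ)‖ ^ (2 * t)
      = designConst d t := by
  have h1 := sum_conj_uv_mul_uv d t x' wX' y' wY'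
  have h2 : ∑ p ∈ (Finset.piAntidiag (Finset.univ : Finset (Fin d)) t) ×ˢ
      (Finset.piAntidiag (Finset.univ : Finset (Fin d)) t),
      conj (uv d t x' wX' p) * uv d t y' wY' p = (designConst d t : ℂ) := by
    rw [Finset.sum_congr rfl (fun p hp => by
      rw [uv_eq_Qv d t hd x' wX' hx' hwX' hsX' p hp,
        uv_eq_Qv d t hd y' wY' hy' hwY' hsY' p hp])]
    exact sum_conj_Qv_mul_Qv d t hd
  rw [h2] at h1
  exact_mod_cast h1.symm

lemma factor_sum {ι' κ' : Type*} [Fintype ι'] [Fintype κ'] (a b : ℝ)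
    (w' : ι' → ℝ) (v' : κ' → ℝ) (A : ι' → κ' → ℝ) :
    ∑ i, ∑ j, (a * w' i) * (b * v' j) * A i j =
      a * b * ∑ i, ∑ j, w' i * v' j * A i j := by
  rw [Finset.mul_sum]
  refine Finset.sum_congr rfl fun i _ => ?_
  rw [Finset.mul_sum]
  exact Finset.sum_congr rfl fun j _ => by ring

/-- The disjoint union of two weighted spherical `(t,t)`-designs, with any
affine combination `(α, 1-α)` of the weights, is again a weighted spherical
`(t,t)`-design. -/
theorem affine_union_of_weighted_designs (d t : ℕ) (hd : 1 ≤ d) (ht : 1 ≤ t)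
    {ι κ : Type*} [Fintype ι] [Fintype κ]
    (x : ι → EuclideanSpace ℂ (Fin d)) (wX : ι → ℝ)
    (y : κ → EuclideanSpace ℂ (Fin d)) (wY : κ → ℝ)
    (hX : IsWeightedDesign d t x wX) (hY : IsWeightedDesign d t y wY) (α : ℝ) :
    IsWeightedDesign d t (Sum.elim x y)
      (Sum.elim (fun i => α * wX i) (fun j => (1 - α) * wY j)) := by
  obtain ⟨hx, hwX, hsX⟩ := hX
  obtain ⟨hy, hwY, hsY⟩ := hY
  have hXY := cross_design_sum d t hd x wX y wY hx hwX hsX hy hwY hsY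
  have hYX := cross_design_sum d t hd y wY x wX hy hwY hsY hx hwX hsX
  refine ⟨?_, ?_, ?_⟩
  · intro i; cases i with
    | inl i => exact hx i
    | inr j => exact hy j
  · rw [Fintype.sum_sum_type]
    simp only [Sum.elim_inl, Sum.elim_inr, ← Finset.mul_sum, hwX, hwY]
    ring
  · rw [Fintype.sum_sum_type]
    simp only [Fintype.sum_sum_type, Sum.elim_inl, Sum.elim_inr, Finset.sum_add_distrib]
    rw [factor_sum α α wX wX _, factor_sum α (1-α) wX wY _, factor_sum (1-α) α wY wX _,
      factor_sum (1-α) (1-α) wY wY _, hsX, hsY, hXY, hYX]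
    ring
end

section
/- Let d ≥ 1 and t ≥ 1 be integers. Let (x_i)_{i∈I} and (y_j)_{j∈J} be finite families of unit vectors in ℂ^d with real weights (w_i^X) and (w_j^Y) each summing to 1, and set b_{XX} := ∑_{i,i'} w_i^X w_{i'}^X |⟨x_i,x_{i'}⟩|^{2t}, b_{YY} := ∑_{j,j'} w_j^Y w_{j'}^Y |⟨y_j,y_{j'}⟩|^{2t}, b_{XY} := ∑_{i,j} w_i^X w_j^Y |⟨x_i,y_j⟩|^{2t}. Suppose b_{XX}·b_{YY} − b_{XY}² = c_t(ℂ^d)·(b_{XX} + b_{YY} − 2b_{XY}) and b_{XX} + b_{YY} − 2b_{XY} ≠ 0. Then α := (b_{YY} − b_{XY}) / (b_{XX} + b_{YY} − 2b_{XY}) is the unique real number for which the disjoint union X ∪ Y with weights α·w_i^X on X and (1−α)·w_j^Y on Y is a weighted spherical (t,t)-design. -/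
open scoped BigOperators

/-- If the discriminant of the quadratic vanishes, i.e.
`b_XX b_YY - b_XY² = c_t(ℂ^d) (b_XX + b_YY - 2 b_XY)` with `b_XX + b_YY - 2 b_XY ≠ 0`,
then `α = (b_YY - b_XY)/(b_XX + b_YY - 2 b_XY)` is the unique weighting for which the
disjoint union is a weighted spherical `(t,t)`-design. -/
theorem unique_weighting_of_zero_discriminant (d t : ℕ) (hd : 1 ≤ d) (ht : 1 ≤ t)
    {ι κ : Type*} [Fintype ι] [Fintype κ]
    (x : ι → EuclideanSpace ℂ (Fin d)) (wX : ι → ℝ)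
    (y : κ → EuclideanSpace ℂ (Fin d)) (wY : κ → ℝ)
    (hx : ∀ i, ‖x i‖ = 1) (hy : ∀ j, ‖y j‖ = 1)
    (hwX : ∑ i, wX i = 1) (hwY : ∑ j, wY j = 1)
    (bXX bYY bXY : ℝ)
    (hbXX : bXX = ∑ i, ∑ i', wX i * wX i' * ‖(inner ℂ (x i) (x i') : ℂ)‖ ^ (2 * t))
    (hbYY : bYY = ∑ j, ∑ j', wY j * wY j' * ‖(inner ℂ (y j) (y j') : ℂ)‖ ^ (2 * t))
    (hbXY : bXY = ∑ i, ∑ j, wX i * wY j * ‖(inner ℂ (x i) (y j) : ℂ)‖ ^ (2 * t))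
    (hdisc : bXX * bYY - bXY ^ 2 = designConst d t * (bXX + bYY - 2 * bXY))
    (hne : bXX + bYY - 2 * bXY ≠ 0) :
    IsWeightedDesign d t (Sum.elim x y)
        (Sum.elim (fun i => (bYY - bXY) / (bXX + bYY - 2 * bXY) * wX i)
          (fun j => (1 - (bYY - bXY) / (bXX + bYY - 2 * bXY)) * wY j)) ∧
      ∀ β : ℝ,
        IsWeightedDesign d t (Sum.elim x y)
            (Sum.elim (fun i => β * wX i) (fun j => (1 - β) * wY j)) →
          β = (bYY - bXY) / (bXX + bYY - 2 * bXY) := by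

  set c := designConst d t with hc
  set A := bXX + bYY - 2 * bXY with hA
  set α := (bYY - bXY) / A with hα
  have hαA : A * α = bYY - bXY := by
    rw [hα]; field_simp
  -- the double sum for an arbitrary mixing parameter β
  have hkey : ∀ β : ℝ,
      (∑ p, ∑ q, Sum.elim (fun i => β * wX i) (fun j => (1 - β) * wY j) p *
          Sum.elim (fun i => β * wX i) (fun j => (1 - β) * wY j) q *
          ‖(inner ℂ (Sum.elim x y p) (Sum.elim x y q) : ℂ)‖ ^ (2 * t))
        = A * β ^ 2 - 2 * (bYY - bXY) * β + bYY := by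
    intro β
    have hsym : ∀ (j : κ) (i : ι),
        ‖(inner ℂ (y j) (x i) : ℂ)‖ = ‖(inner ℂ (x i) (y j) : ℂ)‖ := by
      intro j i
      rw [← inner_conj_symm (x i) (y j), Complex.norm_conj]
    have h1 : (∑ i, ∑ i', (β * wX i) * (β * wX i') *
        ‖(inner ℂ (x i) (x i') : ℂ)‖ ^ (2 * t)) = β ^ 2 * bXX := by
      rw [hbXX, Finset.mul_sum]
      refine Finset.sum_congr rfl fun i _ => ?_
      rw [Finset.mul_sum]
      exact Finset.sum_congr rfl fun i' _ => by ring
    have h2 : (∑ i, ∑ j, (β * wX i) * ((1 - β) * wY j) *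
        ‖(inner ℂ (x i) (y j) : ℂ)‖ ^ (2 * t)) = β * (1 - β) * bXY := by
      rw [hbXY, Finset.mul_sum]
      refine Finset.sum_congr rfl fun i _ => ?_
      rw [Finset.mul_sum]
      exact Finset.sum_congr rfl fun j _ => by ring
    have h3 : (∑ j, ∑ i, ((1 - β) * wY j) * (β * wX i) *
        ‖(inner ℂ (y j) (x i) : ℂ)‖ ^ (2 * t)) = β * (1 - β) * bXY := by
      rw [Finset.sum_comm, hbXY, Finset.mul_sum]
      refine Finset.sum_congr rfl fun i _ => ?_
      rw [Finset.mul_sum]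
      refine Finset.sum_congr rfl fun j _ => ?_
      rw [hsym]; ring
    have h4 : (∑ j, ∑ j', ((1 - β) * wY j) * ((1 - β) * wY j') *
        ‖(inner ℂ (y j) (y j') : ℂ)‖ ^ (2 * t)) = (1 - β) ^ 2 * bYY := by
      rw [hbYY, Finset.mul_sum]
      refine Finset.sum_congr rfl fun j _ => ?_
      rw [Finset.mul_sum]
      exact Finset.sum_congr rfl fun j' _ => by ring
    rw [Fintype.sum_sum_type]
    simp only [Fintype.sum_sum_type, Sum.elim_inl, Sum.elim_inr]
    rw [Finset.sum_add_distrib, Finset.sum_add_distrib, h1, h2, h3, h4, hA]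
    ring
  have hwsum : ∀ β : ℝ,
      (∑ p, Sum.elim (fun i => β * wX i) (fun j => (1 - β) * wY j) p) = 1 := by
    intro β
    rw [Fintype.sum_sum_type]
    simp only [Sum.elim_inl, Sum.elim_inr]
    rw [← Finset.mul_sum, ← Finset.mul_sum, hwX, hwY]
    ring
  have hnorm : ∀ p : ι ⊕ κ, ‖Sum.elim x y p‖ = 1 := by
    rintro (i | j)
    · exact hx i
    · exact hy j
  -- value at α equals c
  have hval : A * α ^ 2 - 2 * (bYY - bXY) * α + bYY = c := by
    have h2 : A * (A * α ^ 2 - 2 * (bYY - bXY) * α + bYY) = A * c := by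
      linear_combination (A * α - (bYY - bXY)) * hαA + hdisc + bYY * hA
    exact mul_left_cancel₀ hne h2
  constructor
  · refine ⟨hnorm, hwsum α, ?_⟩
    rw [hkey α, hval]
  · rintro β ⟨-, -, hdes⟩
    rw [hkey β, ← hc] at hdes
    have h0 : A * (β - α) ^ 2 = 0 := by
      linear_combination hdes - hval + (2 * α - 2 * β) * hαA
    have h1 : (β - α) ^ 2 = 0 := by
      rcases mul_eq_zero.mp h0 with h | h
      · exact absurd h hne
      · exact h
    have h2 := (pow_eq_zero_iff (by norm_num : (2:ℕ) ≠ 0)).mp h1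
    linarith [sub_eq_zero.mp h2]
end

section
/- Let d ≥ 1 and t ≥ 1 be integers, and let ((x_i), (w_i))_{i∈I} be a weighted spherical (t,t)-design for ℂ^d. Then for every integer r with 1 ≤ r ≤ t, the same family with the same weights is a weighted spherical (r,r)-design: ∑_{i∈I}∑_{j∈I} w_i w_j |⟨x_i,x_j⟩|^{2r} = c_r(ℂ^d). -/
open scoped BigOperators

section Helpers

open Finset

private noncomputable def sTT {d : ℕ} (n : ℕ) (y : Fin d → ℂ) :
    (Fin n → Fin d) × (Fin n → Fin d) → ℂ :=
  fun p => (∏ k, (starRingEnd ℂ) (y (p.1 k))) * ∏ k, y (p.2 k)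

private def sPP (d n : ℕ) : (Fin n → Fin d) × (Fin n → Fin d) → ℕ :=
  fun p => ∑ σ : Equiv.Perm (Fin n), if p.1 ∘ σ = p.2 then 1 else 0


private lemma comp_swap_eq {α : Type*} {n : ℕ} (u : Fin n → α) (p q : Fin n)
    (h : u p = u q) : u ∘ (Equiv.swap p q) = u := by
  funext m
  simp only [Function.comp_apply, Equiv.swap_apply_def]
  split_ifs with h1 h2 <;> simp_all

private lemma cons_cond_iff {d s : ℕ} (c : Fin d) (a b : Fin s → Fin d) (p : Fin (s+1))
    (τ : Equiv.Perm (Fin s)) :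
    (Fin.cons c a ∘ (Equiv.Perm.decomposeFin.symm (p, τ)) = Fin.cons c b)
      ↔ ((Fin.cons c a : Fin (s+1) → Fin d) p = c ∧ a ∘ τ = b) := by
  constructor
  · intro h
    have h0 : (Fin.cons c a : Fin (s+1) → Fin d) p = c := by
      have := congrFun h 0
      simpa using this
    refine ⟨h0, funext fun j => ?_⟩
    have hj := congrFun h j.succ
    simp only [Function.comp_apply, Equiv.Perm.decomposeFin_symm_apply_succ, Fin.cons_succ] at hj
    have hs := congrFun (comp_swap_eq (Fin.cons c a) 0 p (by simpa using h0.symm)) ((τ j).succ)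
    simp only [Function.comp_apply] at hs
    rw [hs] at hj
    simpa using hj
  · rintro ⟨h0, hτ⟩
    funext k
    refine Fin.cases ?_ (fun j => ?_) k
    · simpa using h0
    · simp only [Function.comp_apply, Equiv.Perm.decomposeFin_symm_apply_succ, Fin.cons_succ]
      have hs := congrFun (comp_swap_eq (Fin.cons c a) 0 p (by simpa using h0.symm)) ((τ j).succ)
      simp only [Function.comp_apply] at hs
      rw [hs]
      simp [← hτ]

private lemma pcnt_cons {d s : ℕ} (c : Fin d) (a b : Fin s → Fin d) :
    Fintype.card {σ : Equiv.Perm (Fin (s+1)) // Fin.cons c a ∘ σ = Fin.cons c b}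
      = Fintype.card {p : Fin (s+1) // (Fin.cons c a : Fin (s+1) → Fin d) p = c}
        * Fintype.card {τ : Equiv.Perm (Fin s) // a ∘ τ = b} := by
  rw [← Fintype.card_prod]
  apply Fintype.card_congr
  refine (Equiv.subtypeEquiv Equiv.Perm.decomposeFin ?_).trans Equiv.subtypeProdEquivProd
  intro σ
  have := cons_cond_iff c a b (Equiv.Perm.decomposeFin σ).1 (Equiv.Perm.decomposeFin σ).2
  rwa [Prod.mk.eta, Equiv.symm_apply_apply] at this

-- K2
private lemma sum_card_cons {d s : ℕ} (a : Fin s → Fin d) :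
    ∑ c : Fin d, Fintype.card {p : Fin (s+1) // (Fin.cons c a : Fin (s+1) → Fin d) p = c}
      = d + s := by
  have h1 : ∀ c : Fin d,
      Fintype.card {p : Fin (s+1) // (Fin.cons c a : Fin (s+1) → Fin d) p = c}
        = 1 + ∑ k : Fin s, if a k = c then 1 else 0 := by
    intro c
    rw [Fintype.card_subtype, Finset.card_filter]
    rw [Fin.sum_univ_succ]
    simp
  simp only [h1]
  rw [Finset.sum_add_distrib]
  rw [Finset.sum_comm]
  simp [Finset.sum_ite_eq, Fintype.card_fin]

private lemma fix_card_zero {d n : ℕ} (τ : Equiv.Perm (Fin n)) :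
    Fintype.card {a : Fin (n+1) → Fin d // a ∘ (Equiv.Perm.decomposeFin.symm (0, τ)) = a}
      = d * Fintype.card {a : Fin n → Fin d // a ∘ τ = a} := by
  have : Fintype.card {a : Fin (n+1) → Fin d // a ∘ (Equiv.Perm.decomposeFin.symm (0, τ)) = a}
      = Fintype.card (Fin d × {a : Fin n → Fin d // a ∘ τ = a}) := by
    apply Fintype.card_congr
    refine
      { toFun := fun a => (a.1 0, ⟨fun j => a.1 j.succ, funext fun j => ?_⟩)
        invFun := fun e => ⟨Fin.cons e.1 e.2.1, funext fun k => ?_⟩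
        left_inv := ?_
        right_inv := ?_ }
    · have hj := congrFun a.2 j.succ
      simpa [Equiv.swap_self] using hj
    · refine Fin.cases ?_ (fun j => ?_) k
      · simp
      · simp only [Function.comp_apply, Equiv.Perm.decomposeFin_symm_apply_succ,
          Equiv.swap_self, Equiv.refl_apply, Fin.cons_succ]
        exact congrFun e.2.2 j
    · intro a
      apply Subtype.ext
      funext k
      refine Fin.cases ?_ (fun j => ?_) k <;> simp
    · intro e
      refine Prod.ext ?_ (Subtype.ext ?_) <;> simp
  rw [this, Fintype.card_prod, Fintype.card_fin]

private lemma fix_card_succ {d n : ℕ} (q : Fin n) (τ : Equiv.Perm (Fin n)) :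
    Fintype.card {a : Fin (n+1) → Fin d // a ∘ (Equiv.Perm.decomposeFin.symm (q.succ, τ)) = a}
      = Fintype.card {a : Fin n → Fin d // a ∘ τ = a} := by
  apply Fintype.card_congr
  refine
    { toFun := fun a => ⟨fun j => a.1 j.succ, funext fun j => ?_⟩
      invFun := fun a' => ⟨Fin.cons (a'.1 q) a'.1, funext fun k => ?_⟩
      left_inv := ?_
      right_inv := ?_ }
  · have hj := congrFun a.2 j.succ
    simp only [Function.comp_apply, Equiv.Perm.decomposeFin_symm_apply_succ] at hj
    by_cases hc : τ j = q
    · rw [hc] at hj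
      rw [Equiv.swap_apply_right] at hj
      have h0 := congrFun a.2 0
      simp only [Function.comp_apply, Equiv.Perm.decomposeFin_symm_apply_zero] at h0
      show (a.1 (τ j).succ) = a.1 j.succ
      rw [hc, h0, hj]
    · rw [Equiv.swap_apply_of_ne_of_ne (Fin.succ_ne_zero _)
        (fun hh => hc (Fin.succ_injective _ hh))] at hj
      exact hj
  · refine Fin.cases ?_ (fun j => ?_) k
    · simp only [Function.comp_apply, Equiv.Perm.decomposeFin_symm_apply_zero, Fin.cons_succ,
        Fin.cons_zero]
    · simp only [Function.comp_apply, Equiv.Perm.decomposeFin_symm_apply_succ]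
      by_cases hc : τ j = q
      · rw [hc, Equiv.swap_apply_right]
        simp only [Fin.cons_zero, Fin.cons_succ]
        rw [← hc]
        exact congrFun a'.2 j
      · rw [Equiv.swap_apply_of_ne_of_ne (Fin.succ_ne_zero _)
          (fun hh => hc (Fin.succ_injective _ hh))]
        simp only [Fin.cons_succ]
        exact congrFun a'.2 j
  · intro a
    apply Subtype.ext
    funext k
    refine Fin.cases ?_ (fun j => ?_) k
    · simp only [Fin.cons_zero]
      have h0 := congrFun a.2 0
      simp only [Function.comp_apply, Equiv.Perm.decomposeFin_symm_apply_zero] at h0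
      exact h0
    · simp
  · intro a'
    apply Subtype.ext
    funext j
    simp

private lemma sum_fix (d : ℕ) : ∀ n : ℕ,
    ∑ π : Equiv.Perm (Fin n), Fintype.card {a : Fin n → Fin d // a ∘ π = a}
      = d.ascFactorial n := by
  intro n
  induction n with
  | zero =>
    rw [Nat.ascFactorial_zero, Fintype.sum_unique, Fintype.card_subtype]
    rw [Finset.filter_true_of_mem (fun a _ => funext fun k => k.elim0)]
    simp
  | succ n ih =>
    rw [← Equiv.sum_comp (Equiv.Perm.decomposeFin (n := n)).symm, Fintype.sum_prod_type,
      Fin.sum_univ_succ]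
    have h0 : ∀ τ : Equiv.Perm (Fin n),
        Fintype.card {a : Fin (n+1) → Fin d // a ∘ (Equiv.Perm.decomposeFin.symm (0, τ)) = a}
          = d * Fintype.card {a : Fin n → Fin d // a ∘ τ = a} := fix_card_zero
    calc (∑ τ : Equiv.Perm (Fin n),
            Fintype.card {a : Fin (n+1) → Fin d // a ∘ (Equiv.Perm.decomposeFin.symm (0, τ)) = a})
          + ∑ q : Fin n, ∑ τ : Equiv.Perm (Fin n),
            Fintype.card {a : Fin (n+1) → Fin d // a ∘ (Equiv.Perm.decomposeFin.symm (q.succ, τ)) = a}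
        = d * d.ascFactorial n + n * d.ascFactorial n := by
          rw [Finset.sum_congr rfl (fun τ _ => h0 τ), ← Finset.mul_sum, ih]
          congr 1
          rw [Finset.sum_congr rfl (fun q _ => Finset.sum_congr rfl (fun τ _ => fix_card_succ q τ))]
          simp [ih, Finset.sum_const, Fintype.card_fin]
      _ = d.ascFactorial (n+1) := by rw [Nat.ascFactorial_succ]; ring

-- F0
private lemma sum_prod_pow {d : ℕ} (f : Fin d → ℂ) : ∀ n : ℕ,
    ∑ a : Fin n → Fin d, ∏ k, f (a k) = (∑ j, f j) ^ n := by
  intro n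
  induction n with
  | zero => simp
  | succ n ih =>
    rw [← Equiv.sum_comp (Fin.consEquiv (fun _ : Fin (n+1) => Fin d)), Fintype.sum_prod_type]
    simp only [Fin.consEquiv_apply, Fin.prod_univ_succ, Fin.cons_zero, Fin.cons_succ]
    rw [← Finset.sum_mul_sum, ih, pow_succ]
    ring





private lemma inner_eq {d : ℕ} (x z : EuclideanSpace ℂ (Fin d)) :
    (inner ℂ x z : ℂ) = ∑ j, (starRingEnd ℂ) (x j) * z j := by
  rw [PiLp.inner_apply]
  exact Finset.sum_congr rfl fun j _ => RCLike.inner_apply' _ _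

private lemma unit_sum1 {d : ℕ} (x : EuclideanSpace ℂ (Fin d)) (hx : ‖x‖ = 1) :
    ∑ j, (starRingEnd ℂ) (x j) * x j = 1 := by
  have h := inner_self_eq_norm_sq_to_K (𝕜 := ℂ) x
  rw [inner_eq] at h
  rw [h, hx]
  norm_num

private lemma unit_sum2 {d : ℕ} (x : EuclideanSpace ℂ (Fin d)) (hx : ‖x‖ = 1) :
    ∑ j, x j * (starRingEnd ℂ) (x j) = 1 := by
  rw [← unit_sum1 x hx]
  exact Finset.sum_congr rfl fun j _ => mul_comm _ _




private lemma conj_sTT {d n : ℕ} (x : EuclideanSpace ℂ (Fin d)) (a b : Fin n → Fin d) :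
    (starRingEnd ℂ) (sTT n (fun j => x j) (a, b))
      = (∏ k, x (a k)) * ∏ k, (starRingEnd ℂ) (x (b k)) := by
  simp [sTT, map_mul, map_prod]

-- F1
private lemma sTT_mul_sTT {d n : ℕ} (x z : EuclideanSpace ℂ (Fin d)) :
    ∑ p : (Fin n → Fin d) × (Fin n → Fin d), (starRingEnd ℂ) (sTT n (fun j => x j) p) * sTT n (fun j => z j) p
      = ((‖(inner ℂ x z : ℂ)‖) ^ (2 * n) : ℝ) := by
  rw [Fintype.sum_prod_type]
  have key : ∀ a b : Fin n → Fin d, (starRingEnd ℂ) (sTT n (fun j => x j) (a, b)) * sTT n (fun j => z j) (a, b)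
      = (∏ k, (x (a k) * (starRingEnd ℂ) (z (a k))))
        * ∏ k, ((starRingEnd ℂ) (x (b k)) * z (b k)) := by
    intro a b
    rw [conj_sTT]
    simp only [sTT, Finset.prod_mul_distrib]
    ring
  simp only [key]
  rw [← Finset.sum_mul_sum,
    sum_prod_pow (fun j => x j * (starRingEnd ℂ) (z j)) n,
    sum_prod_pow (fun j => (starRingEnd ℂ) (x j) * z j) n]
  have h1 : ∑ j, x j * (starRingEnd ℂ) (z j) = (starRingEnd ℂ) (inner ℂ x z : ℂ) := by
    rw [inner_eq, map_sum]
    exact Finset.sum_congr rfl fun j _ => by simp [mul_comm]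
  have h2 : ∑ j, (starRingEnd ℂ) (x j) * z j = (inner ℂ x z : ℂ) := (inner_eq x z).symm
  rw [h1, h2, ← mul_pow]
  rw [mul_comm ((starRingEnd ℂ) _)]
  rw [Complex.mul_conj, Complex.normSq_eq_norm_sq]
  rw [pow_mul]
  push_cast
  ring






-- F3
private lemma sTT_PP {d n : ℕ} (x : EuclideanSpace ℂ (Fin d)) (hx : ‖x‖ = 1) :
    ∑ p : (Fin n → Fin d) × (Fin n → Fin d), (starRingEnd ℂ) (sTT n (fun j => x j) p) * (sPP d n p : ℂ)
      = (n.factorial : ℂ) := by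
  have step1 : ∀ p : (Fin n → Fin d) × (Fin n → Fin d),
      (starRingEnd ℂ) (sTT n (fun j => x j) p) * (sPP d n p : ℂ)
        = ∑ σ : Equiv.Perm (Fin n),
            if p.1 ∘ σ = p.2 then (starRingEnd ℂ) (sTT n (fun j => x j) p) else 0 := by
    intro p
    simp only [sPP]
    push_cast
    rw [Finset.mul_sum]
    exact Finset.sum_congr rfl fun σ _ => by rw [mul_ite, mul_one, mul_zero]
  simp only [step1]
  rw [Finset.sum_comm]
  have per : ∀ σ : Equiv.Perm (Fin n),
      (∑ p : (Fin n → Fin d) × (Fin n → Fin d),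
        if p.1 ∘ σ = p.2 then (starRingEnd ℂ) (sTT n (fun j => x j) p) else 0) = 1 := by
    intro σ
    rw [Fintype.sum_prod_type]
    have hb : ∀ a : Fin n → Fin d,
        (∑ b : Fin n → Fin d, if a ∘ σ = b then (starRingEnd ℂ) (sTT n (fun j => x j) (a, b)) else 0)
          = (starRingEnd ℂ) (sTT n (fun j => x j) (a, a ∘ σ)) := by
      intro a
      rw [Finset.sum_ite_eq]
      simp
    simp only [hb]
    have ha : ∀ a : Fin n → Fin d, (starRingEnd ℂ) (sTT n (fun j => x j) (a, a ∘ σ))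
        = ∏ k, (x (a k) * (starRingEnd ℂ) (x (a k))) := by
      intro a
      rw [conj_sTT]
      have hc : (∏ k, (starRingEnd ℂ) (x ((a ∘ σ) k))) = ∏ k, (starRingEnd ℂ) (x (a k)) :=
        Equiv.prod_comp σ (fun k => (starRingEnd ℂ) (x (a k)))
      rw [hc, ← Finset.prod_mul_distrib]
    simp only [ha]
    rw [sum_prod_pow (fun j => x j * (starRingEnd ℂ) (x j)) n, unit_sum2 x hx, one_pow]
  simp only [per]
  simp [Finset.card_univ, Fintype.card_perm, Fintype.card_fin]

-- F4
private lemma sPP_sq {d n : ℕ} :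
    ∑ p : (Fin n → Fin d) × (Fin n → Fin d), sPP d n p * sPP d n p
      = n.factorial * d.ascFactorial n := by
  have cond_iff : ∀ (a : Fin n → Fin d) (σ τ : Equiv.Perm (Fin n)),
      (a ∘ τ = a ∘ σ) ↔ (a ∘ ⇑(τ * σ⁻¹) = a) := by
    intro a σ τ
    constructor <;> intro h <;> funext k
    · have := congrFun h (σ⁻¹ k)
      simpa using this
    · have := congrFun h (σ k)
      simpa using this
  rw [Fintype.sum_prod_type]
  have perA : ∀ a : Fin n → Fin d,
      (∑ b : Fin n → Fin d, sPP d n (a, b) * sPP d n (a, b))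
        = ∑ _σ : Equiv.Perm (Fin n), ∑ π : Equiv.Perm (Fin n),
            if a ∘ π = a then 1 else 0 := by
    intro a
    have hbb : ∀ b : Fin n → Fin d, sPP d n (a, b) * sPP d n (a, b)
        = ∑ σ : Equiv.Perm (Fin n), ∑ τ : Equiv.Perm (Fin n),
            (if a ∘ σ = b then 1 else 0) * (if a ∘ τ = b then 1 else 0) := by
      intro b
      simp only [sPP]
      rw [Finset.sum_mul_sum]
    simp only [hbb]
    rw [Finset.sum_comm]
    refine Finset.sum_congr rfl fun σ _ => ?_
    rw [Finset.sum_comm]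
    have hcollapse : ∀ τ : Equiv.Perm (Fin n),
        (∑ b : Fin n → Fin d, (if a ∘ σ = b then 1 else 0) * (if a ∘ τ = b then 1 else 0))
          = if a ∘ τ = a ∘ σ then 1 else 0 := by
      intro τ
      have hsplit : ∀ b : Fin n → Fin d,
          (if a ∘ σ = b then 1 else 0) * (if a ∘ τ = b then (1:ℕ) else 0)
            = if a ∘ σ = b then (if a ∘ τ = b then 1 else 0) else 0 := fun b => by
        rw [ite_mul, one_mul, zero_mul]
      simp only [hsplit]
      rw [Finset.sum_ite_eq]
      simp
    simp only [hcollapse]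
    have hreix := Equiv.sum_comp (Equiv.mulRight σ)
      (fun ρ : Equiv.Perm (Fin n) => if a ∘ ⇑(ρ * σ⁻¹) = a then (1:ℕ) else 0)
    simp only [Equiv.coe_mulRight, mul_inv_cancel_right] at hreix
    calc (∑ τ : Equiv.Perm (Fin n), if a ∘ τ = a ∘ σ then (1:ℕ) else 0)
        = ∑ τ : Equiv.Perm (Fin n), if a ∘ ⇑(τ * σ⁻¹) = a then 1 else 0 :=
          Finset.sum_congr rfl fun τ _ => by rw [if_congr (cond_iff a σ τ) rfl rfl]
      _ = ∑ π : Equiv.Perm (Fin n), if a ∘ π = a then 1 else 0 := hreix.symm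
  simp only [perA]
  rw [Finset.sum_comm]
  have hfix : ∀ π : Equiv.Perm (Fin n),
      (∑ a : Fin n → Fin d, if a ∘ π = a then 1 else 0)
        = Fintype.card {a : Fin n → Fin d // a ∘ π = a} := by
    intro π
    rw [Fintype.card_subtype, Finset.card_filter]
  have inner_eq2 : ∀ _σ : Equiv.Perm (Fin n),
      (∑ a : Fin n → Fin d, ∑ π : Equiv.Perm (Fin n), if a ∘ π = a then 1 else 0)
        = d.ascFactorial n := by
    intro σ
    rw [Finset.sum_comm]
    rw [Finset.sum_congr rfl fun π _ => hfix π]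
    exact sum_fix d n
  rw [Finset.sum_congr rfl fun σ _ => inner_eq2 σ]
  simp [Finset.card_univ, Fintype.card_perm, Fintype.card_fin]






private lemma sPP_card {d n : ℕ} (u v : Fin n → Fin d) :
    sPP d n (u, v) = Fintype.card {σ : Equiv.Perm (Fin n) // u ∘ σ = v} := by
  rw [Fintype.card_subtype, Finset.card_filter]
  rfl

-- F5 for sPP
private lemma sPP_ptr {d s : ℕ} (a b : Fin s → Fin d) :
    ∑ c : Fin d, sPP d (s+1) (Fin.cons c a, Fin.cons c b) = (d + s) * sPP d s (a, b) := by
  have h1 : ∀ c : Fin d, sPP d (s+1) (Fin.cons c a, Fin.cons c b)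
      = Fintype.card {p : Fin (s+1) // (Fin.cons c a : Fin (s+1) → Fin d) p = c}
        * Fintype.card {τ : Equiv.Perm (Fin s) // a ∘ τ = b} := by
    intro c
    rw [sPP_card, pcnt_cons]
  simp only [h1]
  rw [← Finset.sum_mul, sum_card_cons, sPP_card]

-- F5 for sTT
private lemma sTT_ptr {d s : ℕ} (y : Fin d → ℂ) (hy : ∑ j, (starRingEnd ℂ) (y j) * y j = 1)
    (a b : Fin s → Fin d) :
    ∑ c : Fin d, sTT (s+1) y (Fin.cons c a, Fin.cons c b) = sTT s y (a, b) := by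
  have h1 : ∀ c : Fin d, sTT (s+1) y (Fin.cons c a, Fin.cons c b)
      = ((starRingEnd ℂ) (y c) * y c) * sTT s y (a, b) := by
    intro c
    simp only [sTT, Fin.prod_univ_succ, Fin.cons_zero, Fin.cons_succ]
    ring
  simp only [h1]
  rw [← Finset.sum_mul, hy, one_mul]

-- (G)
private lemma design_sum_eq {d n : ℕ} {ι : Type*} [Fintype ι]
    (x : ι → EuclideanSpace ℂ (Fin d)) (w : ι → ℝ) :
    ((∑ i, ∑ j, w i * w j * ‖(inner ℂ (x i) (x j) : ℂ)‖ ^ (2*n) : ℝ) : ℂ)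
      = ∑ p : (Fin n → Fin d) × (Fin n → Fin d),
          (starRingEnd ℂ) (∑ i, (w i : ℂ) * sTT n (fun c => x i c) p)
            * (∑ i, (w i : ℂ) * sTT n (fun c => x i c) p) := by
  have step : ∀ p : (Fin n → Fin d) × (Fin n → Fin d),
      (starRingEnd ℂ) (∑ i, (w i : ℂ) * sTT n (fun c => x i c) p)
          * (∑ i, (w i : ℂ) * sTT n (fun c => x i c) p)
        = ∑ i, ∑ j, ((w i : ℂ) * (w j : ℂ))
            * ((starRingEnd ℂ) (sTT n (fun c => x i c) p) * sTT n (fun c => x j c) p) := by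
    intro p
    rw [map_sum, Finset.sum_mul_sum]
    refine Finset.sum_congr rfl fun i _ => Finset.sum_congr rfl fun j _ => ?_
    rw [map_mul, Complex.conj_ofReal]
    ring
  conv_rhs => rw [Finset.sum_congr rfl fun p _ => step p]
  conv_rhs => rw [Finset.sum_comm]
  have inner_swap : ∀ i : ι,
      (∑ p : (Fin n → Fin d) × (Fin n → Fin d), ∑ j, ((w i : ℂ) * (w j : ℂ))
          * ((starRingEnd ℂ) (sTT n (fun c => x i c) p) * sTT n (fun c => x j c) p))
        = ∑ j, ((w i : ℂ) * (w j : ℂ))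
            * ((‖(inner ℂ (x i) (x j) : ℂ)‖) ^ (2 * n) : ℝ) := by
    intro i
    rw [Finset.sum_comm]
    refine Finset.sum_congr rfl fun j _ => ?_
    rw [← Finset.mul_sum, sTT_mul_sTT]
  conv_rhs => rw [Finset.sum_congr rfl fun i _ => inner_swap i]
  push_cast
  exact Finset.sum_congr rfl fun i _ => Finset.sum_congr rfl fun j _ => by ring

-- weighted version of sTT_PP
private lemma S_PP {d n : ℕ} {ι : Type*} [Fintype ι]
    (x : ι → EuclideanSpace ℂ (Fin d)) (w : ι → ℝ)
    (hx : ∀ i, ‖x i‖ = 1) (hw : ∑ i, w i = 1) :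
    ∑ p : (Fin n → Fin d) × (Fin n → Fin d),
      (starRingEnd ℂ) (∑ i, (w i : ℂ) * sTT n (fun c => x i c) p) * (sPP d n p : ℂ)
      = (n.factorial : ℂ) := by
  have step : ∀ p : (Fin n → Fin d) × (Fin n → Fin d),
      (starRingEnd ℂ) (∑ i, (w i : ℂ) * sTT n (fun c => x i c) p) * (sPP d n p : ℂ)
        = ∑ i, (w i : ℂ) * ((starRingEnd ℂ) (sTT n (fun c => x i c) p) * (sPP d n p : ℂ)) := by
    intro p
    rw [map_sum, Finset.sum_mul]
    refine Finset.sum_congr rfl fun i _ => ?_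
    rw [map_mul, Complex.conj_ofReal]
    ring
  rw [Finset.sum_congr rfl fun p _ => step p, Finset.sum_comm]
  have hin : ∀ i, (∑ p : (Fin n → Fin d) × (Fin n → Fin d),
      (w i : ℂ) * ((starRingEnd ℂ) (sTT n (fun c => x i c) p) * (sPP d n p : ℂ)))
        = (w i : ℂ) * (n.factorial : ℂ) := by
    intro i
    rw [← Finset.mul_sum, sTT_PP (x i) (hx i)]
  rw [Finset.sum_congr rfl fun i _ => hin i, ← Finset.sum_mul]
  have : (∑ i, (w i : ℂ)) = 1 := by
    rw [← Complex.ofReal_sum, hw, Complex.ofReal_one]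
  rw [this, one_mul]

private lemma design_step {d s : ℕ} (hd : 1 ≤ d) {ι : Type*} [Fintype ι]
    (x : ι → EuclideanSpace ℂ (Fin d)) (w : ι → ℝ)
    (h : IsWeightedDesign d (s+1) x w) : IsWeightedDesign d s x w := by
  obtain ⟨hx, hw, hF⟩ := h
  refine ⟨hx, hw, ?_⟩
  classical
  set K : ℕ := Nat.choose (s + d) (s + 1) with hKdef
  have hKpos : 0 < K := Nat.choose_pos (by omega)
  set m : ℕ := (s+1).factorial * K with hmdef
  have hmpos : 0 < m := Nat.mul_pos (Nat.factorial_pos _) hKpos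
  have hconst : designConst d (s+1) = 1 / (K : ℝ) := by
    have harg : s + 1 + d - 1 = s + d := by omega
    rw [designConst, harg]
  have h1 : (∑ p : (Fin (s+1) → Fin d) × (Fin (s+1) → Fin d),
      (starRingEnd ℂ) (∑ i, (w i : ℂ) * sTT (s+1) (fun c => x i c) p)
        * (∑ i, (w i : ℂ) * sTT (s+1) (fun c => x i c) p)) = ((1 / (K:ℝ) : ℝ) : ℂ) := by
    rw [← design_sum_eq x w, hF, hconst]
  have h2 := S_PP (n := s+1) x w hx hw
  have h3 : (∑ p : (Fin (s+1) → Fin d) × (Fin (s+1) → Fin d),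
      (sPP d (s+1) p : ℂ) * (∑ i, (w i : ℂ) * sTT (s+1) (fun c => x i c) p))
        = (((s+1).factorial : ℕ) : ℂ) := by
    have hc := congrArg (starRingEnd ℂ) h2
    rw [map_sum] at hc
    simp only [map_mul, Complex.conj_conj, map_natCast] at hc
    rw [← hc]
    exact Finset.sum_congr rfl fun p _ => mul_comm _ _
  have h4 : (∑ p : (Fin (s+1) → Fin d) × (Fin (s+1) → Fin d),
      (sPP d (s+1) p : ℂ) * (sPP d (s+1) p : ℂ)) = (((s+1).factorial * d.ascFactorial (s+1) : ℕ) : ℂ) := by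
    exact_mod_cast congrArg (Nat.cast : ℕ → ℂ) (sPP_sq (d := d) (n := s+1))
  have hasc : d.ascFactorial (s+1) = (s+1).factorial * K := by
    have := Nat.ascFactorial_eq_factorial_mul_choose' d (s+1)
    have harg : d + (s+1) - 1 = s + d := by omega
    rw [harg] at this
    rw [this, hKdef]
  have hK0 : (K : ℂ) ≠ 0 := by exact_mod_cast hKpos.ne'
  have hDD : (∑ p : (Fin (s+1) → Fin d) × (Fin (s+1) → Fin d),
      (starRingEnd ℂ) ((m:ℂ) * (∑ i, (w i : ℂ) * sTT (s+1) (fun c => x i c) p) - (sPP d (s+1) p : ℂ))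
        * ((m:ℂ) * (∑ i, (w i : ℂ) * sTT (s+1) (fun c => x i c) p) - (sPP d (s+1) p : ℂ))) = 0 := by
    have expand : ∀ p : (Fin (s+1) → Fin d) × (Fin (s+1) → Fin d),
        (starRingEnd ℂ) ((m:ℂ) * (∑ i, (w i : ℂ) * sTT (s+1) (fun c => x i c) p) - (sPP d (s+1) p : ℂ))
          * ((m:ℂ) * (∑ i, (w i : ℂ) * sTT (s+1) (fun c => x i c) p) - (sPP d (s+1) p : ℂ))
        = (m:ℂ)^2 * ((starRingEnd ℂ) (∑ i, (w i : ℂ) * sTT (s+1) (fun c => x i c) p)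
              * (∑ i, (w i : ℂ) * sTT (s+1) (fun c => x i c) p))
          - (m:ℂ) * ((starRingEnd ℂ) (∑ i, (w i : ℂ) * sTT (s+1) (fun c => x i c) p) * (sPP d (s+1) p : ℂ))
          - (m:ℂ) * ((sPP d (s+1) p : ℂ) * (∑ i, (w i : ℂ) * sTT (s+1) (fun c => x i c) p))
          + (sPP d (s+1) p : ℂ) * (sPP d (s+1) p : ℂ) := by
      intro p
      rw [map_sub, map_mul, map_natCast, map_natCast]
      ring
    rw [Finset.sum_congr rfl fun p _ => expand p]
    rw [Finset.sum_add_distrib, Finset.sum_sub_distrib, Finset.sum_sub_distrib,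
      ← Finset.mul_sum, ← Finset.mul_sum, ← Finset.mul_sum]
    rw [h1, h2, h3, h4, hasc, hmdef]
    push_cast
    field_simp
    ring
  have hD0 : ∀ p : (Fin (s+1) → Fin d) × (Fin (s+1) → Fin d),
      (m:ℂ) * (∑ i, (w i : ℂ) * sTT (s+1) (fun c => x i c) p) = (sPP d (s+1) p : ℂ) := by
    have hnorm : ∀ p : (Fin (s+1) → Fin d) × (Fin (s+1) → Fin d),
        (starRingEnd ℂ) ((m:ℂ) * (∑ i, (w i : ℂ) * sTT (s+1) (fun c => x i c) p) - (sPP d (s+1) p : ℂ))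
          * ((m:ℂ) * (∑ i, (w i : ℂ) * sTT (s+1) (fun c => x i c) p) - (sPP d (s+1) p : ℂ))
        = (Complex.normSq ((m:ℂ) * (∑ i, (w i : ℂ) * sTT (s+1) (fun c => x i c) p) - (sPP d (s+1) p : ℂ)) : ℝ) := by
      intro p
      rw [mul_comm, Complex.mul_conj]
    rw [Finset.sum_congr rfl fun p _ => hnorm p] at hDD
    rw [← Complex.ofReal_sum, Complex.ofReal_eq_zero] at hDD
    have hzero := (Finset.sum_eq_zero_iff_of_nonneg
      (fun p _ => Complex.normSq_nonneg _)).1 hDD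
    intro p
    have := hzero p (Finset.mem_univ p)
    have := Complex.normSq_eq_zero.1 this
    linear_combination this
  -- partial trace step
  have hptr : ∀ a b : Fin s → Fin d,
      (m:ℂ) * (∑ i, (w i : ℂ) * sTT s (fun c => x i c) (a, b))
        = ((d + s : ℕ) : ℂ) * (sPP d s (a, b) : ℂ) := by
    intro a b
    have hL : (∑ c : Fin d, ∑ i, (w i : ℂ) * sTT (s+1) (fun c' => x i c') (Fin.cons c a, Fin.cons c b))
        = ∑ i, (w i : ℂ) * sTT s (fun c => x i c) (a, b) := by
      rw [Finset.sum_comm]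
      refine Finset.sum_congr rfl fun i _ => ?_
      rw [← Finset.mul_sum, sTT_ptr (fun c => x i c) (unit_sum1 (x i) (hx i)) a b]
    have hR : (∑ c : Fin d, (sPP d (s+1) (Fin.cons c a, Fin.cons c b) : ℂ))
        = ((d + s : ℕ) : ℂ) * (sPP d s (a, b) : ℂ) := by
      exact_mod_cast congrArg (Nat.cast : ℕ → ℂ) (sPP_ptr a b)
    calc (m:ℂ) * (∑ i, (w i : ℂ) * sTT s (fun c => x i c) (a, b))
        = ∑ c : Fin d, (m:ℂ) * (∑ i, (w i : ℂ) * sTT (s+1) (fun c' => x i c') (Fin.cons c a, Fin.cons c b)) := by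
          rw [← Finset.mul_sum, hL]
      _ = ∑ c : Fin d, (sPP d (s+1) (Fin.cons c a, Fin.cons c b) : ℂ) :=
          Finset.sum_congr rfl fun c _ => hD0 (Fin.cons c a, Fin.cons c b)
      _ = ((d + s : ℕ) : ℂ) * (sPP d s (a, b) : ℂ) := hR
  -- conclude at level s
  have hGs := design_sum_eq (n := s) x w
  have hSsPP := S_PP (n := s) x w hx hw
  have key : ((∑ i, ∑ j, w i * w j * ‖(inner ℂ (x i) (x j) : ℂ)‖ ^ (2*s) : ℝ) : ℂ) * (m:ℂ)
      = ((d + s : ℕ) : ℂ) * ((s.factorial : ℕ) : ℂ) := by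
    rw [hGs, Finset.sum_mul]
    have hterm : ∀ p : (Fin s → Fin d) × (Fin s → Fin d),
        ((starRingEnd ℂ) (∑ i, (w i : ℂ) * sTT s (fun c => x i c) p)
          * (∑ i, (w i : ℂ) * sTT s (fun c => x i c) p)) * (m:ℂ)
        = ((d + s : ℕ) : ℂ) * ((starRingEnd ℂ) (∑ i, (w i : ℂ) * sTT s (fun c => x i c) p)
            * (sPP d s p : ℂ)) := by
      intro p
      have := hptr p.1 p.2
      rw [Prod.mk.eta] at this
      calc ((starRingEnd ℂ) (∑ i, (w i : ℂ) * sTT s (fun c => x i c) p)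
            * (∑ i, (w i : ℂ) * sTT s (fun c => x i c) p)) * (m:ℂ)
          = (starRingEnd ℂ) (∑ i, (w i : ℂ) * sTT s (fun c => x i c) p)
              * ((m:ℂ) * (∑ i, (w i : ℂ) * sTT s (fun c => x i c) p)) := by ring
        _ = (starRingEnd ℂ) (∑ i, (w i : ℂ) * sTT s (fun c => x i c) p)
              * (((d + s : ℕ) : ℂ) * (sPP d s p : ℂ)) := by rw [this]
        _ = ((d + s : ℕ) : ℂ) * ((starRingEnd ℂ) (∑ i, (w i : ℂ) * sTT s (fun c => x i c) p)
              * (sPP d s p : ℂ)) := by ring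
    rw [Finset.sum_congr rfl fun p _ => hterm p, ← Finset.mul_sum, hSsPP]
  -- now real arithmetic
  obtain ⟨e, rfl⟩ : ∃ e, d = e + 1 := ⟨d - 1, by omega⟩
  have keyR : (∑ i, ∑ j, w i * w j * ‖(inner ℂ (x i) (x j) : ℂ)‖ ^ (2*s)) * (m:ℝ)
      = (((e + 1) + s) * s.factorial : ℕ) := by
    have : ((((∑ i, ∑ j, w i * w j * ‖(inner ℂ (x i) (x j) : ℂ)‖ ^ (2*s)) * (m:ℝ)) : ℝ) : ℂ)
        = (((((e + 1) + s) * s.factorial : ℕ) : ℝ) : ℂ) := by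
      push_cast
      push_cast at key
      linear_combination key
    exact_mod_cast this
  have hnatid : ((e + 1) + s) * s.factorial * Nat.choose (s + e) s = m := by
    rw [hmdef, hKdef]
    have hh := Nat.add_one_mul_choose_eq (s + e) s
    have h1' : (e + 1) + s = (s + e) + 1 := by omega
    have h2' : s + (e + 1) = (s + e) + 1 := by omega
    rw [h1', h2', Nat.factorial_succ]
    calc ((s + e) + 1) * s.factorial * Nat.choose (s + e) s
        = (((s+e) + 1) * Nat.choose (s + e) s) * s.factorial := by ring
      _ = (Nat.choose ((s+e)+1) (s+1) * (s+1)) * s.factorial := by rw [hh]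
      _ = (s + 1) * s.factorial * Nat.choose ((s+e)+1) (s+1) := by ring
  have hC0 : ((Nat.choose (s + e) s : ℝ)) ≠ 0 := by
    exact_mod_cast (Nat.choose_pos (by omega : s ≤ s + e)).ne'
  have harg2 : s + (e + 1) - 1 = s + e := by omega
  rw [designConst, harg2]
  have hm0 : (m:ℝ) ≠ 0 := by exact_mod_cast hmpos.ne'
  have hmr : (m:ℝ) = ((e + 1) + s) * s.factorial * Nat.choose (s + e) s := by
    exact_mod_cast congrArg (Nat.cast : ℕ → ℝ) hnatid.symm
  rw [hmr] at keyR
  rw [eq_div_iff hC0]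
  have hA : (((e + 1) + s : ℝ)) * (s.factorial : ℝ) ≠ 0 := by positivity
  apply mul_right_cancel₀ hA
  push_cast at keyR ⊢
  linear_combination keyR

private lemma design_down {d : ℕ} (hd : 1 ≤ d) {ι : Type*} [Fintype ι]
    (x : ι → EuclideanSpace ℂ (Fin d)) (w : ι → ℝ) (r : ℕ) :
    ∀ n : ℕ, IsWeightedDesign d (r + n) x w → IsWeightedDesign d r x w := by
  intro n
  induction n with
  | zero => exact id
  | succ n ih => exact fun h => ih (design_step hd x w h)

end Helpers

/-- A weighted spherical `(t,t)`-design is a weighted spherical `(r,r)`-design for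
every `1 ≤ r ≤ t`. -/
theorem weighted_design_of_le (d t : ℕ) (hd : 1 ≤ d) (ht : 1 ≤ t)
    {ι : Type*} [Fintype ι]
    (x : ι → EuclideanSpace ℂ (Fin d)) (w : ι → ℝ)
    (h : IsWeightedDesign d t x w) (r : ℕ) (hr1 : 1 ≤ r) (hrt : r ≤ t) :
    ∑ i, ∑ j, w i * w j * ‖(inner ℂ (x i) (x j) : ℂ)‖ ^ (2 * r) =
      designConst d r := by
  obtain ⟨n, hn⟩ : ∃ n, t = r + n := ⟨t - r, by omega⟩
  subst hn
  exact (design_down hd x w r n h).2.2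
end

section
/- Let G be a finite group acting on ℂ^d by a unitary representation ρ, let t ≥ 1, and define p_G^{(t)}(x,y) := (1/|G|) ∑_{g∈G} |⟨x, ρ(g)y⟩|^{2t} and f_G^{(t)}(x,y) := p_G^{(t)}(x,x)·p_G^{(t)}(y,y) − (p_G^{(t)}(x,y))². Let x, y ∈ ℂ^d be nonzero, write x̂ = x/‖x‖, ŷ = y/‖y‖, and suppose f_G^{(t)}(x̂,ŷ) ≠ 0 and f_G^{(t)}(x̂,ŷ) = c_t(ℂ^d)·(p_G^{(t)}(x̂,x̂) + p_G^{(t)}(ŷ,ŷ) − 2·p_G^{(t)}(x̂,ŷ)). Then there exists a unique real number α such that α²·p_G^{(t)}(x̂,x̂) + (1−α)²·p_G^{(t)}(ŷ,ŷ) + 2α(1−α)·p_G^{(t)}(x̂,ŷ) = c_t(ℂ^d); equivalently, the union of the orbits of x̂ and ŷ, with constant weight α/|G| on each point of the orbit of x̂ and constant weight (1−α)/|G| on each point of the orbit of ŷ, is a weighted spherical (t,t)-design for a unique α. -/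
open scoped BigOperators

/-- Given a unitary representation `ρ` of a finite group `G` on `ℂ^d` and nonzero
vectors `x, y` with unit normalisations `x̂, ŷ`, if `f_G^{(t)}(x̂,ŷ) ≠ 0` and
`f_G^{(t)}(x̂,ŷ) = c_t(ℂ^d)(p(x̂,x̂) + p(ŷ,ŷ) - 2p(x̂,ŷ))`, then there is a unique
`α ∈ ℝ` for which the union of the orbits of `x̂` and `ŷ`, weighted by `α/|G|` and
`(1-α)/|G|`, is a weighted spherical `(t,t)`-design, i.e. a unique `α` with
`α² p(x̂,x̂) + (1-α)² p(ŷ,ŷ) + 2α(1-α) p(x̂,ŷ) = c_t(ℂ^d)`. -/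
theorem unique_weighting_for_orbit_pair (d t : ℕ) (hd : 1 ≤ d) (ht : 1 ≤ t)
    {G : Type*} [Group G] [Fintype G]
    (ρ : G →* (EuclideanSpace ℂ (Fin d) ≃ₗᵢ[ℂ] EuclideanSpace ℂ (Fin d)))
    (p : EuclideanSpace ℂ (Fin d) → EuclideanSpace ℂ (Fin d) → ℝ)
    (hp : ∀ u v, p u v =
      (1 / (Fintype.card G : ℝ)) * ∑ g : G, ‖(inner ℂ u (ρ g v) : ℂ)‖ ^ (2 * t))
    (f : EuclideanSpace ℂ (Fin d) → EuclideanSpace ℂ (Fin d) → ℝ)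
    (hf : ∀ u v, f u v = p u u * p v v - (p u v) ^ 2)
    (x y : EuclideanSpace ℂ (Fin d)) (hx : x ≠ 0) (hy : y ≠ 0)
    (xh yh : EuclideanSpace ℂ (Fin d))
    (hxh : xh = ((‖x‖ : ℂ))⁻¹ • x) (hyh : yh = ((‖y‖ : ℂ))⁻¹ • y)
    (hne : f xh yh ≠ 0)
    (hdisc : f xh yh = designConst d t * (p xh xh + p yh yh - 2 * p xh yh)) :
    ∃! α : ℝ,
      α ^ 2 * p xh xh + (1 - α) ^ 2 * p yh yh + 2 * α * (1 - α) * p xh yh =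
        designConst d t := by
  rw [hf] at hne hdisc
  set a := p xh xh
  set b := p yh yh
  set c := p xh yh
  set K := designConst d t
  have hS : a + b - 2 * c ≠ 0 := by
    intro h
    exact hne (by rw [hdisc, h, mul_zero])
  set S := a + b - 2 * c with hSdef
  have key : ∀ β : ℝ, β * S = b - c →
      β ^ 2 * a + (1 - β) ^ 2 * b + 2 * β * (1 - β) * c = K := by
    intro β hβ
    have h2 : S ^ 2 * (β ^ 2 * a + (1 - β) ^ 2 * b + 2 * β * (1 - β) * c) = S ^ 2 * K := by
      linear_combination (2*a*(b-c) - 2*b*(a-c) + 2*c*(a-b) + S*(β*S - (b-c))) * hβ + S * hdisc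
    exact mul_left_cancel₀ (pow_ne_zero 2 hS) h2
  refine ⟨(b - c) / S, key _ (div_mul_cancel₀ _ hS), ?_⟩
  intro β hβ
  have h0 : S * (β * S - (b - c)) ^ 2 = 0 := by
    linear_combination (S ^ 2) * hβ - S * hdisc
  have h1 : (β * S - (b - c)) ^ 2 = 0 := (mul_eq_zero.mp h0).resolve_left hS
  have h5 := pow_eq_zero_iff (n := 2) (by norm_num) |>.mp h1
  have h6 : β * S = b - c := by linarith
  rw [eq_div_iff hS]
  exact h6
end

section
/- Let G be a finite group acting on ℂ^d by a unitary representation ρ, let t ≥ 1, and define p_G^{(t)}(x,y) := (1/|G|) ∑_{g∈G} |⟨x, ρ(g)y⟩|^{2t} and f_G^{(t)}(x,y) := p_G^{(t)}(x,x)·p_G^{(t)}(y,y) − (p_G^{(t)}(x,y))². Then the following are equivalent: (i) f_G^{(t)} is not identically zero, and for all nonzero x, y ∈ ℂ^d with f_G^{(t)}(x,y) ≠ 0 there exists a unique real α such that α²·p_G^{(t)}(x̂,x̂) + (1−α)²·p_G^{(t)}(ŷ,ŷ) + 2α(1−α)·p_G^{(t)}(x̂,ŷ) = c_t(ℂ^d),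 where x̂ = x/‖x‖ and ŷ = y/‖y‖; (ii) f_G^{(t)} is not identically zero, and for all x, y ∈ ℂ^d, f_G^{(t)}(x,y) = c_t(ℂ^d)·(‖y‖^{4t}·p_G^{(t)}(x,x) + ‖x‖^{4t}·p_G^{(t)}(y,y) − 2‖x‖^{2t}‖y‖^{2t}·p_G^{(t)}(x,y)). -/
open scoped BigOperators

namespace TwoOrbitsAux

open scoped ComplexConjugate

def IsPolyFun (F : ℝ → ℝ) : Prop := ∃ P : Polynomial ℝ, ∀ s, F s = Polynomial.eval s P

lemma IsPolyFun.const (c : ℝ) : IsPolyFun (fun _ => c) := ⟨Polynomial.C c, by simp⟩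

lemma IsPolyFun.add {F G : ℝ → ℝ} (hF : IsPolyFun F) (hG : IsPolyFun G) :
    IsPolyFun (fun s => F s + G s) := by
  obtain ⟨P, hP⟩ := hF; obtain ⟨Q, hQ⟩ := hG
  exact ⟨P + Q, fun s => by simp [hP, hQ]⟩

lemma IsPolyFun.sub {F G : ℝ → ℝ} (hF : IsPolyFun F) (hG : IsPolyFun G) :
    IsPolyFun (fun s => F s - G s) := by
  obtain ⟨P, hP⟩ := hF; obtain ⟨Q, hQ⟩ := hG
  exact ⟨P - Q, fun s => by simp [hP, hQ]⟩

lemma IsPolyFun.mul {F G : ℝ → ℝ} (hF : IsPolyFun F) (hG : IsPolyFun G) :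
    IsPolyFun (fun s => F s * G s) := by
  obtain ⟨P, hP⟩ := hF; obtain ⟨Q, hQ⟩ := hG
  exact ⟨P * Q, fun s => by simp [hP, hQ]⟩

lemma IsPolyFun.pow {F : ℝ → ℝ} (hF : IsPolyFun F) (n : ℕ) :
    IsPolyFun (fun s => F s ^ n) := by
  obtain ⟨P, hP⟩ := hF
  exact ⟨P ^ n, fun s => by simp [hP]⟩

lemma IsPolyFun.sum {ι : Type*} (s : Finset ι) (F : ι → ℝ → ℝ)
    (h : ∀ i ∈ s, IsPolyFun (F i)) : IsPolyFun (fun x => ∑ i ∈ s, F i x) := by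
  classical
  induction s using Finset.induction with
  | empty => simpa using IsPolyFun.const 0
  | insert a s hnot ih =>
    simp only [Finset.sum_insert hnot]
    exact (h a (by simp)).add (ih fun i hi => h i (by simp [hi]))

lemma isPolyFun_re_quad (c0 c1 c2 : ℂ) :
    IsPolyFun (fun s => (c0 + c1 * (s : ℂ) + c2 * (s : ℂ) ^ 2).re) := by
  refine ⟨Polynomial.C c0.re + Polynomial.C c1.re * Polynomial.X +
    Polynomial.C c2.re * Polynomial.X ^ 2, fun s => ?_⟩
  have h2 : ((s : ℂ) ^ 2) = ((s ^ 2 : ℝ) : ℂ) := by push_cast; ring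
  simp only [h2, Complex.add_re, Complex.mul_re, Complex.ofReal_re, Complex.ofReal_im,
    Polynomial.eval_add, Polynomial.eval_mul, Polynomial.eval_C, Polynomial.eval_X,
    Polynomial.eval_pow]
  ring

lemma isPolyFun_im_quad (c0 c1 c2 : ℂ) :
    IsPolyFun (fun s => (c0 + c1 * (s : ℂ) + c2 * (s : ℂ) ^ 2).im) := by
  refine ⟨Polynomial.C c0.im + Polynomial.C c1.im * Polynomial.X +
    Polynomial.C c2.im * Polynomial.X ^ 2, fun s => ?_⟩
  have h2 : ((s : ℂ) ^ 2) = ((s ^ 2 : ℝ) : ℂ) := by push_cast; ring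
  simp only [h2, Complex.add_im, Complex.mul_im, Complex.ofReal_re, Complex.ofReal_im,
    Polynomial.eval_add, Polynomial.eval_mul, Polynomial.eval_C, Polynomial.eval_X,
    Polynomial.eval_pow]
  ring

lemma isPolyFun_abs_quad (c0 c1 c2 : ℂ) (m : ℕ) :
    IsPolyFun (fun s => ‖c0 + c1 * (s : ℂ) + c2 * (s : ℂ) ^ 2‖ ^ (2 * m)) := by
  have h : (fun s : ℝ => ‖c0 + c1 * (s : ℂ) + c2 * (s : ℂ) ^ 2‖ ^ (2 * m))
      = fun s : ℝ => ((c0 + c1 * (s : ℂ) + c2 * (s : ℂ) ^ 2).re ^ 2 +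
          (c0 + c1 * (s : ℂ) + c2 * (s : ℂ) ^ 2).im ^ 2) ^ m := by
    funext s
    rw [pow_mul, Complex.sq_norm, Complex.normSq_apply]
    ring_nf
  rw [h]
  exact (((isPolyFun_re_quad c0 c1 c2).pow 2).add ((isPolyFun_im_quad c0 c1 c2).pow 2)).pow m

lemma polyfun_zero {F H : ℝ → ℝ} (hF : IsPolyFun F) (hH : IsPolyFun H)
    (hex : ∃ s, F s ≠ 0) (hz : ∀ s, F s ≠ 0 → H s = 0) : ∀ s, H s = 0 := by
  obtain ⟨P, hP⟩ := hF; obtain ⟨Q, hQ⟩ := hH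
  obtain ⟨s₀, hs₀⟩ := hex
  have hPne : P ≠ 0 := by rintro rfl; exact hs₀ (by simp [hP])
  have hfin : {s : ℝ | P.IsRoot s}.Finite := Polynomial.finite_setOf_isRoot hPne
  have hsub : {s : ℝ | P.IsRoot s}ᶜ ⊆ {s : ℝ | Q.IsRoot s} := by
    intro s hs
    have : F s ≠ 0 := by
      rw [hP]; exact fun h => hs h
    have := hz s this
    have h0 : Polynomial.eval s Q = 0 := by rw [← hQ]; exact this
    exact h0
  have hinf : {s : ℝ | Q.IsRoot s}.Infinite := (hfin.infinite_compl).mono hsub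
  have : Q = 0 := Polynomial.eq_zero_of_infinite_isRoot Q hinf
  intro s; rw [hQ, this]; simp


open scoped ComplexConjugate

noncomputable def phi (d t : ℕ) (x : EuclideanSpace ℂ (Fin d)) :
    EuclideanSpace ℂ ((Fin t → Fin d) × (Fin t → Fin d)) :=
  WithLp.toLp 2 (fun ij : (Fin t → Fin d) × (Fin t → Fin d) => (∏ k, x (ij.1 k)) * ∏ k, conj (x (ij.2 k)))

lemma sum_pow_aux (d t : ℕ) (f : Fin d → ℂ) :
    (∑ i : Fin t → Fin d, ∏ k : Fin t, f (i k)) = (∑ a : Fin d, f a) ^ t := by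
  calc (∑ i : Fin t → Fin d, ∏ k : Fin t, f (i k))
      = ∑ i ∈ Fintype.piFinset (fun _ : Fin t => (Finset.univ : Finset (Fin d))),
          ∏ k : Fin t, f (i k) := by rw [Fintype.piFinset_univ]
    _ = ∏ _k : Fin t, (∑ a : Fin d, f a) :=
        (Finset.prod_univ_sum (fun _ => Finset.univ) (fun _ a => f a)).symm
    _ = (∑ a : Fin d, f a) ^ t := by simp [Finset.prod_const]

lemma inner_phi (d t : ℕ) (u v : EuclideanSpace ℂ (Fin d)) :
    (inner ℂ (phi d t u) (phi d t v) : ℂ) = ((‖(inner ℂ u v : ℂ)‖ ^ (2 * t) : ℝ) : ℂ) := by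
  have lhs_eq : (inner ℂ (phi d t u) (phi d t v) : ℂ)
      = (∑ a : Fin d, conj (u a) * v a) ^ t * (∑ a : Fin d, u a * conj (v a)) ^ t := by
    rw [PiLp.inner_apply]
    simp only [RCLike.inner_apply', phi, PiLp.toLp_apply]
    rw [Fintype.sum_prod_type]
    rw [← sum_pow_aux d t (fun a => conj (u a) * v a),
        ← sum_pow_aux d t (fun a => u a * conj (v a))]
    rw [Finset.sum_mul_sum]
    apply Finset.sum_congr rfl; intro i _
    apply Finset.sum_congr rfl; intro j _
    simp only [map_mul, map_prod, Complex.conj_conj, Finset.prod_mul_distrib]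
    ring
  rw [lhs_eq]
  have hinner : (inner ℂ u v : ℂ) = ∑ a : Fin d, conj (u a) * v a := by rw [PiLp.inner_apply]; simp only [RCLike.inner_apply']
  have hconj : (∑ a : Fin d, u a * conj (v a)) = conj (inner ℂ u v : ℂ) := by
    rw [hinner, map_sum]
    apply Finset.sum_congr rfl; intro a _
    simp [mul_comm]
  rw [← hinner, hconj, ← mul_pow, Complex.mul_conj, ← Complex.sq_norm]
  push_cast
  ring



set_option maxHeartbeats 1000000 in
lemma cs_lemma (d t : ℕ) {G : Type*} [Group G] [Fintype G]
    (ρ : G →* (EuclideanSpace ℂ (Fin d) ≃ₗᵢ[ℂ] EuclideanSpace ℂ (Fin d)))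
    (u v : EuclideanSpace ℂ (Fin d)) :
    (∑ g : G, ‖(inner ℂ u (ρ g v) : ℂ)‖ ^ (2 * t)) ^ 2 ≤
      (∑ g : G, ‖(inner ℂ u (ρ g u) : ℂ)‖ ^ (2 * t)) *
      (∑ g : G, ‖(inner ℂ v (ρ g v) : ℂ)‖ ^ (2 * t)) := by
  classical
  set S : EuclideanSpace ℂ (Fin d) → EuclideanSpace ℂ (Fin d) → ℝ :=
    fun w z => ∑ g : G, ‖(inner ℂ w (ρ g z) : ℂ)‖ ^ (2 * t) with hS
  set A : EuclideanSpace ℂ (Fin d) → EuclideanSpace ℂ ((Fin t → Fin d) × (Fin t → Fin d)) :=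
    fun w => ∑ g : G, phi d t (ρ g w) with hA
  have hSnn : ∀ w z, 0 ≤ S w z := by
    intro w z; apply Finset.sum_nonneg; intro g _; positivity
  have hterm : ∀ (w z : EuclideanSpace ℂ (Fin d)) (g h : G),
      (inner ℂ (phi d t (ρ g w)) (phi d t (ρ h z)) : ℂ)
        = ((‖(inner ℂ w (ρ (g⁻¹ * h) z) : ℂ)‖ ^ (2 * t) : ℝ) : ℂ) := by
    intro w z g h
    have h1 : ρ h z = ρ g (ρ (g⁻¹ * h) z) := by
      have h2 : ρ g (ρ (g⁻¹ * h) z) = (ρ g * ρ (g⁻¹ * h)) z := rfl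
      rw [h2, ← map_mul, mul_inv_cancel_left]
    have h3 : (inner ℂ (ρ g w) (ρ h z) : ℂ) = inner ℂ w (ρ (g⁻¹ * h) z) := by
      rw [h1]; exact LinearIsometryEquiv.inner_map_map (ρ g) w (ρ (g⁻¹ * h) z)
    rw [inner_phi, h3]
  have hinnerA : ∀ w z, (inner ℂ (A w) (A z) : ℂ) = (((Fintype.card G : ℝ) * S w z : ℝ) : ℂ) := by
    intro w z
    have expand : (inner ℂ (A w) (A z) : ℂ)
        = ∑ g : G, ∑ h : G, (inner ℂ (phi d t (ρ g w)) (phi d t (ρ h z)) : ℂ) := by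
      rw [hA]
      simp only [sum_inner, inner_sum]
      rw [Finset.sum_comm]
    rw [expand,
      Finset.sum_congr rfl (fun g _ => Finset.sum_congr rfl (fun h _ => hterm w z g h))]
    have hrow : ∀ g : G,
        (∑ h : G, (((‖(inner ℂ w (ρ (g⁻¹ * h) z) : ℂ)‖) ^ (2 * t) : ℝ) : ℂ))
          = ((S w z : ℝ) : ℂ) := by
      intro g
      rw [← Complex.ofReal_sum]
      congr 1
      exact Fintype.sum_equiv (Equiv.mulLeft g⁻¹) _ _ (fun x => by simp)
    rw [Finset.sum_congr rfl (fun g _ => hrow g), Finset.sum_const, Finset.card_univ]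
    push_cast
    ring
  have hnormA : ∀ w, ‖A w‖ ^ 2 = (Fintype.card G : ℝ) * S w w := by
    intro w
    rw [← inner_self_eq_norm_sq (𝕜 := ℂ), hinnerA]
    simp
  have hcs := norm_inner_le_norm (𝕜 := ℂ) (A u) (A v)
  rw [hinnerA] at hcs
  have habs : ‖(((Fintype.card G : ℝ) * S u v : ℝ) : ℂ)‖ = (Fintype.card G : ℝ) * S u v := by
    rw [Complex.norm_real]
    exact abs_of_nonneg (by positivity)
  rw [habs] at hcs
  have hcard : (0 : ℝ) < (Fintype.card G : ℝ) := by
    exact_mod_cast Fintype.card_pos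
  have h1 : (0:ℝ) ≤ (Fintype.card G : ℝ) * S u v := mul_nonneg hcard.le (hSnn u v)
  have hsq : ((Fintype.card G : ℝ) * S u v) ^ 2 ≤
      ((Fintype.card G : ℝ) * S u u) * ((Fintype.card G : ℝ) * S v v) := by
    rw [← hnormA u, ← hnormA v]
    nlinarith [hcs, h1, norm_nonneg (A u), norm_nonneg (A v)]
  have final : (S u v) ^ 2 ≤ S u u * S v v := by
    have h2 : (Fintype.card G : ℝ) ^ 2 * (S u v ^ 2) ≤
        (Fintype.card G : ℝ) ^ 2 * (S u u * S v v) := by nlinarith [hsq]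
    exact le_of_mul_le_mul_left h2 (pow_pos hcard 2)
  exact final


end TwoOrbitsAux


open TwoOrbitsAux in
set_option maxHeartbeats 1000000 in
/-- **Two orbits (Theorem 4.2).** For a unitary representation `ρ` of a finite group
`G` on `ℂ^d`, the following are equivalent:
(i) `f_G^{(t)}` is not identically zero and every generic pair of orbits (those with
`f_G^{(t)}(x,y) ≠ 0`) has a unique weighting which is a spherical `(t,t)`-design;
(ii) `f_G^{(t)}` is not identically zero and
`f_G^{(t)}(x,y) = c_t(ℂ^d)(‖y‖^{4t} p(x,x) + ‖x‖^{4t} p(y,y) - 2‖x‖^{2t}‖y‖^{2t} p(x,y))`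
for all `x, y`. -/
theorem two_orbits_theorem (d t : ℕ) (hd : 1 ≤ d) (ht : 1 ≤ t)
    {G : Type*} [Group G] [Fintype G]
    (ρ : G →* (EuclideanSpace ℂ (Fin d) ≃ₗᵢ[ℂ] EuclideanSpace ℂ (Fin d)))
    (p : EuclideanSpace ℂ (Fin d) → EuclideanSpace ℂ (Fin d) → ℝ)
    (hp : ∀ u v, p u v =
      (1 / (Fintype.card G : ℝ)) * ∑ g : G, ‖(inner ℂ u (ρ g v) : ℂ)‖ ^ (2 * t))
    (f : EuclideanSpace ℂ (Fin d) → EuclideanSpace ℂ (Fin d) → ℝ)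
    (hf : ∀ u v, f u v = p u u * p v v - (p u v) ^ 2) :
    ((∃ u v, f u v ≠ 0) ∧
        ∀ x y : EuclideanSpace ℂ (Fin d), x ≠ 0 → y ≠ 0 → f x y ≠ 0 →
          ∃! α : ℝ,
            α ^ 2 * p (((‖x‖ : ℂ))⁻¹ • x) (((‖x‖ : ℂ))⁻¹ • x) +
                (1 - α) ^ 2 * p (((‖y‖ : ℂ))⁻¹ • y) (((‖y‖ : ℂ))⁻¹ • y) +
                2 * α * (1 - α) * p (((‖x‖ : ℂ))⁻¹ • x) (((‖y‖ : ℂ))⁻¹ • y) =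
              designConst d t) ↔
      ((∃ u v, f u v ≠ 0) ∧
        ∀ x y : EuclideanSpace ℂ (Fin d),
          f x y =
            designConst d t *
              (‖y‖ ^ (4 * t) * p x x + ‖x‖ ^ (4 * t) * p y y -
                2 * ‖x‖ ^ (2 * t) * ‖y‖ ^ (2 * t) * p x y)) := by
  classical
  have h2t : (2 * t) ≠ 0 := by omega
  have hp0 : ∀ v, p 0 v = 0 := by
    intro v; rw [hp]; simp [inner_zero_left, zero_pow h2t]
  have hp0' : ∀ u, p u 0 = 0 := by
    intro u; rw [hp]; simp [zero_pow h2t]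
  have hhom : ∀ (r r' : ℝ) (u v : EuclideanSpace ℂ (Fin d)),
      p ((r : ℂ) • u) ((r' : ℂ) • v) = |r| ^ (2*t) * |r'| ^ (2*t) * p u v := by
    intro r r' u v
    rw [hp, hp]
    have e : ∀ g : G, ‖(inner ℂ ((r:ℂ) • u) (ρ g ((r':ℂ) • v)) : ℂ)‖ ^ (2*t)
        = |r| ^ (2*t) * |r'| ^ (2*t) * ‖(inner ℂ u (ρ g v) : ℂ)‖ ^ (2*t) := by
      intro g
      rw [map_smul, inner_smul_left, inner_smul_right, Complex.conj_ofReal,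
        norm_mul, norm_mul, Complex.norm_real, Complex.norm_real,
        Real.norm_eq_abs, Real.norm_eq_abs]
      ring
    rw [Finset.sum_congr rfl (fun g _ => e g)]
    rw [show (∑ g : G, |r| ^ (2*t) * |r'| ^ (2*t) * ‖(inner ℂ u (ρ g v) : ℂ)‖ ^ (2*t))
        = |r| ^ (2*t) * |r'| ^ (2*t) * ∑ g : G, ‖(inner ℂ u (ρ g v) : ℂ)‖ ^ (2*t) by
      rw [Finset.mul_sum]]
    ring
  have hnorm : ∀ (u v : EuclideanSpace ℂ (Fin d)),
      p (((‖u‖ : ℂ))⁻¹ • u) (((‖v‖ : ℂ))⁻¹ • v)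
        = (‖u‖ ^ (2*t))⁻¹ * (‖v‖ ^ (2*t))⁻¹ * p u v := by
    intro u v
    rw [show ((‖u‖ : ℂ))⁻¹ = ((‖u‖⁻¹ : ℝ) : ℂ) by push_cast; ring,
        show ((‖v‖ : ℂ))⁻¹ = ((‖v‖⁻¹ : ℝ) : ℂ) by push_cast; ring, hhom,
        abs_of_nonneg (inv_nonneg.mpr (norm_nonneg u)),
        abs_of_nonneg (inv_nonneg.mpr (norm_nonneg v)), inv_pow, inv_pow]
  have hpCS : ∀ u v, (p u v) ^ 2 ≤ p u u * p v v := by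
    intro u v
    rw [hp, hp, hp]
    have hcs := TwoOrbitsAux.cs_lemma d t ρ u v
    have hc : (0:ℝ) ≤ 1 / (Fintype.card G : ℝ) := by positivity
    nlinarith [mul_le_mul_of_nonneg_left hcs (mul_nonneg hc hc)]
  constructor
  · rintro ⟨hex, huniq⟩
    refine ⟨hex, ?_⟩
    have hpoint : ∀ u v, f u v ≠ 0 →
        f u v = designConst d t * (‖v‖ ^ (4*t) * p u u + ‖u‖ ^ (4*t) * p v v
          - 2 * ‖u‖ ^ (2*t) * ‖v‖ ^ (2*t) * p u v) := by
      intro u v hfuv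
      have hu : u ≠ 0 := by
        rintro rfl
        exact hfuv (by rw [hf, hp0, hp0]; ring)
      have hv : v ≠ 0 := by
        rintro rfl
        exact hfuv (by rw [hf, hp0', hp0']; ring)
      set K := ‖u‖ ^ (2*t) with hKdef
      set L := ‖v‖ ^ (2*t) with hLdef
      have hK : 0 < K := pow_pos (norm_pos_iff.mpr hu) _
      have hL : 0 < L := pow_pos (norm_pos_iff.mpr hv) _
      set a := K⁻¹ * K⁻¹ * p u u with hadef
      set b := L⁻¹ * L⁻¹ * p v v with hbdef
      set c := K⁻¹ * L⁻¹ * p u v with hcdef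
      have hQa : p (((‖u‖ : ℂ))⁻¹ • u) (((‖u‖ : ℂ))⁻¹ • u) = a := hnorm u u
      have hQb : p (((‖v‖ : ℂ))⁻¹ • v) (((‖v‖ : ℂ))⁻¹ • v) = b := hnorm v v
      have hQc : p (((‖u‖ : ℂ))⁻¹ • u) (((‖v‖ : ℂ))⁻¹ • v) = c := hnorm u v
      obtain ⟨α₀, hα₀, huni⟩ := huniq u v hu hv hfuv
      rw [hQa, hQb, hQc] at hα₀
      have huni' : ∀ β : ℝ,
          β^2*a + (1-β)^2*b + 2*β*(1-β)*c = designConst d t → β = α₀ := by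
        intro β hβ
        apply huni
        rw [hQa, hQb, hQc]
        linarith [hβ]
      have hpuu : p u u = K^2 * a := by rw [hadef]; field_simp
      have hpvv : p v v = L^2 * b := by rw [hbdef]; field_simp
      have hpuv : p u v = K * L * c := by rw [hcdef]; field_simp
      have hcs2 : c^2 ≤ a*b := by
        have h := hpCS u v
        rw [hpuu, hpvv, hpuv] at h
        have h2 : (K^2*L^2) * (c^2) ≤ (K^2*L^2) * (a*b) := by nlinarith [h]
        exact le_of_mul_le_mul_left h2 (by positivity)
      have hfval : f u v = K^2*L^2*(a*b - c^2) := by rw [hf, hpuu, hpvv, hpuv]; ring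
      have hA : a + b - 2*c ≠ 0 := by
        intro h0
        apply hfuv
        have hc' : c = (a+b)/2 := by linarith
        have he2 : a*b - c^2 = -((a-b)^2)/4 := by rw [hc']; ring
        have hz : a*b - c^2 = 0 := by linarith [sq_nonneg (a-b), hcs2]
        rw [hfval, hz, mul_zero]
      have e0 : (a+b-2*c)*α₀^2 - 2*(b-c)*α₀ + (b - designConst d t) = 0 := by
        linear_combination hα₀
      have h1 : (a+b-2*c)*((2*(b-c)/(a+b-2*c) - α₀)+α₀) = 2*(b-c) := by
        field_simp
        ring
      have hβroot : (2*(b-c)/(a+b-2*c) - α₀)^2*a + (1-(2*(b-c)/(a+b-2*c) - α₀))^2*b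
          + 2*(2*(b-c)/(a+b-2*c) - α₀)*(1-(2*(b-c)/(a+b-2*c) - α₀))*c = designConst d t := by
        linear_combination hα₀ + ((2*(b-c)/(a+b-2*c) - α₀) - α₀) * h1
      have hβα : (2*(b-c)/(a+b-2*c) - α₀) = α₀ := huni' _ hβroot
      rw [hβα] at h1
      have eα : (a+b-2*c)*α₀ = b - c := by linear_combination (1/2 : ℝ) * h1
      have key : a*b - c^2 = designConst d t * (a+b-2*c) := by
        linear_combination (a+b-2*c)*e0 - ((a+b-2*c)*α₀ - (b-c))*eα
      have hL2 : ‖v‖ ^ (4*t) = L^2 := by rw [hLdef, ← pow_mul]; congr 1; ring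
      have hK2 : ‖u‖ ^ (4*t) = K^2 := by rw [hKdef, ← pow_mul]; congr 1; ring
      rw [hfval, hL2, hK2, hpuu, hpvv, hpuv]
      linear_combination (K^2*L^2) * key
    intro x y
    obtain ⟨u₀, v₀, h₀⟩ := hex
    have hline : ∀ (u a v b : EuclideanSpace ℂ (Fin d)), IsPolyFun
        (fun s : ℝ => p (u + (s:ℂ) • a) (v + (s:ℂ) • b)) := by
      intro u a v b
      have he : ∀ s : ℝ, p (u + (s:ℂ) • a) (v + (s:ℂ) • b)
          = (1 / (Fintype.card G : ℝ)) * ∑ g : G,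
              ‖(inner ℂ u (ρ g v) : ℂ)
                + ((inner ℂ u (ρ g b) : ℂ) + (inner ℂ a (ρ g v) : ℂ)) * (s:ℂ)
                + (inner ℂ a (ρ g b) : ℂ) * (s:ℂ)^2‖ ^ (2*t) := by
        intro s
        rw [hp]
        congr 1
        apply Finset.sum_congr rfl
        intro g _
        have hin : (inner ℂ (u + (s:ℂ) • a) (ρ g (v + (s:ℂ) • b)) : ℂ)
            = (inner ℂ u (ρ g v) : ℂ)
                + ((inner ℂ u (ρ g b) : ℂ) + (inner ℂ a (ρ g v) : ℂ)) * (s:ℂ)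
                + (inner ℂ a (ρ g b) : ℂ) * (s:ℂ)^2 := by
          rw [map_add, map_smul]
          simp only [inner_add_left, inner_add_right, inner_smul_left, inner_smul_right,
            Complex.conj_ofReal]
          ring
        rw [hin]
      simp only [he]
      exact (IsPolyFun.const _).mul
        (IsPolyFun.sum Finset.univ _ (fun g _ => isPolyFun_abs_quad _ _ _ t))
    have hnline : ∀ (v b : EuclideanSpace ℂ (Fin d)) (m : ℕ),
        IsPolyFun (fun s : ℝ => ‖v + (s:ℂ) • b‖ ^ (2*m)) := by
      intro v b m
      have he : ∀ s : ℝ, ‖v + (s:ℂ) • b‖ ^ (2*m)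
          = ((inner ℂ v v : ℂ) + ((inner ℂ v b : ℂ) + (inner ℂ b v : ℂ)) * (s:ℂ)
              + (inner ℂ b b : ℂ) * (s:ℂ)^2).re ^ m := by
        intro s
        have hin : (inner ℂ (v + (s:ℂ) • b) (v + (s:ℂ) • b) : ℂ)
            = (inner ℂ v v : ℂ) + ((inner ℂ v b : ℂ) + (inner ℂ b v : ℂ)) * (s:ℂ)
                + (inner ℂ b b : ℂ) * (s:ℂ)^2 := by
          simp only [inner_add_left, inner_add_right, inner_smul_left, inner_smul_right,
            Complex.conj_ofReal]
          ring
        rw [pow_mul, ← inner_self_eq_norm_sq (𝕜 := ℂ), hin]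
        simp [RCLike.re_to_complex]
      simp only [he]
      exact (isPolyFun_re_quad _ _ _).pow m
    have hFpoly : IsPolyFun (fun s : ℝ =>
        f (x + (s:ℂ) • (u₀ - x)) (y + (s:ℂ) • (v₀ - y))) := by
      simp only [hf]
      exact ((hline x (u₀-x) x (u₀-x)).mul (hline y (v₀-y) y (v₀-y))).sub
        ((hline x (u₀-x) y (v₀-y)).pow 2)
    have hHpoly : IsPolyFun (fun s : ℝ =>
        f (x + (s:ℂ) • (u₀ - x)) (y + (s:ℂ) • (v₀ - y))
        - designConst d t * (
          ‖y + (s:ℂ) • (v₀ - y)‖ ^ (4*t) * p (x + (s:ℂ) • (u₀ - x)) (x + (s:ℂ) • (u₀ - x))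
          + ‖x + (s:ℂ) • (u₀ - x)‖ ^ (4*t) * p (y + (s:ℂ) • (v₀ - y)) (y + (s:ℂ) • (v₀ - y))
          - 2 * ‖x + (s:ℂ) • (u₀ - x)‖ ^ (2*t) * ‖y + (s:ℂ) • (v₀ - y)‖ ^ (2*t)
              * p (x + (s:ℂ) • (u₀ - x)) (y + (s:ℂ) • (v₀ - y)))) := by
      apply hFpoly.sub
      apply (IsPolyFun.const (designConst d t)).mul
      simp only [show 4*t = 2*(2*t) from by ring]
      apply IsPolyFun.sub
      apply IsPolyFun.add
      · exact (hnline y (v₀-y) (2*t)).mul (hline x (u₀-x) x (u₀-x))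
      · exact (hnline x (u₀-x) (2*t)).mul (hline y (v₀-y) y (v₀-y))
      · exact (((IsPolyFun.const 2).mul (hnline x (u₀-x) t)).mul (hnline y (v₀-y) t)).mul
          (hline x (u₀-x) y (v₀-y))
    have hzero := polyfun_zero hFpoly hHpoly
      (⟨1, by
        simpa [Complex.ofReal_one, one_smul, add_sub_cancel] using h₀⟩)
      (by
        intro s hs
        have hid := hpoint _ _ hs
        linarith [hid])
    have h0 := hzero 0
    simp only [Complex.ofReal_zero, zero_smul, add_zero] at h0
    linarith [h0]
  · rintro ⟨hex, hid⟩
    refine ⟨hex, ?_⟩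
    intro x y hx hy hfxy
    set K := ‖x‖ ^ (2*t) with hKdef
    set L := ‖y‖ ^ (2*t) with hLdef
    have hK : 0 < K := pow_pos (norm_pos_iff.mpr hx) _
    have hL : 0 < L := pow_pos (norm_pos_iff.mpr hy) _
    set a := K⁻¹ * K⁻¹ * p x x with hadef
    set b := L⁻¹ * L⁻¹ * p y y with hbdef
    set c := K⁻¹ * L⁻¹ * p x y with hcdef
    have hQa : p (((‖x‖ : ℂ))⁻¹ • x) (((‖x‖ : ℂ))⁻¹ • x) = a := hnorm x x
    have hQb : p (((‖y‖ : ℂ))⁻¹ • y) (((‖y‖ : ℂ))⁻¹ • y) = b := hnorm y y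
    have hQc : p (((‖x‖ : ℂ))⁻¹ • x) (((‖y‖ : ℂ))⁻¹ • y) = c := hnorm x y
    have hpuu : p x x = K^2 * a := by rw [hadef]; field_simp
    have hpvv : p y y = L^2 * b := by rw [hbdef]; field_simp
    have hpuv : p x y = K * L * c := by rw [hcdef]; field_simp
    have hL2 : ‖y‖ ^ (4*t) = L^2 := by rw [hLdef, ← pow_mul]; congr 1; ring
    have hK2 : ‖x‖ ^ (4*t) = K^2 := by rw [hKdef, ← pow_mul]; congr 1; ring
    have hfval : f x y = K^2*L^2*(a*b - c^2) := by rw [hf, hpuu, hpvv, hpuv]; ring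
    have key : a*b - c^2 = designConst d t * (a+b-2*c) := by
      have h := hid x y
      rw [hf, hpuu, hpvv, hpuv, hL2, hK2] at h
      have hKL : (0:ℝ) < K^2*L^2 := by positivity
      apply mul_left_cancel₀ (ne_of_gt hKL)
      linear_combination h
    have hfne : a*b - c^2 ≠ 0 := by
      intro h0
      apply hfxy
      rw [hfval, h0, mul_zero]
    have hAne : a+b-2*c ≠ 0 := by
      intro h0
      apply hfne
      rw [key, h0, mul_zero]
    simp only [hQa, hQb, hQc]
    have hγ : (a+b-2*c) * ((b-c)/(a+b-2*c)) = b - c := by field_simp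
    refine ⟨(b-c)/(a+b-2*c), ?_, ?_⟩
    · have hz : (a+b-2*c) * (((b-c)/(a+b-2*c))^2*a + (1-(b-c)/(a+b-2*c))^2*b
          + 2*((b-c)/(a+b-2*c))*(1-(b-c)/(a+b-2*c))*c - designConst d t) = 0 := by
        linear_combination ((a+b-2*c)*((b-c)/(a+b-2*c)) - (b-c))*hγ + key
      rcases mul_eq_zero.mp hz with h|h
      · exact absurd h hAne
      · linarith [h]
    · intro β hβ
      have e0 : (a+b-2*c)*β^2 - 2*(b-c)*β + (b - designConst d t) = 0 := by
        linear_combination hβ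
      have sq0 : ((a+b-2*c)*β - (b-c))^2 = 0 := by
        linear_combination (a+b-2*c)*e0 - key
      have hlin : (a+b-2*c)*β - (b-c) = 0 := by
        exact pow_eq_zero_iff (n := 2) (by norm_num) |>.mp sq0
      rw [eq_div_iff hAne]
      linear_combination hlin
end

section
/- Let G be a finite group acting on ℂ^d (d ≥ 1) by a unitary representation ρ. Then the action is irreducible (the only G-invariant subspaces of ℂ^d are {0} and ℂ^d) if and only if every orbit of every nonzero vector is a tight frame; that is, if and only if for every nonzero x ∈ ℂ^d and every v ∈ ℂ^d, ∑_{g∈G} ⟨v, ρ(g)x⟩·ρ(g)x = (|G|·‖x‖²/d)·v. -/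
open scoped BigOperators

/-- A unitary representation of a finite group `G` on `ℂ^d` is irreducible (the only
invariant subspaces are `{0}` and `ℂ^d`) if and only if every orbit of every nonzero
vector is a tight frame:
`∑_g ⟨v, ρ(g)x⟩ ρ(g)x = (|G| ‖x‖² / d) v` for all `v`
(inner products conjugate-linear so that `⟨v, u⟩u` is the rank-one projection action;
in Mathlib's convention this reads `∑ g, ⟪ρ g x, v⟫ • ρ g x`). -/
theorem irreducible_iff_orbits_tight_frames (d : ℕ) (hd : 1 ≤ d)
    {G : Type*} [Group G] [Fintype G]
    (ρ : G →* (EuclideanSpace ℂ (Fin d) ≃ₗᵢ[ℂ] EuclideanSpace ℂ (Fin d))) :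
    (∀ W : Submodule ℂ (EuclideanSpace ℂ (Fin d)),
        (∀ g : G, ∀ v ∈ W, ρ g v ∈ W) → W = ⊥ ∨ W = ⊤) ↔
      ∀ x : EuclideanSpace ℂ (Fin d), x ≠ 0 →
        ∀ v : EuclideanSpace ℂ (Fin d),
          ∑ g : G, (inner ℂ (ρ g x) v : ℂ) • ρ g x =
            (((Fintype.card G : ℝ) * ‖x‖ ^ 2 / d : ℝ) : ℂ) • v := by
  have hdC : (d : ℂ) ≠ 0 := Nat.cast_ne_zero.mpr (by omega)
  constructor
  · intro hirr x hx v
    -- the frame operator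
    set T : Module.End ℂ (EuclideanSpace ℂ (Fin d)) :=
      ∑ g : G, ((innerSL ℂ (ρ g x)).toLinearMap).smulRight (ρ g x) with hTdef
    have hT : ∀ w, T w = ∑ g : G, (inner ℂ (ρ g x) w : ℂ) • ρ g x := by
      intro w
      simp [hTdef, LinearMap.sum_apply]
    have hcompose : ∀ (a c : G) (u : EuclideanSpace ℂ (Fin d)),
        (ρ a) ((ρ c) u) = (ρ (a * c)) u := by
      intro a c u; rw [map_mul]; rfl
    have hcomm : ∀ (h : G) w, T ((ρ h) w) = (ρ h) (T w) := by
      intro h w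
      rw [hT, hT, map_sum]
      refine Fintype.sum_equiv (Equiv.mulLeft h⁻¹) _ _ ?_
      intro g
      simp only [Equiv.coe_mulLeft]
      rw [LinearIsometryEquiv.map_smul, hcompose, mul_inv_cancel_left]
      congr 1
      rw [← (ρ h).inner_map_map ((ρ (h⁻¹ * g)) x) w, hcompose, mul_inv_cancel_left]
    haveI : Nontrivial (EuclideanSpace ℂ (Fin d)) := by
      apply Module.nontrivial_of_finrank_pos (R := ℂ)
      rw [finrank_euclideanSpace_fin]; omega
    obtain ⟨μ, hμ⟩ := Module.End.exists_eigenvalue T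
    have hWinv : ∀ g : G, ∀ w ∈ Module.End.eigenspace T μ, (ρ g) w ∈ Module.End.eigenspace T μ := by
      intro g w hw
      rw [Module.End.mem_eigenspace_iff] at hw ⊢
      rw [hcomm, hw, LinearIsometryEquiv.map_smul]
    have htop : Module.End.eigenspace T μ = ⊤ := (hirr _ hWinv).resolve_left hμ
    have hTall : ∀ w, T w = μ • w := by
      intro w
      have : w ∈ Module.End.eigenspace T μ := htop ▸ Submodule.mem_top
      exact Module.End.mem_eigenspace_iff.mp this
    -- compute μ via trace against an orthonormal basis
    set b := EuclideanSpace.basisFun (Fin d) ℂ with hb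
    have key : ∑ i : Fin d, (inner ℂ (b i) (T (b i)) : ℂ) =
        (Fintype.card G : ℂ) * (‖x‖ : ℂ) ^ 2 := by
      have : ∀ i : Fin d, (inner ℂ (b i) (T (b i)) : ℂ) =
          ∑ g : G, (inner ℂ ((ρ g) x) (b i) : ℂ) * (inner ℂ (b i) ((ρ g) x) : ℂ) := by
        intro i
        rw [hT, inner_sum]
        exact Finset.sum_congr rfl fun g _ => by rw [inner_smul_right]
      rw [Finset.sum_congr rfl fun i _ => this i, Finset.sum_comm]
      have : ∀ g : G, ∑ i : Fin d, (inner ℂ ((ρ g) x) (b i) : ℂ) * (inner ℂ (b i) ((ρ g) x) : ℂ) =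
          (‖x‖ : ℂ) ^ 2 := by
        intro g
        rw [b.sum_inner_mul_inner]
        simp [inner_self_eq_norm_sq_to_K]
      rw [Finset.sum_congr rfl fun g _ => this g, Finset.sum_const, Finset.card_univ,
        nsmul_eq_mul]
    have key2 : ∑ i : Fin d, (inner ℂ (b i) (T (b i)) : ℂ) = μ * d := by
      have : ∀ i : Fin d, (inner ℂ (b i) (T (b i)) : ℂ) = μ := by
        intro i
        rw [hTall, inner_smul_right, inner_self_eq_norm_sq_to_K, b.orthonormal.1 i]
        push_cast
        ring
      rw [Finset.sum_congr rfl fun i _ => this i, Finset.sum_const, Finset.card_univ,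
        nsmul_eq_mul, Fintype.card_fin]
      ring
    have hμval : μ = (((Fintype.card G : ℝ) * ‖x‖ ^ 2 / d : ℝ) : ℂ) := by
      have := key2.symm.trans key
      push_cast
      field_simp
      linear_combination this
    rw [← hT, hTall, hμval]
  · intro hframe W hWinv
    by_cases hW : W = ⊥
    · exact Or.inl hW
    · right
      obtain ⟨x, hxW, hx⟩ := Submodule.exists_mem_ne_zero_of_ne_bot hW
      rw [Submodule.eq_top_iff']
      intro v
      have h := hframe x hx v
      have hc : (((Fintype.card G : ℝ) * ‖x‖ ^ 2 / d : ℝ) : ℂ) ≠ 0 := by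
        have h1 : (0:ℝ) < (Fintype.card G : ℝ) := by exact_mod_cast Fintype.card_pos
        have h2 : (0:ℝ) < ‖x‖ ^ 2 := pow_pos (norm_pos_iff.mpr hx) 2
        have h3 : (0:ℝ) < (d:ℝ) := by exact_mod_cast (by omega : 0 < d)
        have : (0:ℝ) < (Fintype.card G : ℝ) * ‖x‖ ^ 2 / d := div_pos (mul_pos h1 h2) h3
        exact_mod_cast this.ne'
      have : v = (((Fintype.card G : ℝ) * ‖x‖ ^ 2 / d : ℝ) : ℂ)⁻¹ •
          ∑ g : G, (inner ℂ (ρ g x) v : ℂ) • ρ g x := by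
        rw [h, smul_smul, inv_mul_cancel₀ hc, one_smul]
      rw [this]
      exact W.smul_mem _ (W.sum_mem fun g _ => W.smul_mem _ (hWinv g x hxW))
end

section
/- Let d ≥ 1 and let (x_i)_{i∈I} be a finite family of nonzero vectors in ℂ^d. Then (x_i) is a spherical (1,1)-design, i.e. ∑_{i∈I}∑_{j∈I} |⟨x_i,x_j⟩|² = (1/d)·(∑_{i∈I} ‖x_i‖²)², if and only if (x_i) is a tight frame for ℂ^d: for every v ∈ ℂ^d, ∑_{i∈I} ⟨v, x_i⟩·x_i = ((∑_{i∈I} ‖x_i‖²)/d)·v. -/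
open scoped BigOperators

open scoped InnerProductSpace in
private lemma frame_inner_left' {d : ℕ} {ι : Type*} [Fintype ι]
    (x : ι → EuclideanSpace ℂ (Fin d)) (u w : EuclideanSpace ℂ (Fin d)) :
    (inner ℂ (∑ i, (inner ℂ (x i) u : ℂ) • x i) w : ℂ)
      = ∑ i, (inner ℂ u (x i) : ℂ) * inner ℂ (x i) w := by
  rw [sum_inner]
  simp only [inner_smul_left, inner_conj_symm]

open scoped InnerProductSpace in
private lemma frame_inner_right' {d : ℕ} {ι : Type*} [Fintype ι]
    (x : ι → EuclideanSpace ℂ (Fin d)) (u w : EuclideanSpace ℂ (Fin d)) :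
    (inner ℂ u (∑ i, (inner ℂ (x i) w : ℂ) • x i) : ℂ)
      = ∑ i, (inner ℂ u (x i) : ℂ) * inner ℂ (x i) w := by
  rw [inner_sum]
  simp only [inner_smul_right]
  exact Finset.sum_congr rfl fun i _ => mul_comm _ _

private lemma abs_sq_eq' {d : ℕ} (a b : EuclideanSpace ℂ (Fin d)) :
    ((‖(inner ℂ a b : ℂ)‖ : ℂ))^2 = (inner ℂ a b : ℂ) * inner ℂ b a := by
  rw [← inner_conj_symm b a, Complex.mul_conj, ← Complex.sq_norm]
  push_cast
  ring

set_option maxHeartbeats 1000000 in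
/-- A finite family of nonzero vectors in `ℂ^d` is a spherical `(1,1)`-design
(equality in the Welch bound with `c_1(ℂ^d) = 1/d`) if and only if it is a tight
frame for `ℂ^d`, with frame constant `(∑ i ‖x i‖²)/d`
(inner products conjugate-linear so that `⟨v, x⟩x` is the rank-one projection action;
in Mathlib's convention this reads `∑ i, ⟪x i, v⟫ • x i`). -/
theorem spherical_one_design_iff_tight_frame (d : ℕ) (hd : 1 ≤ d)
    {ι : Type*} [Fintype ι]
    (x : ι → EuclideanSpace ℂ (Fin d)) (hx : ∀ i, x i ≠ 0) :
    (∑ i, ∑ j, ‖(inner ℂ (x i) (x j) : ℂ)‖ ^ 2 =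
        (1 / (d : ℝ)) * (∑ i, ‖x i‖ ^ 2) ^ 2) ↔
      ∀ v : EuclideanSpace ℂ (Fin d),
        ∑ i, (inner ℂ (x i) v : ℂ) • x i = (((∑ i, ‖x i‖ ^ 2) / d : ℝ) : ℂ) • v := by
  classical
  have hdR : (d : ℝ) ≠ 0 := by positivity
  have hdC : (d : ℂ) ≠ 0 := by exact_mod_cast hdR
  set T : ℝ := ∑ i, ‖x i‖ ^ 2 with hT
  set c : ℂ := ((T / d : ℝ) : ℂ) with hcdef
  have hcconj : (starRingEnd ℂ) c = c := Complex.conj_ofReal _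
  set B := EuclideanSpace.basisFun (Fin d) ℂ with hB
  have hA : ((∑ i, ∑ j, ‖(inner ℂ (x i) (x j) : ℂ)‖ ^ 2 : ℝ) : ℂ)
      = ∑ i, ∑ j, (inner ℂ (x i) (x j) : ℂ) * (inner ℂ (x j) (x i) : ℂ) := by
    push_cast
    exact Finset.sum_congr rfl fun i _ => Finset.sum_congr rfl fun j _ => abs_sq_eq' _ _
  constructor
  · intro H v
    -- trace of S²
    have htr2 : ∑ k, (inner ℂ (∑ i, (inner ℂ (x i) (B k) : ℂ) • x i)
          (∑ i, (inner ℂ (x i) (B k) : ℂ) • x i) : ℂ)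
        = ∑ i, ∑ j, (inner ℂ (x i) (x j) : ℂ) * (inner ℂ (x j) (x i) : ℂ) := by
      simp only [frame_inner_left' x, frame_inner_right' x, Finset.mul_sum]
      rw [Finset.sum_comm]
      refine Finset.sum_congr rfl fun i _ => ?_
      rw [Finset.sum_comm]
      refine Finset.sum_congr rfl fun j _ => ?_
      have hterm : ∀ k : Fin d,
          (inner ℂ (B k) (x i) : ℂ) * ((inner ℂ (x i) (x j) : ℂ) * inner ℂ (x j) (B k))
            = (inner ℂ (x i) (x j) : ℂ) * ((inner ℂ (x j) (B k) : ℂ) * inner ℂ (B k) (x i)) :=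
        fun k => by ring
      rw [Finset.sum_congr rfl fun k _ => hterm k, ← Finset.mul_sum, B.sum_inner_mul_inner]
    -- trace of S, both ways
    have htr_core : ∑ k, ∑ i, (inner ℂ (B k) (x i) : ℂ) * (inner ℂ (x i) (B k) : ℂ)
        = ((T : ℝ) : ℂ) := by
      rw [Finset.sum_comm]
      have : ∀ i, ∑ k, (inner ℂ (B k) (x i) : ℂ) * (inner ℂ (x i) (B k) : ℂ)
          = ((‖x i‖ : ℂ))^2 := by
        intro i
        rw [Finset.sum_congr rfl fun k _ => mul_comm _ _, B.sum_inner_mul_inner,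
          inner_self_eq_norm_sq_to_K]
        rfl
      rw [Finset.sum_congr rfl fun i _ => this i, hT]
      push_cast
      ring
    have htr1 : ∑ k, (inner ℂ (B k) (∑ i, (inner ℂ (x i) (B k) : ℂ) • x i) : ℂ)
        = ((T : ℝ) : ℂ) := by
      simp only [frame_inner_right' x]
      exact htr_core
    have htr1' : ∑ k, (inner ℂ (∑ i, (inner ℂ (x i) (B k) : ℂ) • x i) (B k) : ℂ)
        = ((T : ℝ) : ℂ) := by
      simp only [frame_inner_left' x]
      exact htr_core
    -- the sum of squared norms of S(e k) - c e k vanishes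
    have hsum0 : ∑ k, (inner ℂ ((∑ i, (inner ℂ (x i) (B k) : ℂ) • x i) - c • B k)
          ((∑ i, (inner ℂ (x i) (B k) : ℂ) • x i) - c • B k) : ℂ) = 0 := by
      have expand : ∀ k, (inner ℂ ((∑ i, (inner ℂ (x i) (B k) : ℂ) • x i) - c • B k)
          ((∑ i, (inner ℂ (x i) (B k) : ℂ) • x i) - c • B k) : ℂ)
          = (inner ℂ (∑ i, (inner ℂ (x i) (B k) : ℂ) • x i)
                (∑ i, (inner ℂ (x i) (B k) : ℂ) • x i) : ℂ)
            - c * inner ℂ (∑ i, (inner ℂ (x i) (B k) : ℂ) • x i) (B k)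
            - c * inner ℂ (B k) (∑ i, (inner ℂ (x i) (B k) : ℂ) • x i)
            + c * c * inner ℂ (B k) (B k) := by
        intro k
        simp only [inner_sub_left, inner_sub_right, inner_smul_left, inner_smul_right, hcconj]
        ring
      rw [Finset.sum_congr rfl fun k _ => expand k]
      have horth : ∀ k, (inner ℂ (B k) (B k) : ℂ) = 1 := by
        intro k
        rw [inner_self_eq_norm_sq_to_K, B.orthonormal.1 k]
        norm_num
      simp only [horth, mul_one, Finset.sum_add_distrib, Finset.sum_sub_distrib,
        ← Finset.mul_sum, htr2, htr1, htr1', Finset.sum_const, Finset.card_univ,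
        Fintype.card_fin, nsmul_eq_mul]
      rw [← hA, H, hcdef]
      push_cast
      field_simp
      ring
    -- hence S(e k) = c • e k for every k
    have hre : ∑ k, ‖(∑ i, (inner ℂ (x i) (B k) : ℂ) • x i) - c • B k‖ ^ 2 = 0 := by
      have h2 : ((∑ k, ‖(∑ i, (inner ℂ (x i) (B k) : ℂ) • x i) - c • B k‖ ^ 2 : ℝ) : ℂ) = 0 := by
        push_cast
        rw [← hsum0]
        refine Finset.sum_congr rfl fun k _ => ?_
        rw [inner_self_eq_norm_sq_to_K]
        rfl
      exact_mod_cast h2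
    have hk : ∀ k, ∑ i, (inner ℂ (x i) (B k) : ℂ) • x i = c • B k := by
      intro k
      have h3 := (Finset.sum_eq_zero_iff_of_nonneg
        (fun k _ => sq_nonneg ‖(∑ i, (inner ℂ (x i) (B k) : ℂ) • x i) - c • B k‖)).mp
        hre k (Finset.mem_univ k)
      rw [sq_eq_zero_iff, norm_eq_zero, sub_eq_zero] at h3
      exact h3
    -- extend by linearity to all v
    calc ∑ i, (inner ℂ (x i) v : ℂ) • x i
        = ∑ k, (inner ℂ (B k) v : ℂ) • ∑ i, (inner ℂ (x i) (B k) : ℂ) • x i := by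
          simp only [Finset.smul_sum, smul_smul]
          rw [Finset.sum_comm]
          refine Finset.sum_congr rfl fun i _ => ?_
          rw [← Finset.sum_smul]
          congr 1
          rw [← B.sum_inner_mul_inner (x i) v]
          exact Finset.sum_congr rfl fun k _ => mul_comm _ _
      _ = ∑ k, (inner ℂ (B k) v : ℂ) • (c • B k) := by
          exact Finset.sum_congr rfl fun k _ => by rw [hk k]
      _ = c • v := by
          rw [Finset.sum_congr rfl fun k _ => smul_comm (inner ℂ (B k) v : ℂ) c (B k),
            ← Finset.smul_sum, B.sum_repr' v]
  · intro H
    have key : ∀ i, (((∑ j, ‖(inner ℂ (x i) (x j) : ℂ)‖ ^ 2 : ℝ)) : ℂ)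
        = c * ((‖x i‖ : ℂ))^2 := by
      intro i
      have h1 := frame_inner_right' x (x i) (x i)
      rw [H (x i)] at h1
      rw [inner_smul_right, inner_self_eq_norm_sq_to_K] at h1
      push_cast
      rw [Finset.sum_congr rfl fun j _ => abs_sq_eq' (x i) (x j), ← h1]
      rfl
    have hsum : ∑ i, ∑ j, ‖(inner ℂ (x i) (x j) : ℂ)‖ ^ 2
        = ∑ i, (T / d) * ‖x i‖ ^ 2 := by
      refine Finset.sum_congr rfl fun i _ => ?_
      have := key i
      rw [hcdef] at this
      exact_mod_cast this
    rw [hsum, ← Finset.mul_sum, ← hT]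
    field_simp
end
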